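/- arXiv:0909.3808 — 3 statements merged into one kernel-verified Lean document; each statement's English description precedes it below -/
import Mathlib

section
/- Let p be an odd prime and let a be a positive integer. Then in ℤ/pℤ: (1) ∑_{k=1}^{p^a−1} binom(3k, k)·(8^k)⁻¹ = (3/4)·(J(p^a | 5) − 1); (2) ∑_{k=1}^{p^a−1} C_k^{(2)}·(8^k)⁻¹ = (5/4)·(J(p^a | 5) − 1); (3) ∑_{k=1}^{p^a−1} (−4)^k·binom(3k, k) = (3/8)·(1 − J(p^a | 7)); (4) ∑_{k=1}^{p^a−1} (−4)^k·C_k^{(2)} = (7/4)·(1 − J(p^a | 7)). -/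
/-- Binomial coefficient with an integer lower index: zero for negative lower index. -/
def ibinom (n : ℕ) (j : ℤ) : ℕ := if 0 ≤ j then n.choose j.toNat else 0

/-- Second-order Catalan numbers `C_k^{(2)} = binom(3k,k) - 2·binom(3k,k-1)`. -/
def catalan2 (k : ℕ) : ℤ := (ibinom (3 * k) (k : ℤ) : ℤ) - 2 * (ibinom (3 * k) ((k : ℤ) - 1) : ℤ)

open Polynomial Finset

namespace SunAux

variable {p : ℕ} [Fact p.Prime]

lemma p_odd (hp2 : p ≠ 2) : Odd p := Nat.Prime.odd_of_ne_two Fact.out hp2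

lemma q_odd (hp2 : p ≠ 2) (a : ℕ) : Odd (p ^ a) := (p_odd hp2).pow

lemma q_pos (a : ℕ) : 0 < p ^ a := Nat.pow_pos (Fact.out : p.Prime).pos

lemma q_ge_3 (hp2 : p ≠ 2) {a : ℕ} (ha : 0 < a) : 3 ≤ p ^ a := by
  have hp3 : 3 ≤ p := (Fact.out : p.Prime).two_le.lt_of_ne (Ne.symm hp2)
  calc 3 ≤ p := hp3
  _ ≤ p ^ a := Nat.le_self_pow (by omega) p

lemma pow_q_sub_one {a : ℕ} {x : ZMod p} (hx : x ≠ 0) : x ^ (p ^ a - 1) = 1 := by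
  have h1 : 1 ≤ p ^ a := q_pos a
  apply mul_right_cancel₀ hx
  rw [← pow_succ, Nat.sub_add_cancel h1, ZMod.pow_card_pow, one_mul]

lemma choose_q_sub_one (a : ℕ) :
    ∀ k, k < p ^ a → (((p ^ a - 1).choose k : ℕ) : ZMod p) = (-1) ^ k := by
  intro k
  induction k with
  | zero => simp
  | succ k ih =>
    intro hk
    have hk' : k < p ^ a := by omega
    have hpas : (p ^ a - 1).choose k + (p ^ a - 1).choose (k + 1) = (p ^ a).choose (k + 1) := by
      have hpas' : p ^ a - 1 + 1 = p ^ a := by have := q_pos (p := p) a; omega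
      have h2 := (Nat.choose_succ_succ (p ^ a - 1) k).symm
      simp only [Nat.succ_eq_add_one, hpas'] at h2
      exact h2
    have hdvd : p ∣ (p ^ a).choose (k + 1) :=
      Nat.Prime.dvd_choose_pow Fact.out (by omega) (by omega)
    have h0 : (((p ^ a).choose (k + 1) : ℕ) : ZMod p) = 0 :=
      (ZMod.natCast_eq_zero_iff _ _).mpr hdvd
    have hc := congrArg (Nat.cast : ℕ → ZMod p) hpas
    push_cast at hc
    rw [ih hk', h0] at hc
    rw [pow_succ]
    linear_combination hc
  
lemma even_q_sub_one (hp2 : p ≠ 2) (a : ℕ) : Even (p ^ a - 1) :=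
  Nat.Odd.sub_odd (q_odd hp2 a) odd_one

lemma cpow_eq_inv (hp2 : p ≠ 2) {a : ℕ} {c : ZMod p} (hc : c ≠ 0) {k : ℕ} (hk : k < p ^ a) :
    c ^ (p ^ a - 1 - k) = (c⁻¹) ^ k := by
  rw [inv_pow]
  apply eq_inv_of_mul_eq_one_left
  rw [← pow_add]
  have : p ^ a - 1 - k + k = p ^ a - 1 := by omega
  rw [this, pow_q_sub_one hc]

lemma sign_collapse (hp2 : p ≠ 2) {a : ℕ} {c : ZMod p} {k : ℕ} (hk : k < p ^ a) :
    (-c) ^ (p ^ a - 1 - k) * (-1 : ZMod p) ^ k = c ^ (p ^ a - 1 - k) := by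
  rw [neg_pow, mul_assoc, mul_comm (c ^ _), ← mul_assoc, ← pow_add]
  have h1 : p ^ a - 1 - k + k = p ^ a - 1 := by omega
  rw [h1, (even_q_sub_one hp2 a).neg_one_pow, one_mul]

lemma coeff_top (hp2 : p ≠ 2) {a : ℕ} (ha : 0 < a) {c : ZMod p} (hc : c ≠ 0) :
    (((1 + X) ^ 3 - C c * X : (ZMod p)[X]) ^ (p ^ a - 1)).coeff (p ^ a - 1)
      = ∑ k ∈ range (p ^ a), (c⁻¹) ^ k * ((3 * k).choose k : ZMod p) := by
  have hq3 : 3 ≤ p ^ a := q_ge_3 hp2 ha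
  have hsub : ((1 + X) ^ 3 - C c * X : (ZMod p)[X]) = (1 + X) ^ 3 + (-(C c * X)) := by ring
  have hq1 : p ^ a - 1 + 1 = p ^ a := by omega
  rw [hsub, add_pow, hq1, finset_sum_coeff]
  apply sum_congr rfl
  intro k hk
  have hkq : k < p ^ a := mem_range.mp hk
  have h1 : (((1 + X) ^ 3 : (ZMod p)[X]) ^ k) = (1 + X) ^ (3 * k) := by
    rw [← pow_mul, mul_comm]
  have h2 : (-(C c * X) : (ZMod p)[X]) ^ (p ^ a - 1 - k) =
      C ((-c) ^ (p ^ a - 1 - k)) * X ^ (p ^ a - 1 - k) := by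
    rw [C_pow, C_neg]; ring
  have h3 : ((p ^ a - 1).choose k : (ZMod p)[X]) = C (((p ^ a - 1).choose k : ℕ) : ZMod p) := by
    simp
  rw [h1, h2, h3]
  have hre : (1 + X : (ZMod p)[X]) ^ (3 * k) * (C ((-c) ^ (p ^ a - 1 - k)) * X ^ (p ^ a - 1 - k)) *
      C (((p ^ a - 1).choose k : ℕ) : ZMod p)
      = C ((-c) ^ (p ^ a - 1 - k) * (((p ^ a - 1).choose k : ℕ) : ZMod p)) *
        ((1 + X) ^ (3 * k) * X ^ (p ^ a - 1 - k)) := by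
    rw [C_mul]; ring
  rw [hre, coeff_C_mul, coeff_mul_X_pow']
  have hle : p ^ a - 1 - k ≤ p ^ a - 1 := by omega
  rw [if_pos hle]
  have hidx : p ^ a - 1 - (p ^ a - 1 - k) = k := by omega
  rw [hidx, coeff_one_add_X_pow, choose_q_sub_one a k hkq]
  rw [sign_collapse hp2 hkq, cpow_eq_inv hp2 hc hkq]

lemma coeff_sub (hp2 : p ≠ 2) {a : ℕ} (ha : 0 < a) {c : ZMod p} (hc : c ≠ 0) :
    (((1 + X) ^ 3 - C c * X : (ZMod p)[X]) ^ (p ^ a - 1)).coeff (p ^ a - 2)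
      = ∑ k ∈ Ico 1 (p ^ a), (c⁻¹) ^ k * ((3 * k).choose (k - 1) : ZMod p) := by
  have hq3 : 3 ≤ p ^ a := q_ge_3 hp2 ha
  have hsub : ((1 + X) ^ 3 - C c * X : (ZMod p)[X]) = (1 + X) ^ 3 + (-(C c * X)) := by ring
  have hq1 : p ^ a - 1 + 1 = p ^ a := by omega
  rw [hsub, add_pow, hq1, finset_sum_coeff]
  rw [range_eq_Ico, sum_eq_sum_Ico_succ_bot (by omega : 0 < p ^ a)]
  have hzero : ((((1 + X) ^ 3 : (ZMod p)[X]) ^ 0 * (-(C c * X)) ^ (p ^ a - 1 - 0) *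
      ((p ^ a - 1).choose 0 : (ZMod p)[X]))).coeff (p ^ a - 2) = 0 := by
    simp only [pow_zero, one_mul, Nat.choose_zero_right, Nat.cast_one, mul_one, Nat.sub_zero]
    have h2 : (-(C c * X) : (ZMod p)[X]) ^ (p ^ a - 1) =
        C ((-c) ^ (p ^ a - 1)) * X ^ (p ^ a - 1) := by
      rw [C_pow, C_neg]; ring
    rw [h2, coeff_C_mul, coeff_X_pow, if_neg (by omega), mul_zero]
  rw [hzero, zero_add]
  apply sum_congr rfl
  intro k hk
  obtain ⟨hk1, hkq⟩ := mem_Ico.mp hk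
  have h1 : (((1 + X) ^ 3 : (ZMod p)[X]) ^ k) = (1 + X) ^ (3 * k) := by
    rw [← pow_mul, mul_comm]
  have h2 : (-(C c * X) : (ZMod p)[X]) ^ (p ^ a - 1 - k) =
      C ((-c) ^ (p ^ a - 1 - k)) * X ^ (p ^ a - 1 - k) := by
    rw [C_pow, C_neg]; ring
  have h3 : ((p ^ a - 1).choose k : (ZMod p)[X]) = C (((p ^ a - 1).choose k : ℕ) : ZMod p) := by
    simp
  rw [h1, h2, h3]
  have hre : (1 + X : (ZMod p)[X]) ^ (3 * k) * (C ((-c) ^ (p ^ a - 1 - k)) * X ^ (p ^ a - 1 - k)) *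
      C (((p ^ a - 1).choose k : ℕ) : ZMod p)
      = C ((-c) ^ (p ^ a - 1 - k) * (((p ^ a - 1).choose k : ℕ) : ZMod p)) *
        ((1 + X) ^ (3 * k) * X ^ (p ^ a - 1 - k)) := by
    rw [C_mul]; ring
  rw [hre, coeff_C_mul, coeff_mul_X_pow']
  have hle : p ^ a - 1 - k ≤ p ^ a - 2 := by omega
  rw [if_pos hle]
  have hidx : p ^ a - 2 - (p ^ a - 1 - k) = k - 1 := by omega
  rw [hidx, coeff_one_add_X_pow, choose_q_sub_one a k hkq]
  rw [sign_collapse hp2 hkq, cpow_eq_inv hp2 hc hkq]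

lemma pow_q_eq_expand (a : ℕ) (f : (ZMod p)[X]) :
    f ^ (p ^ a) = expand (ZMod p) (p ^ a) f := by
  induction a with
  | zero => simp
  | succ a ih =>
    have h1 : f ^ p ^ (a + 1) = (f ^ p ^ a) ^ p := by
      rw [← pow_mul, ← pow_succ]
    have h2 : ∀ g : (ZMod p)[X], g ^ p = expand (ZMod p) p g := by
      intro g
      exact (ZMod.expand_card g).symm
    rw [h1, ih, h2, Polynomial.expand_expand, ← pow_succ']
 
lemma coeff_eq_D (hp2 : p ≠ 2) {a : ℕ} (ha : 0 < a) (c1 c2 : ZMod p) (D : ℕ → ZMod p)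
    (hD0 : D 0 = 1) (hD1 : D 1 = -c1) (hD2 : D 2 = c1 * c1 - c2)
    (hDrec : ∀ m, D (m + 3) = -(c1 * D (m + 2) + c2 * D (m + 1) + D m)) :
    ∀ n, n < p ^ a →
      ((X ^ 3 + C c2 * X ^ 2 + C c1 * X + 1 : (ZMod p)[X]) ^ (p ^ a - 1)).coeff n = D n := by
  have hq3 : 3 ≤ p ^ a := q_ge_3 hp2 ha
  set P : (ZMod p)[X] := X ^ 3 + C c2 * X ^ 2 + C c1 * X + 1 with hP
  set A := P ^ (p ^ a - 1) with hA
  have hP0 : P.coeff 0 = 1 := by simp [hP]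
  have hP1 : P.coeff 1 = c1 := by simp [hP, coeff_one]
  have hP2 : P.coeff 2 = c2 := by simp [hP, coeff_one]
  have hP3 : P.coeff 3 = 1 := by simp [hP, coeff_one]
  have hPbig : ∀ i, 3 < i → P.coeff i = 0 := by
    intro i hi
    have h0 : i ≠ 0 := by omega
    have h1 : i ≠ 1 := by omega
    have h2 : i ≠ 2 := by omega
    have h3 : i ≠ 3 := by omega
    simp [hP, coeff_X_pow, coeff_one, coeff_X, h0, h1, h2, h3, Ne.symm h1]
  have hA0 : A.coeff 0 = 1 := by
    have : constantCoeff A = (constantCoeff P) ^ (p ^ a - 1) := by rw [hA, map_pow]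
    rw [constantCoeff_apply, constantCoeff_apply, hP0, one_pow] at this
    exact this
  have hPA : P * A = Polynomial.expand (ZMod p) (p ^ a) P := by
    rw [hA, ← pow_succ']
    have : p ^ a - 1 + 1 = p ^ a := by omega
    rw [this, pow_q_eq_expand]
  have hkey : ∀ n, 0 < n → n < p ^ a →
      ∑ i ∈ range (n + 1), P.coeff i * A.coeff (n - i) = 0 := by
    intro n hn hnq
    have h1 : (P * A).coeff n = ∑ i ∈ range (n + 1), P.coeff i * A.coeff (n - i) := by
      rw [coeff_mul, Finset.Nat.sum_antidiagonal_eq_sum_range_succ_mk]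
    have h2 : (Polynomial.expand (ZMod p) (p ^ a) P).coeff n = 0 := by
      rw [Polynomial.coeff_expand (q_pos a), if_neg]
      intro hdvd
      exact absurd (Nat.le_of_dvd hn hdvd) (by omega)
    rw [← h1, hPA, h2]
  have hA1 : A.coeff 1 = -c1 := by
    have := hkey 1 one_pos (by omega)
    rw [sum_range_succ, sum_range_succ, sum_range_zero] at this
    simp only [Nat.sub_self, hP0, hP1, hA0, zero_add, one_mul, mul_one] at this
    have h10 : (1 : ℕ) - 0 = 1 := rfl
    rw [h10] at this
    linear_combination this
  have hA2 : A.coeff 2 = c1 * c1 - c2 := by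
    have := hkey 2 two_pos (by omega)
    rw [sum_range_succ, sum_range_succ, sum_range_succ, sum_range_zero] at this
    norm_num [hP0, hP1, hP2, hA0, hA1] at this
    linear_combination this
  intro n
  induction n using Nat.strong_induction_on with
  | _ n ih =>
    intro hn
    match n with
    | 0 => rw [hA0, hD0]
    | 1 => rw [hA1, hD1]
    | 2 => rw [hA2, hD2]
    | (m + 3) =>
      have hrel := hkey (m + 3) (by omega) hn
      have htrunc : ∑ i ∈ range (m + 3 + 1), P.coeff i * A.coeff (m + 3 - i)
          = ∑ i ∈ range 4, P.coeff i * A.coeff (m + 3 - i) := by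
        symm
        apply Finset.sum_subset
        · intro x hx
          rw [mem_range] at *
          omega
        · intro x hx hx4
          rw [mem_range] at hx4
          rw [hPbig x (by omega), zero_mul]
      rw [htrunc] at hrel
      rw [sum_range_succ, sum_range_succ, sum_range_succ, sum_range_succ, sum_range_zero] at hrel
      simp only [zero_add, hP0, hP1, hP2, hP3, one_mul] at hrel
      have e0 : m + 3 - 0 = m + 3 := by omega
      have e1 : m + 3 - 1 = m + 2 := by omega
      have e2 : m + 3 - 2 = m + 1 := by omega
      have e3 : m + 3 - 3 = m := by omega
      rw [e0, e1, e2, e3] at hrel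
      rw [ih (m + 2) (by omega) (by omega), ih (m + 1) (by omega) (by omega),
        ih m (by omega) (by omega)] at hrel
      rw [hDrec m]
      linear_combination hrel

def Ghat {R : Type*} [CommRing R] (b e : R) : ℕ → R
  | 0 => 0
  | 1 => 1
  | (n + 2) => -b * Ghat b e (n + 1) - e * Ghat b e n

def Vseq {R : Type*} [CommRing R] (b e : R) : ℕ → R
  | 0 => 2
  | 1 => -(2 * b)
  | (n + 2) => -(2 * b) * Vseq b e (n + 1) - 4 * e * Vseq b e n

def Wseq {R : Type*} [CommRing R] (b e : R) : ℕ → R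
  | 0 => 0
  | 1 => 2
  | (n + 2) => -(2 * b) * Wseq b e (n + 1) - 4 * e * Wseq b e n

lemma Ghat_add_two {R : Type*} [CommRing R] (b e : R) (n : ℕ) :
    Ghat b e (n + 2) = -b * Ghat b e (n + 1) - e * Ghat b e n := rfl

lemma Wseq_eq_Ghat {R : Type*} [CommRing R] (b e : R) :
    ∀ n, Wseq b e n = 2 ^ n * Ghat b e n := by
  have key : ∀ n, Wseq b e n = 2 ^ n * Ghat b e n ∧
      Wseq b e (n + 1) = 2 ^ (n + 1) * Ghat b e (n + 1) := by
    intro n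
    induction n with
    | zero => constructor <;> simp [Wseq, Ghat]
    | succ n ih =>
      refine ⟨ih.2, ?_⟩
      show Wseq b e (n + 2) = _
      rw [Wseq, ih.1, ih.2, Ghat_add_two]
      ring
  exact fun n => (key n).1

section Quad

variable (d : ZMod p)

lemma adj_zero {x y : ZMod p}
    (h : AdjoinRoot.of (X ^ 2 - C d) x +
      AdjoinRoot.of (X ^ 2 - C d) y * AdjoinRoot.root (X ^ 2 - C d) = 0) :
    x = 0 ∧ y = 0 := by
  have hg : AdjoinRoot.mk (X ^ 2 - C d) (C y * X + C x) = 0 := by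
    rw [map_add, map_mul, AdjoinRoot.mk_C, AdjoinRoot.mk_C, AdjoinRoot.mk_X]
    rw [← h]
    ring_nf
  rw [AdjoinRoot.mk_eq_zero] at hg
  have hdeg : (C y * X + C x).degree < (X ^ 2 - C d : (ZMod p)[X]).degree := by
    rw [degree_X_pow_sub_C (by norm_num)]
    exact lt_of_le_of_lt degree_linear_le (by norm_num)
  have h0 : (C y * X + C x : (ZMod p)[X]) = 0 :=
    Polynomial.eq_zero_of_dvd_of_degree_lt hg hdeg
  constructor
  · have := congrArg (fun g => Polynomial.coeff g 0) h0
    simpa using this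
  · have := congrArg (fun g => Polynomial.coeff g 1) h0
    simpa using this

lemma adj_inj : Function.Injective (AdjoinRoot.of (X ^ 2 - C d)) := by
  intro x y hxy
  have h : AdjoinRoot.of (X ^ 2 - C d) (x - y) +
      AdjoinRoot.of (X ^ 2 - C d) 0 * AdjoinRoot.root (X ^ 2 - C d) = 0 := by
    rw [map_sub, hxy, map_zero]
    ring
  exact sub_eq_zero.mp (adj_zero d h).1

lemma adj_charP : CharP (AdjoinRoot (X ^ 2 - C d)) p :=
  charP_of_injective_ringHom (adj_inj d) p

lemma root_sq : (AdjoinRoot.root (X ^ 2 - C d)) ^ 2 = AdjoinRoot.of (X ^ 2 - C d) d := by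
  have h := AdjoinRoot.mk_self (f := (X ^ 2 - C d : (ZMod p)[X]))
  rw [map_sub, map_pow, AdjoinRoot.mk_X, AdjoinRoot.mk_C] at h
  have := sub_eq_zero.mp h
  exact this

lemma two_ne_zero' (hp2 : p ≠ 2) : (2 : ZMod p) ≠ 0 := by
  intro h
  have h2 : ((2 : ℕ) : ZMod p) = 0 := by exact_mod_cast h
  have := (ZMod.natCast_eq_zero_iff 2 p).mp h2
  have := (Nat.prime_dvd_prime_iff_eq Fact.out Nat.prime_two).mp this
  exact hp2 this

lemma ppow_ne_zero (hp2 : p ≠ 2) (n : ℕ) : (2 : ZMod p) ^ n ≠ 0 :=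
  pow_ne_zero n (two_ne_zero' hp2)

lemma four_ne_zero' (hp2 : p ≠ 2) : (4 : ZMod p) ≠ 0 := by
  have h := ppow_ne_zero hp2 2
  norm_num at h
  exact_mod_cast h

lemma eight_ne_zero' (hp2 : p ≠ 2) : (8 : ZMod p) ≠ 0 := by
  have h := ppow_ne_zero hp2 3
  norm_num at h
  exact_mod_cast h

section Pair

variable (b e : ZMod p)

lemma pair : ∀ n : ℕ,
    ((AdjoinRoot.of (X ^ 2 - C (b * b - 4 * e)) (-b) +
        AdjoinRoot.root (X ^ 2 - C (b * b - 4 * e))) ^ n +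
      (AdjoinRoot.of (X ^ 2 - C (b * b - 4 * e)) (-b) -
        AdjoinRoot.root (X ^ 2 - C (b * b - 4 * e))) ^ n =
        AdjoinRoot.of (X ^ 2 - C (b * b - 4 * e)) (Vseq b e n)) ∧
    ((AdjoinRoot.of (X ^ 2 - C (b * b - 4 * e)) (-b) +
        AdjoinRoot.root (X ^ 2 - C (b * b - 4 * e))) ^ n -
      (AdjoinRoot.of (X ^ 2 - C (b * b - 4 * e)) (-b) -
        AdjoinRoot.root (X ^ 2 - C (b * b - 4 * e))) ^ n =
        AdjoinRoot.of (X ^ 2 - C (b * b - 4 * e)) (Wseq b e n) *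
          AdjoinRoot.root (X ^ 2 - C (b * b - 4 * e))) := by
  set t := AdjoinRoot.root (X ^ 2 - C (b * b - 4 * e)) with ht
  set Of := AdjoinRoot.of (X ^ 2 - C (b * b - 4 * e)) with hOf
  set B := Of b with hB
  set E := Of e with hE
  have hofneg : Of (-b) = -B := by simp only [map_neg]; rfl
  have hq : t ^ 2 = B * B - 4 * E := by
    have h := root_sq (p := p) (b * b - 4 * e)
    rw [← ht, ← hOf] at h
    rw [h]
    simp only [map_sub, map_mul, map_ofNat]; rfl
  have hofV : ∀ n, Of (Vseq b e (n + 2)) = -(2 * B) * Of (Vseq b e (n + 1)) - 4 * E * Of (Vseq b e n) := by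
    intro n
    show Of (-(2*b) * Vseq b e (n+1) - 4 * e * Vseq b e n) = _
    simp only [map_sub, map_mul, map_neg, map_ofNat]; rfl
  have hofW : ∀ n, Of (Wseq b e (n + 2)) = -(2 * B) * Of (Wseq b e (n + 1)) - 4 * E * Of (Wseq b e n) := by
    intro n
    show Of (-(2*b) * Wseq b e (n+1) - 4 * e * Wseq b e n) = _
    simp only [map_sub, map_mul, map_neg, map_ofNat]; rfl
  rw [hofneg]
  have main : ∀ n,
      ((-B + t) ^ n + (-B - t) ^ n = Of (Vseq b e n) ∧
        (-B + t) ^ n - (-B - t) ^ n = Of (Wseq b e n) * t) ∧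
      ((-B + t) ^ (n + 1) + (-B - t) ^ (n + 1) = Of (Vseq b e (n + 1)) ∧
        (-B + t) ^ (n + 1) - (-B - t) ^ (n + 1) = Of (Wseq b e (n + 1)) * t) := by
    intro n
    induction n with
    | zero =>
      refine ⟨⟨?_, ?_⟩, ?_, ?_⟩
      · show _ = Of 2
        rw [map_ofNat]; ring
      · show _ = Of 0 * t
        rw [map_zero]; ring
      · show _ = Of (-(2*b))
        rw [map_neg, map_mul, map_ofNat]; ring
      · show _ = Of 2 * t
        rw [map_ofNat]; ring
    | succ n ih =>
      refine ⟨ih.2, ?_, ?_⟩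
      · rw [hofV n]
        linear_combination ((-B + t) ^ n) * hq + ((-B - t) ^ n) * hq -
          (2 * B) * ih.2.1 - 4 * E * ih.1.1
      · rw [hofW n]
        linear_combination ((-B + t) ^ n) * hq - ((-B - t) ^ n) * hq -
          (2 * B) * ih.2.2 - 4 * E * ih.1.2
  exact fun n => (main n).1

end Pair
lemma Ghat_eval (hp2 : p ≠ 2) {a : ℕ} (ha : 0 < a) (b e : ZMod p) :
    Ghat b e (p ^ a) = (b * b - 4 * e) ^ ((p ^ a - 1) / 2) ∧
    Ghat b e (p ^ a + 1) =
      -(b * (1 + (b * b - 4 * e) ^ ((p ^ a - 1) / 2))) * 2⁻¹ := by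
  have hq3 : 3 ≤ p ^ a := q_ge_3 hp2 ha
  have hqodd : Odd (p ^ a) := q_odd hp2 a
  set j : ZMod p := (b * b - 4 * e) ^ ((p ^ a - 1) / 2) with hj
  set t := AdjoinRoot.root (X ^ 2 - C (b * b - 4 * e)) with ht
  set Of := AdjoinRoot.of (X ^ 2 - C (b * b - 4 * e)) with hOf
  haveI : CharP (AdjoinRoot (X ^ 2 - C (b * b - 4 * e) : (ZMod p)[X])) p :=
    adj_charP (b * b - 4 * e)
  have hq : t ^ 2 = Of (b * b - 4 * e) := root_sq (p := p) (b * b - 4 * e)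
  -- t ^ (p ^ a) = Of j * t
  have htq : t ^ (p ^ a) = Of j * t := by
    have h2 : p ^ a - 1 = 2 * ((p ^ a - 1) / 2) := by
      have := hqodd
      rw [Nat.odd_iff] at this
      omega
    have h3 : t ^ (p ^ a) = t ^ (p ^ a - 1) * t := by
      rw [← pow_succ]
      congr 1
      omega
    rw [h3, h2, pow_mul, hq, ← map_pow, ← hj]
  -- Frobenius on Λ and M
  have hLq : (Of (-b) + t) ^ (p ^ a) = Of (-b) + Of j * t := by
    rw [add_pow_char_pow, ← map_pow, ZMod.pow_card_pow, htq]
  have hMq : (Of (-b) - t) ^ (p ^ a) = Of (-b) - Of j * t := by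
    have : Of (-b) - t = Of (-b) + (-t) := by ring
    rw [this, add_pow_char_pow, ← map_pow, ZMod.pow_card_pow, hqodd.neg_pow, htq]
    ring
  -- extraction of Wseq q
  have hWq : Wseq b e (p ^ a) = 2 * j := by
    have hp := (pair b e (p ^ a)).2
    rw [← ht, ← hOf, hLq, hMq] at hp
    have hdiff : Of 0 + Of (Wseq b e (p ^ a) - 2 * j) * t = 0 := by
      simp only [map_zero, map_sub, map_mul, map_ofNat]
      linear_combination -hp
    have := (adj_zero (b * b - 4 * e) (by rw [← hOf, ← ht]; exact hdiff)).2
    linear_combination this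
  -- extraction of Wseq (q+1)
  have hWq1 : Wseq b e (p ^ a + 1) = -(2 * b) * (1 + j) := by
    have hp := (pair b e (p ^ a + 1)).2
    rw [← ht, ← hOf] at hp
    have hL1 : (Of (-b) + t) ^ (p ^ a + 1) = (Of (-b) + Of j * t) * (Of (-b) + t) := by
      have := congrArg (fun z => z * (Of (-b) + t)) hLq
      rw [← pow_succ] at this
      exact this
    have hM1 : (Of (-b) - t) ^ (p ^ a + 1) = (Of (-b) - Of j * t) * (Of (-b) - t) := by
      have := congrArg (fun z => z * (Of (-b) - t)) hMq
      rw [← pow_succ] at this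
      exact this
    rw [hL1, hM1] at hp
    simp only [map_neg] at hp
    have hdiff : Of 0 + Of (Wseq b e (p ^ a + 1) - (-(2 * b) * (1 + j))) * t = 0 := by
      simp only [map_zero, map_sub, map_mul, map_neg, map_ofNat, map_add, map_one]
      linear_combination -hp
    have := (adj_zero (b * b - 4 * e) (by rw [← hOf, ← ht]; exact hdiff)).2
    linear_combination this
  -- convert to Ghat
  have h2q : (2 : ZMod p) ^ (p ^ a) = 2 := ZMod.pow_card_pow 2
  have hW2 := Wseq_eq_Ghat b e (p ^ a)
  have hW3 := Wseq_eq_Ghat b e (p ^ a + 1)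
  rw [hWq, h2q] at hW2
  rw [hWq1, pow_succ, h2q] at hW3
  have h2 : (2 : ZMod p) ≠ 0 := two_ne_zero' hp2
  have hinv : (2 : ZMod p) * 2⁻¹ = 1 := mul_inv_cancel₀ h2
  constructor
  · exact (mul_left_cancel₀ h2 hW2).symm
  · apply mul_left_cancel₀ (mul_ne_zero h2 h2)
    linear_combination (-1 : ZMod p) * hW3 + (2 * b * (1 + j)) * hinv

lemma Ghat_eval_back (hp2 : p ≠ 2) {a : ℕ} (ha : 0 < a) (b e : ZMod p) (he : e ≠ 0) :
    Ghat b e (p ^ a - 1) = b * (1 - (b * b - 4 * e) ^ ((p ^ a - 1) / 2)) * (2 * e)⁻¹ ∧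
    Ghat b e (p ^ a - 2) = -((b * b - 4 * e) ^ ((p ^ a - 1) / 2)
        + b * (b * (1 - (b * b - 4 * e) ^ ((p ^ a - 1) / 2)) * (2 * e)⁻¹)) * e⁻¹ := by
  obtain ⟨h1, h2⟩ := Ghat_eval hp2 ha b e
  have hq3 : 3 ≤ p ^ a := q_ge_3 hp2 ha
  set j : ZMod p := (b * b - 4 * e) ^ ((p ^ a - 1) / 2) with hj
  have h2z : (2 : ZMod p) ≠ 0 := two_ne_zero' hp2
  have h2e : (2 * e : ZMod p) ≠ 0 := mul_ne_zero h2z he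
  have hinv : (2 : ZMod p) * 2⁻¹ = 1 := mul_inv_cancel₀ h2z
  have r1 := Ghat_add_two b e (p ^ a - 1)
  have e1 : p ^ a - 1 + 2 = p ^ a + 1 := by omega
  have e2 : p ^ a - 1 + 1 = p ^ a := by omega
  rw [e1, e2, h1, h2] at r1
  have key1 : Ghat b e (p ^ a - 1) = b * (1 - j) * (2 * e)⁻¹ := by
    have hx : (2 * e) * Ghat b e (p ^ a - 1) = b * (1 - j) := by
      linear_combination (2 : ZMod p) * r1 + (b * (1 + j)) * hinv
    apply mul_left_cancel₀ h2e
    rw [hx]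
    field_simp
  refine ⟨key1, ?_⟩
  have r2 := Ghat_add_two b e (p ^ a - 2)
  have e3 : p ^ a - 2 + 2 = p ^ a := by omega
  have e4 : p ^ a - 2 + 1 = p ^ a - 1 := by omega
  rw [e3, e4, h1, key1] at r2
  have hx : e * Ghat b e (p ^ a - 2) = -(j + b * (b * (1 - j) * (2 * e)⁻¹)) := by
    linear_combination r2
  apply mul_left_cancel₀ he
  rw [hx]
  field_simp

end Quad

lemma exp_split (hp2 : p ≠ 2) (a : ℕ) :
    (p ^ (a + 1) - 1) / 2 = ((p ^ a - 1) / 2) * p + (p - 1) / 2 := by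
  have h1 : 1 ≤ p ^ a := q_pos a
  have hodd : p % 2 = 1 := Nat.odd_iff.mp (p_odd hp2)
  have hqodd : p ^ a % 2 = 1 := Nat.odd_iff.mp (q_odd hp2 a)
  have hp3 : 3 ≤ p := by
    have := (Fact.out : p.Prime).two_le
    omega
  set u := (p ^ a - 1) / 2 with hu'
  set v := (p - 1) / 2 with hv'
  have hu : p ^ a = 2 * u + 1 := by omega
  have hv : p = 2 * v + 1 := by omega
  have hexp : p ^ (a + 1) = 2 * (u * (2 * v + 1) + v) + 1 := by
    rw [pow_succ, hu, hv]; ring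
  rw [hexp]
  rw [hv]
  generalize u * (2 * v + 1) = w
  omega

lemma pow_half_q (hp2 : p ≠ 2) {a : ℕ} (ha : 0 < a) (x : ZMod p) :
    x ^ ((p ^ a - 1) / 2) = (x ^ ((p - 1) / 2)) ^ a := by
  induction a with
  | zero => omega
  | succ a ih =>
    rcases Nat.eq_zero_or_pos a with rfl | hapos
    · simp
    · rw [exp_split hp2 a, pow_add, pow_mul, ZMod.pow_card, ih hapos, ← pow_succ]

lemma jac5 (hp2 : p ≠ 2) {a : ℕ} (ha : 0 < a) :
    ((jacobiSym (p ^ a) 5 : ℤ) : ZMod p) = (5 : ZMod p) ^ ((p ^ a - 1) / 2) := by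
  haveI : Fact (Nat.Prime 5) := ⟨by norm_num⟩
  have hcast : ((p ^ a : ℕ) : ℤ) = (p : ℤ) ^ a := by push_cast; ring
  have h1 : jacobiSym (p ^ a) 5 = (legendreSym p 5) ^ a := by
    rw [jacobiSym.pow_left]
    congr 1
    rw [← jacobiSym.legendreSym.to_jacobiSym]
    exact (legendreSym.quadratic_reciprocity_one_mod_four (by norm_num) hp2).symm
  rw [h1]
  push_cast
  rw [legendreSym.eq_pow]
  have hdiv : p / 2 = (p - 1) / 2 := by
    have hodd : p % 2 = 1 := Nat.odd_iff.mp (p_odd hp2)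
    omega
  rw [hdiv, pow_half_q hp2 ha]
  norm_num

lemma jac7 (hp2 : p ≠ 2) {a : ℕ} (ha : 0 < a) :
    ((jacobiSym (p ^ a) 7 : ℤ) : ZMod p) = (-7 : ZMod p) ^ ((p ^ a - 1) / 2) := by
  haveI : Fact (Nat.Prime 7) := ⟨by norm_num⟩
  have hcast : ((p ^ a : ℕ) : ℤ) = (p : ℤ) ^ a := by push_cast; ring
  have hkey : legendreSym 7 p = legendreSym p (-7) := by
    have hmul : legendreSym p (-7) = legendreSym p (-1) * legendreSym p 7 := by
      rw [← legendreSym.mul]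
      norm_num
    have hneg : legendreSym p (-1) = (-1 : ℤ) ^ (p / 2) := by
      rw [legendreSym.at_neg_one hp2, ZMod.χ₄_eq_neg_one_pow (Nat.odd_iff.mp (p_odd hp2))]
    have hrec := legendreSym.quadratic_reciprocity' (p := 7) (q := p) (by norm_num) hp2
    -- hrec : legendreSym p 7 = (-1) ^ (7 / 2 * (p / 2)) * legendreSym 7 p
    have h72 : (7 : ℕ) / 2 = 3 := by norm_num
    have hsign : ((-1 : ℤ)) ^ (7 / 2 * (p / 2)) = (-1 : ℤ) ^ (p / 2) := by
      rw [h72, mul_comm, pow_mul]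
      have : ((-1 : ℤ) ^ (p / 2)) ^ 3 = ((-1 : ℤ) ^ (p / 2)) ^ 2 * ((-1 : ℤ) ^ (p / 2)) := by ring
      rw [this, ← pow_mul, mul_comm (p/2) 2, pow_mul]
      norm_num
    rw [hsign] at hrec
    have hsq : ((-1 : ℤ) ^ (p / 2)) * ((-1 : ℤ) ^ (p / 2)) = 1 := by
      rw [← pow_add, ← two_mul, pow_mul]
      norm_num
    calc legendreSym 7 p = ((-1 : ℤ) ^ (p / 2) * (-1 : ℤ) ^ (p / 2)) * legendreSym 7 p := by
          rw [hsq, one_mul]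
      _ = (-1 : ℤ) ^ (p / 2) * legendreSym p 7 := by rw [mul_assoc, ← hrec]; norm_cast
      _ = legendreSym p (-7) := by rw [hmul, hneg]
  have h1 : jacobiSym (p ^ a) 7 = (legendreSym p (-7)) ^ a := by
    rw [jacobiSym.pow_left]
    congr 1
    rw [← jacobiSym.legendreSym.to_jacobiSym]
    exact hkey
  rw [h1]
  push_cast
  rw [legendreSym.eq_pow]
  have hdiv : p / 2 = (p - 1) / 2 := by
    have hodd : p % 2 = 1 := Nat.odd_iff.mp (p_odd hp2)
    omega
  rw [hdiv, pow_half_q hp2 ha]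
  norm_num

def Dseq {R : Type*} [CommRing R] (al be ga r b e : R) (n : ℕ) : R :=
  al * r ^ n + be * Ghat b e (n + 1) + ga * Ghat b e n

lemma Ghat_zero {R : Type*} [CommRing R] (b e : R) : Ghat b e 0 = 0 := rfl
lemma Ghat_one {R : Type*} [CommRing R] (b e : R) : Ghat b e 1 = 1 := rfl

lemma Ghat_two {R : Type*} [CommRing R] (b e : R) : Ghat b e 2 = -b := by
  show Ghat b e (0 + 2) = -b
  rw [Ghat_add_two]
  simp [Ghat_zero, Ghat_one]

lemma Ghat_three {R : Type*} [CommRing R] (b e : R) : Ghat b e 3 = b * b - e := by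
  show Ghat b e (1 + 2) = _
  rw [Ghat_add_two]
  have h2 : (1 : ℕ) + 1 = 2 := rfl
  rw [h2, Ghat_two, Ghat_one]
  ring

lemma Dseq_rec {R : Type*} [CommRing R] (al be ga r b e c1 c2 : R)
    (hc1 : c1 = b - r) (hc2 : c2 = e - r * b) (hre : r * e = -1) (m : ℕ) :
    Dseq al be ga r b e (m + 3) = -(c1 * Dseq al be ga r b e (m + 2) +
      c2 * Dseq al be ga r b e (m + 1) + Dseq al be ga r b e m) := by
  subst hc1
  subst hc2
  have g2 : Ghat b e (m + 2) = -b * Ghat b e (m + 1) - e * Ghat b e m := Ghat_add_two b e m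
  have g3 : Ghat b e (m + 3) = -b * Ghat b e (m + 2) - e * Ghat b e (m + 1) := by
    have h := Ghat_add_two b e (m + 1)
    rwa [show m + 1 + 2 = m + 3 by omega, show m + 1 + 1 = m + 2 by omega] at h
  have g4 : Ghat b e (m + 4) = -b * Ghat b e (m + 3) - e * Ghat b e (m + 2) := by
    have h := Ghat_add_two b e (m + 2)
    rwa [show m + 2 + 2 = m + 4 by omega, show m + 2 + 1 = m + 3 by omega] at h
  simp only [Dseq]
  rw [show m + 3 + 1 = m + 4 by omega, show m + 2 + 1 = m + 3 by omega,
    show m + 1 + 1 = m + 2 by omega]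
  rw [g4, g3, g2]
  have hr3 : r ^ (m + 3) = r ^ m * r * r * r := by ring
  have hr2 : r ^ (m + 2) = r ^ m * r * r := by ring
  have hr1 : r ^ (m + 1) = r ^ m * r := by ring
  rw [hr3, hr2, hr1]
  linear_combination (al * r ^ m + be * Ghat b e (m + 1) + ga * Ghat b e m) * hre

lemma caseA (hp2 : p ≠ 2) {a : ℕ} (ha : 0 < a) :
    (∑ k ∈ range (p ^ a), ((8 : ZMod p)⁻¹) ^ k * ((3 * k).choose k : ZMod p))
        = (3 * ((jacobiSym (p ^ a) 5 : ℤ) : ZMod p) + 1) * 4⁻¹ ∧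
    (∑ k ∈ Ico 1 (p ^ a), ((8 : ZMod p)⁻¹) ^ k * ((3 * k).choose (k - 1) : ZMod p))
        = (1 - ((jacobiSym (p ^ a) 5 : ℤ) : ZMod p)) * 4⁻¹ := by
  have hq3 : 3 ≤ p ^ a := q_ge_3 hp2 ha
  have h2 : (2 : ZMod p) ≠ 0 := two_ne_zero' hp2
  have h4 : (4 : ZMod p) ≠ 0 := four_ne_zero' hp2
  have h8 : (8 : ZMod p) ≠ 0 := eight_ne_zero' hp2
  have hm1 : (-1 : ZMod p) ≠ 0 := neg_ne_zero.mpr one_ne_zero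
  set J : ZMod p := ((jacobiSym (p ^ a) 5 : ℤ) : ZMod p) with hJ
  -- the Jacobi symbol as a power
  have hqodd : p ^ a % 2 = 1 := Nat.odd_iff.mp (q_odd hp2 a)
  have hj20 : ((20 : ZMod p)) ^ ((p ^ a - 1) / 2) = J := by
    have h20 : (20 : ZMod p) = 4 * 5 := by norm_num
    rw [h20, mul_pow]
    have h4p : (4 : ZMod p) ^ ((p ^ a - 1) / 2) = 1 := by
      have : (4 : ZMod p) = 2 ^ 2 := by norm_num
      rw [this, ← pow_mul]
      have he : 2 * ((p ^ a - 1) / 2) = p ^ a - 1 := by omega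
      rw [he, pow_q_sub_one h2]
    rw [h4p, one_mul, hJ, jac5 hp2 ha]
  -- discriminant rewriting
  have hdisc : ((-4 : ZMod p) * (-4) - 4 * (-1)) = 20 := by norm_num
  -- initial conditions
  have hD0 : Dseq (-(4⁻¹) : ZMod p) (5 * 4⁻¹) 4⁻¹ 1 (-4) (-1) 0 = 1 := by
    simp only [Dseq, pow_zero, zero_add, Ghat_zero, Ghat_one]
    field_simp
    norm_num
  have hD1 : Dseq (-(4⁻¹) : ZMod p) (5 * 4⁻¹) 4⁻¹ 1 (-4) (-1) 1 = -(-5 : ZMod p) := by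
    simp only [Dseq, pow_one, Ghat_one]
    have : (1 : ℕ) + 1 = 2 := rfl
    rw [this, Ghat_two]
    field_simp
    try ring
    try norm_num
  have hD2 : Dseq (-(4⁻¹) : ZMod p) (5 * 4⁻¹) 4⁻¹ 1 (-4) (-1) 2 = (-5 : ZMod p) * (-5) - 3 := by
    simp only [Dseq, Ghat_two]
    have : (2 : ℕ) + 1 = 3 := rfl
    rw [this, Ghat_three]
    field_simp
    try ring
    try norm_num
  have hDrec : ∀ m, Dseq (-(4⁻¹) : ZMod p) (5 * 4⁻¹) 4⁻¹ 1 (-4) (-1) (m + 3) =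
      -((-5 : ZMod p) * Dseq (-(4⁻¹) : ZMod p) (5 * 4⁻¹) 4⁻¹ 1 (-4) (-1) (m + 2) +
        3 * Dseq (-(4⁻¹) : ZMod p) (5 * 4⁻¹) 4⁻¹ 1 (-4) (-1) (m + 1) + Dseq (-(4⁻¹) : ZMod p) (5 * 4⁻¹) 4⁻¹ 1 (-4) (-1) m) := by
    intro m
    exact Dseq_rec (-(4⁻¹) : ZMod p) (5 * 4⁻¹) 4⁻¹ 1 (-4) (-1) (-5) 3 (by ring) (by ring) (by ring) m
  have hpoly : ((1 + X) ^ 3 - C (8 : ZMod p) * X) =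
      X ^ 3 + C (3 : ZMod p) * X ^ 2 + C (-5 : ZMod p) * X + 1 := by
    simp only [map_neg, map_ofNat]
    ring
  have hcoeffD := coeff_eq_D hp2 ha (-5 : ZMod p) 3 (Dseq (-(4⁻¹) : ZMod p) (5 * 4⁻¹) 4⁻¹ 1 (-4) (-1))
    hD0 hD1 hD2 hDrec
  have htop := coeff_top hp2 ha h8
  have hsub := coeff_sub hp2 ha h8
  rw [hpoly] at htop hsub
  rw [hcoeffD _ (by omega)] at htop
  rw [hcoeffD _ (by omega)] at hsub
  -- evaluate D at q-1 and q-2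
  have hGq := (Ghat_eval hp2 ha (-4 : ZMod p) (-1)).1
  have hGb := Ghat_eval_back hp2 ha (-4 : ZMod p) (-1) hm1
  rw [hdisc, hj20] at hGq
  rw [hdisc, hj20] at hGb
  have hDq1 : Dseq (-(4⁻¹) : ZMod p) (5 * 4⁻¹) 4⁻¹ 1 (-4) (-1) (p ^ a - 1) = (3 * J + 1) * 4⁻¹ := by
    simp only [Dseq, one_pow]
    rw [show p ^ a - 1 + 1 = p ^ a by omega, hGq, hGb.1]
    field_simp
    ring
  have hDq2 : Dseq (-(4⁻¹) : ZMod p) (5 * 4⁻¹) 4⁻¹ 1 (-4) (-1) (p ^ a - 2) = (1 - J) * 4⁻¹ := by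
    simp only [Dseq, one_pow]
    rw [show p ^ a - 2 + 1 = p ^ a - 1 by omega, hGb.1, hGb.2]
    field_simp
    ring
  rw [hDq1] at htop
  rw [hDq2] at hsub
  exact ⟨htop.symm, hsub.symm⟩

lemma caseB (hp2 : p ≠ 2) {a : ℕ} (ha : 0 < a) :
    (∑ k ∈ range (p ^ a), (-4 : ZMod p) ^ k * ((3 * k).choose k : ZMod p))
        = (11 - 3 * ((jacobiSym (p ^ a) 7 : ℤ) : ZMod p)) * 8⁻¹ ∧
    (∑ k ∈ Ico 1 (p ^ a), (-4 : ZMod p) ^ k * ((3 * k).choose (k - 1) : ZMod p))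
        = (11 * ((jacobiSym (p ^ a) 7 : ℤ) : ZMod p) - 11) * 16⁻¹ := by
  have hq3 : 3 ≤ p ^ a := q_ge_3 hp2 ha
  have h2 : (2 : ZMod p) ≠ 0 := two_ne_zero' hp2
  have h4 : (4 : ZMod p) ≠ 0 := four_ne_zero' hp2
  have h8 : (8 : ZMod p) ≠ 0 := eight_ne_zero' hp2
  have h16z : (16 : ZMod p) ≠ 0 := by
    have h : (16 : ZMod p) = 4 * 4 := by norm_num
    rw [h]
    exact mul_ne_zero h4 h4
  have hiv2 : ((2 : ZMod p)⁻¹) ≠ 0 := inv_ne_zero h2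
  have hc : (-(4⁻¹) : ZMod p) ≠ 0 := neg_ne_zero.mpr (inv_ne_zero h4)
  have hcinv : (-(4⁻¹) : ZMod p)⁻¹ = -4 := by rw [inv_neg, inv_inv]
  set J : ZMod p := ((jacobiSym (p ^ a) 7 : ℤ) : ZMod p) with hJ
  have hqodd : p ^ a % 2 = 1 := Nat.odd_iff.mp (q_odd hp2 a)
  have h16 : (16 : ZMod p) ^ ((p ^ a - 1) / 2) = 1 := by
    have h : (16 : ZMod p) = 2 ^ 4 := by norm_num
    rw [h, ← pow_mul]
    have he : 4 * ((p ^ a - 1) / 2) = (p ^ a - 1) * 2 := by omega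
    rw [he, pow_mul, pow_q_sub_one h2, one_pow]
  have hj7 : ((5 * 4⁻¹ : ZMod p) * (5 * 4⁻¹) - 4 * 2⁻¹) ^ ((p ^ a - 1) / 2) = J := by
    have hd : ((5 * 4⁻¹ : ZMod p) * (5 * 4⁻¹) - 4 * 2⁻¹) = -7 * 16⁻¹ := by
      field_simp
      ring
    rw [hd, mul_pow, inv_pow, h16, inv_one, mul_one, hJ, jac7 hp2 ha]
  -- initial conditions
  have hD0 : Dseq (2 : ZMod p) (-1) (-(2⁻¹)) (-2) (5 * 4⁻¹) 2⁻¹ 0 = 1 := by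
    simp only [Dseq, pow_zero, zero_add, Ghat_zero, Ghat_one]
    norm_num
  have hD1 : Dseq (2 : ZMod p) (-1) (-(2⁻¹)) (-2) (5 * 4⁻¹) 2⁻¹ 1 = -(3 + 4⁻¹ : ZMod p) := by
    simp only [Dseq, pow_one, Ghat_one]
    have h : (1 : ℕ) + 1 = 2 := rfl
    rw [h, Ghat_two]
    field_simp
    try ring
    try norm_num
  have hD2 : Dseq (2 : ZMod p) (-1) (-(2⁻¹)) (-2) (5 * 4⁻¹) 2⁻¹ 2
      = (3 + 4⁻¹ : ZMod p) * (3 + 4⁻¹) - 3 := by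
    simp only [Dseq, Ghat_two]
    have h : (2 : ℕ) + 1 = 3 := rfl
    rw [h, Ghat_three]
    field_simp
    try ring
    try norm_num
  have hDrec : ∀ m, Dseq (2 : ZMod p) (-1) (-(2⁻¹)) (-2) (5 * 4⁻¹) 2⁻¹ (m + 3) =
      -((3 + 4⁻¹ : ZMod p) * Dseq (2 : ZMod p) (-1) (-(2⁻¹)) (-2) (5 * 4⁻¹) 2⁻¹ (m + 2) +
        3 * Dseq (2 : ZMod p) (-1) (-(2⁻¹)) (-2) (5 * 4⁻¹) 2⁻¹ (m + 1) +
        Dseq (2 : ZMod p) (-1) (-(2⁻¹)) (-2) (5 * 4⁻¹) 2⁻¹ m) := by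
    intro m
    refine Dseq_rec (2 : ZMod p) (-1) (-(2⁻¹)) (-2) (5 * 4⁻¹) 2⁻¹ (3 + 4⁻¹) 3 ?_ ?_ ?_ m
    · field_simp
      try ring
      try norm_num
    · field_simp
      try ring
      try norm_num
    · field_simp
  have hpoly : ((1 + X) ^ 3 - C (-(4⁻¹) : ZMod p) * X) =
      X ^ 3 + C (3 : ZMod p) * X ^ 2 + C (3 + 4⁻¹ : ZMod p) * X + 1 := by
    simp only [map_neg, map_add, map_ofNat]
    ring
  have hcoeffD := coeff_eq_D hp2 ha (3 + 4⁻¹ : ZMod p) 3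
    (Dseq (2 : ZMod p) (-1) (-(2⁻¹)) (-2) (5 * 4⁻¹) 2⁻¹) hD0 hD1 hD2 hDrec
  have htop := coeff_top hp2 ha hc
  have hsub := coeff_sub hp2 ha hc
  rw [hpoly] at htop hsub
  rw [hcoeffD _ (by omega)] at htop
  rw [hcoeffD _ (by omega)] at hsub
  simp only [hcinv] at htop hsub
  -- evaluate D at q-1 and q-2
  have hGq := (Ghat_eval hp2 ha (5 * 4⁻¹ : ZMod p) 2⁻¹).1
  have hGb := Ghat_eval_back hp2 ha (5 * 4⁻¹ : ZMod p) 2⁻¹ hiv2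
  rw [hj7] at hGq
  rw [hj7] at hGb
  have hr1 : (-2 : ZMod p) ^ (p ^ a - 1) = 1 := pow_q_sub_one (neg_ne_zero.mpr h2)
  have hr2 : (-2 : ZMod p) ^ (p ^ a - 2) = -(2⁻¹) := by
    have hx : (-2 : ZMod p) ^ (p ^ a - 2) * (-2) = 1 := by
      rw [← pow_succ, show p ^ a - 2 + 1 = p ^ a - 1 by omega, hr1]
    have := eq_inv_of_mul_eq_one_left hx
    rw [this, inv_neg]
  have hDq1 : Dseq (2 : ZMod p) (-1) (-(2⁻¹)) (-2) (5 * 4⁻¹) 2⁻¹ (p ^ a - 1)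
      = (11 - 3 * J) * 8⁻¹ := by
    simp only [Dseq]
    rw [show p ^ a - 1 + 1 = p ^ a by omega, hGq, hGb.1, hr1]
    field_simp
    ring
  have hDq2 : Dseq (2 : ZMod p) (-1) (-(2⁻¹)) (-2) (5 * 4⁻¹) 2⁻¹ (p ^ a - 2)
      = (11 * J - 11) * 16⁻¹ := by
    simp only [Dseq]
    rw [show p ^ a - 2 + 1 = p ^ a - 1 by omega, hGb.1, hGb.2, hr2]
    field_simp
    ring
  rw [hDq1] at htop
  rw [hDq2] at hsub
  exact ⟨htop.symm, hsub.symm⟩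

lemma ibinom_nat' (n k : ℕ) : (ibinom n (k : ℤ) : ZMod p) = (n.choose k : ZMod p) := by
  simp [ibinom]

lemma ibinom_pred' (n k : ℕ) (hk : 1 ≤ k) :
    (ibinom n ((k : ℤ) - 1) : ZMod p) = (n.choose (k - 1) : ZMod p) := by
  have h : (k : ℤ) - 1 = ((k - 1 : ℕ) : ℤ) := by omega
  rw [ibinom, h, if_pos (Int.natCast_nonneg _), Int.toNat_natCast]

lemma catalan2_cast (k : ℕ) (hk : 1 ≤ k) :
    ((catalan2 k : ℤ) : ZMod p)
      = ((3 * k).choose k : ZMod p) - 2 * ((3 * k).choose (k - 1) : ZMod p) := by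
  rw [catalan2]
  push_cast
  rw [ibinom_nat', ibinom_pred' _ _ hk]

end SunAux

open SunAux

theorem stmt_1 (p : ℕ) (hp : p.Prime) (hp2 : p ≠ 2) (a : ℕ) (ha : 0 < a) :
    (∑ k ∈ Finset.Ico 1 (p ^ a),
        (ibinom (3 * k) (k : ℤ) : ZMod p) * ((8 : ZMod p) ^ k)⁻¹) =
      3 * (4 : ZMod p)⁻¹ * ((jacobiSym (p ^ a) 5 : ZMod p) - 1) ∧
    (∑ k ∈ Finset.Ico 1 (p ^ a),
        (catalan2 k : ZMod p) * ((8 : ZMod p) ^ k)⁻¹) =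
      5 * (4 : ZMod p)⁻¹ * ((jacobiSym (p ^ a) 5 : ZMod p) - 1) ∧
    (∑ k ∈ Finset.Ico 1 (p ^ a),
        (-4 : ZMod p) ^ k * (ibinom (3 * k) (k : ℤ) : ZMod p)) =
      3 * (8 : ZMod p)⁻¹ * (1 - (jacobiSym (p ^ a) 7 : ZMod p)) ∧
    (∑ k ∈ Finset.Ico 1 (p ^ a),
        (-4 : ZMod p) ^ k * (catalan2 k : ZMod p)) =
      7 * (4 : ZMod p)⁻¹ * (1 - (jacobiSym (p ^ a) 7 : ZMod p)) := by
  haveI : Fact p.Prime := ⟨hp⟩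
  have h2 : (2 : ZMod p) ≠ 0 := two_ne_zero' hp2
  have h4 : (4 : ZMod p) ≠ 0 := four_ne_zero' hp2
  have h8 : (8 : ZMod p) ≠ 0 := eight_ne_zero' hp2
  have h16z : (16 : ZMod p) ≠ 0 := by
    have h : (16 : ZMod p) = 4 * 4 := by norm_num
    rw [h]
    exact mul_ne_zero h4 h4
  have hqpos : 0 < p ^ a := q_pos a
  obtain ⟨hA1, hA2⟩ := caseA hp2 ha
  obtain ⟨hB1, hB2⟩ := caseB hp2 ha
  set J5 : ZMod p := ((jacobiSym (p ^ a) 5 : ℤ) : ZMod p) with hJ5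
  set J7 : ZMod p := ((jacobiSym (p ^ a) 7 : ℤ) : ZMod p) with hJ7
  -- split off the k = 0 term in the range sums
  rw [Finset.range_eq_Ico, Finset.sum_eq_sum_Ico_succ_bot hqpos] at hA1 hB1
  have hz1 : ((8 : ZMod p)⁻¹) ^ 0 * ((3 * 0).choose 0 : ZMod p) = 1 := by norm_num
  have hz2 : (-4 : ZMod p) ^ 0 * ((3 * 0).choose 0 : ZMod p) = 1 := by norm_num
  rw [hz1] at hA1
  rw [hz2] at hB1
  -- conversions of the statement sums
  have hconv1 : (∑ k ∈ Finset.Ico 1 (p ^ a),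
      (ibinom (3 * k) (k : ℤ) : ZMod p) * ((8 : ZMod p) ^ k)⁻¹)
      = ∑ k ∈ Finset.Ico 1 (p ^ a), ((8 : ZMod p)⁻¹) ^ k * ((3 * k).choose k : ZMod p) := by
    apply Finset.sum_congr rfl
    intro k hk
    rw [ibinom_nat', ← inv_pow, mul_comm]
  have hconv2 : (∑ k ∈ Finset.Ico 1 (p ^ a), (catalan2 k : ZMod p) * ((8 : ZMod p) ^ k)⁻¹)
      = (∑ k ∈ Finset.Ico 1 (p ^ a), ((8 : ZMod p)⁻¹) ^ k * ((3 * k).choose k : ZMod p))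
        - 2 * ∑ k ∈ Finset.Ico 1 (p ^ a), ((8 : ZMod p)⁻¹) ^ k * ((3 * k).choose (k - 1) : ZMod p) := by
    rw [Finset.mul_sum, ← Finset.sum_sub_distrib]
    apply Finset.sum_congr rfl
    intro k hk
    have hk1 : 1 ≤ k := (Finset.mem_Ico.mp hk).1
    rw [catalan2_cast k hk1, ← inv_pow]
    ring
  have hconv3 : (∑ k ∈ Finset.Ico 1 (p ^ a),
      (-4 : ZMod p) ^ k * (ibinom (3 * k) (k : ℤ) : ZMod p))
      = ∑ k ∈ Finset.Ico 1 (p ^ a), (-4 : ZMod p) ^ k * ((3 * k).choose k : ZMod p) := by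
    apply Finset.sum_congr rfl
    intro k hk
    rw [ibinom_nat']
  have hconv4 : (∑ k ∈ Finset.Ico 1 (p ^ a), (-4 : ZMod p) ^ k * (catalan2 k : ZMod p))
      = (∑ k ∈ Finset.Ico 1 (p ^ a), (-4 : ZMod p) ^ k * ((3 * k).choose k : ZMod p))
        - 2 * ∑ k ∈ Finset.Ico 1 (p ^ a), (-4 : ZMod p) ^ k * ((3 * k).choose (k - 1) : ZMod p) := by
    rw [Finset.mul_sum, ← Finset.sum_sub_distrib]
    apply Finset.sum_congr rfl
    intro k hk
    have hk1 : 1 ≤ k := (Finset.mem_Ico.mp hk).1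
    rw [catalan2_cast k hk1]
    ring
  -- final value identities
  have hg1 : (3 * J5 + 1) * (4 : ZMod p)⁻¹ - 1 = 3 * (4 : ZMod p)⁻¹ * (J5 - 1) := by
    field_simp
    ring
  have hg2 : ((3 * J5 + 1) * (4 : ZMod p)⁻¹ - 1) - 2 * ((1 - J5) * 4⁻¹)
      = 5 * (4 : ZMod p)⁻¹ * (J5 - 1) := by
    field_simp
    ring
  have hg3 : (11 - 3 * J7) * (8 : ZMod p)⁻¹ - 1 = 3 * (8 : ZMod p)⁻¹ * (1 - J7) := by
    field_simp
    ring
  have hg4 : ((11 - 3 * J7) * (8 : ZMod p)⁻¹ - 1) - 2 * ((11 * J7 - 11) * 16⁻¹)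
      = 7 * (4 : ZMod p)⁻¹ * (1 - J7) := by
    field_simp
    ring
  refine ⟨?_, ?_, ?_, ?_⟩
  · rw [hconv1]
    linear_combination hA1 + hg1
  · rw [hconv2]
    linear_combination hA1 - 2 * hA2 + hg2
  · rw [hconv3]
    linear_combination hB1 + hg3
  · rw [hconv4]
    linear_combination hB1 - 2 * hB2 + hg4
end

section
/- Let p be a prime with p ≠ 7 and let a be a positive integer. Then in ℤ/pℤ: (1) ∑_{k=1}^{p^a−1} binom(3k, k)·(7^k)⁻¹ equals −3 if p^a ≡ ±2 (mod 7) and equals 0 otherwise; (2) ∑_{k=0}^{p^a−1} binom(3k, k−1)·(7^k)⁻¹ equals 0 if p^a ≡ ±1 (mod 7), equals −1 if p^a ≡ ±2 (mod 7), and equals 1 if p^a ≡ ±3 (mod 7); (3) ∑_{k=0}^{p^a−1} binom(3k, k+1)·(7^k)⁻¹ equals 0 if p^a ≡ ±1 (mod 7), equals −7 if p^a ≡ ±2 (mod 7), and equals −1 if p^a ≡ ±3 (mod 7); (4) ∑_{k=0}^{p^a−1} C_k^{(2)}·(7^k)⁻¹ equals 1 if p^a ≡ ±1 (mod 7), equals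 0 if p^a ≡ ±2 (mod 7), and equals −1 if p^a ≡ ±3 (mod 7); (5) ∑_{k=1}^{p^a−1} \bar{C}_k^{(2)}·(7^k)⁻¹ equals 1 if p^a ≢ ±1 (mod 7) and equals 0 otherwise. -/
/-- Second-kind second-order Catalan numbers
`\bar C_k^{(2)} = 2·binom(3k,k) - binom(3k,k+1)`. -/
def catalan2bar (k : ℕ) : ℤ :=
  2 * (ibinom (3 * k) (k : ℤ) : ℤ) - (ibinom (3 * k) ((k : ℤ) + 1) : ℤ)

def G2s : ℕ → ℤ
  | 0 => 1
  | 1 => 4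
  | 2 => 13
  | n + 3 => 4 * G2s (n + 2) - 3 * G2s (n + 1) - G2s n

def sg {R : Type*} [CommRing R] (z : R) (j : ℕ) : R := 1 - z ^ j - z ^ (6 * j)

def sB1 {R : Type*} [CommRing R] (z : R) : R := -((sg z 1) ^ 2 * (sg z 2 - sg z 3))
def sB2 {R : Type*} [CommRing R] (z : R) : R := -((sg z 2) ^ 2 * (sg z 3 - sg z 1))
def sB3 {R : Type*} [CommRing R] (z : R) : R := -((sg z 3) ^ 2 * (sg z 1 - sg z 2))

section SgLemmas
variable {R : Type*} [CommRing R] {z : R}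
  (hz : z ^ 6 + z ^ 5 + z ^ 4 + z ^ 3 + z ^ 2 + z + 1 = 0)
include hz

lemma zpow7 : z ^ 7 = 1 := by linear_combination (z - 1) * hz

lemma sg_cp1 : (sg z 1) ^ 3 = 4 * (sg z 1) ^ 2 - 3 * (sg z 1) - 1 := by
  simp only [sg, sB1, sB2, sB3]
  linear_combination (((1 : R) + (1 : R) * z + (-3 : R) * z ^ 2 + (1 : R) * z ^ 4 + (2 : R) * z ^ 6 + (-3 : R) * z ^ 7 + (1 : R) * z ^ 11 + (-1 : R) * z ^ 12)) * hz

lemma sg_cp2 : (sg z 2) ^ 3 = 4 * (sg z 2) ^ 2 - 3 * (sg z 2) - 1 := by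
  simp only [sg, sB1, sB2, sB3]
  linear_combination (((1 : R) + (-1 : R) * z + (2 : R) * z ^ 2 + (-2 : R) * z ^ 3 + (-1 : R) * z ^ 4 + (1 : R) * z ^ 5 + (-1 : R) * z ^ 6 + (2 : R) * z ^ 7 + (-1 : R) * z ^ 8 + (2 : R) * z ^ 9 + (-2 : R) * z ^ 10 + (-1 : R) * z ^ 11 + (3 : R) * z ^ 12 + (-3 : R) * z ^ 13 + (1 : R) * z ^ 15 + (-1 : R) * z ^ 16 + (1 : R) * z ^ 17 + (-1 : R) * z ^ 18 + (3 : R) * z ^ 19 + (-3 : R) * z ^ 20 + (1 : R) * z ^ 22 + (-1 : R) * z ^ 23 + (1 : R) * z ^ 29 + (-1 : R) * z ^ 30)) * hz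

lemma sg_cp3 : (sg z 3) ^ 3 = 4 * (sg z 3) ^ 2 - 3 * (sg z 3) - 1 := by
  simp only [sg, sB1, sB2, sB3]
  linear_combination (((1 : R) + (-1 : R) * z + (2 : R) * z ^ 3 + (-2 : R) * z ^ 4 + (-1 : R) * z ^ 6 + (2 : R) * z ^ 7 + (-1 : R) * z ^ 8 + (-1 : R) * z ^ 9 + (3 : R) * z ^ 10 + (-2 : R) * z ^ 11 + (-1 : R) * z ^ 13 + (2 : R) * z ^ 14 + (-1 : R) * z ^ 15 + (-1 : R) * z ^ 16 + (3 : R) * z ^ 17 + (-2 : R) * z ^ 19 + (-1 : R) * z ^ 20 + (1 : R) * z ^ 22 + (-1 : R) * z ^ 23 + (3 : R) * z ^ 25 + (-2 : R) * z ^ 26 + (-1 : R) * z ^ 27 + (1 : R) * z ^ 29 + (-1 : R) * z ^ 30 + (3 : R) * z ^ 32 + (-2 : R) * z ^ 33 + (-1 : R) * z ^ 34 + (1 : R) * z ^ 40 + (-1 : R) * z ^ 41 + (1 : R) * z ^ 47 + (-1 : R) * z ^ 48)) * hz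

lemma sg_sprod : sg z 1 * sg z 2 * sg z 3 = -1 := by
  simp only [sg, sB1, sB2, sB3]
  linear_combination (((2 : R) + (-3 : R) * z + (1 : R) * z ^ 3 + (1 : R) * z ^ 4 + (-3 : R) * z ^ 6 + (4 : R) * z ^ 7 + (-2 : R) * z ^ 8 + (-1 : R) * z ^ 13 + (3 : R) * z ^ 14 + (-1 : R) * z ^ 15 + (-2 : R) * z ^ 16 + (1 : R) * z ^ 17 + (1 : R) * z ^ 19 + (-1 : R) * z ^ 20 + (1 : R) * z ^ 22 + (-2 : R) * z ^ 23 + (2 : R) * z ^ 24 + (-1 : R) * z ^ 25 + (1 : R) * z ^ 29 + (-1 : R) * z ^ 30)) * hz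

lemma sg_base0 : sB1 z + sB2 z + sB3 z = 7 := by
  simp only [sg, sB1, sB2, sB3]
  linear_combination (((-7 : R) + (7 : R) * z + (1 : R) * z ^ 4 + (-3 : R) * z ^ 5 + (2 : R) * z ^ 6 + (-5 : R) * z ^ 7 + (4 : R) * z ^ 8 + (3 : R) * z ^ 9 + (-5 : R) * z ^ 10 + (4 : R) * z ^ 11 + (-2 : R) * z ^ 12 + (1 : R) * z ^ 13 + (-3 : R) * z ^ 14 + (-1 : R) * z ^ 15 + (6 : R) * z ^ 16 + (-3 : R) * z ^ 17 + (1 : R) * z ^ 18 + (1 : R) * z ^ 19 + (-4 : R) * z ^ 20 + (2 : R) * z ^ 22 + (1 : R) * z ^ 23 + (-3 : R) * z ^ 25 + (4 : R) * z ^ 26 + (-1 : R) * z ^ 27 + (-3 : R) * z ^ 28 + (2 : R) * z ^ 29 + (-1 : R) * z ^ 30 + (2 : R) * z ^ 31 + (-1 : R) * z ^ 32 + (1 : R) * z ^ 34 + (-3 : R) * z ^ 35 + (2 : R) * z ^ 36 + (1 : R) * z ^ 41 + (-1 : R) * z ^ 42)) * hz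

lemma sg_base1 : sB1 z * sg z 1 + sB2 z * sg z 2 + sB3 z * sg z 3 = 28 := by
  simp only [sg, sB1, sB2, sB3]
  linear_combination (((-28 : R) + (28 : R) * z + (3 : R) * z ^ 4 + (-10 : R) * z ^ 5 + (8 : R) * z ^ 6 + (-22 : R) * z ^ 7 + (18 : R) * z ^ 8 + (8 : R) * z ^ 9 + (-18 : R) * z ^ 10 + (20 : R) * z ^ 11 + (-10 : R) * z ^ 12 + (4 : R) * z ^ 13 + (-16 : R) * z ^ 14 + (-2 : R) * z ^ 15 + (25 : R) * z ^ 16 + (-12 : R) * z ^ 17 + (8 : R) * z ^ 18 + (-4 : R) * z ^ 19 + (-12 : R) * z ^ 20 + (7 : R) * z ^ 22 + (7 : R) * z ^ 23 + (-4 : R) * z ^ 24 + (-9 : R) * z ^ 25 + (17 : R) * z ^ 26 + (-6 : R) * z ^ 27 + (-12 : R) * z ^ 28 + (4 : R) * z ^ 29 + (9 : R) * z ^ 31 + (-3 : R) * z ^ 32 + (2 : R) * z ^ 33 + (-3 : R) * z ^ 34 + (-9 : R) * z ^ 35 + (8 : R) * z ^ 36 + (2 : R) * z ^ 38 + (-1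 : R) * z ^ 39 + (3 : R) * z ^ 41 + (-5 : R) * z ^ 42 + (1 : R) * z ^ 43 + (-3 : R) * z ^ 44 + (2 : R) * z ^ 45 + (2 : R) * z ^ 46 + (-2 : R) * z ^ 49 + (1 : R) * z ^ 50 + (-1 : R) * z ^ 52 + (2 : R) * z ^ 53 + (-1 : R) * z ^ 54 + (-1 : R) * z ^ 59 + (1 : R) * z ^ 60)) * hz

lemma sg_base2 : sB1 z * sg z 1 ^ 2 + sB2 z * sg z 2 ^ 2 + sB3 z * sg z 3 ^ 2 = 91 := by
  simp only [sg, sB1, sB2, sB3]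
  linear_combination (((-91 : R) + (91 : R) * z + (6 : R) * z ^ 4 + (-22 : R) * z ^ 5 + (21 : R) * z ^ 6 + (-81 : R) * z ^ 7 + (70 : R) * z ^ 8 + (13 : R) * z ^ 9 + (-41 : R) * z ^ 10 + (61 : R) * z ^ 11 + (-37 : R) * z ^ 12 + (16 : R) * z ^ 13 + (-72 : R) * z ^ 14 + (22 : R) * z ^ 15 + (70 : R) * z ^ 16 + (-42 : R) * z ^ 17 + (38 : R) * z ^ 18 + (-36 : R) * z ^ 19 + (-14 : R) * z ^ 20 + (-14 : R) * z ^ 21 + (23 : R) * z ^ 22 + (33 : R) * z ^ 23 + (-33 : R) * z ^ 24 + (-1 : R) * z ^ 25 + (38 : R) * z ^ 26 + (-21 : R) * z ^ 27 + (-35 : R) * z ^ 28 + (-3 : R) * z ^ 29 + (27 : R) * z ^ 30 + (17 : R) * z ^ 31 + (-5 : R) * z ^ 32 + (12 : R) * z ^ 33 + (-31 : R) * z ^ 34 + (-17 : R) * z ^ 35 + (18 : R) * z ^ 36 + (12 : R) * z ^ 37 + (5 : R) * z ^ 38 + (-11 : R) * z ^ 39 + (12 : R) * z ^ 40 + (-3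 : R) * z ^ 41 + (-18 : R) * z ^ 42 + (9 : R) * z ^ 43 + (-16 : R) * z ^ 44 + (15 : R) * z ^ 45 + (7 : R) * z ^ 46 + (6 : R) * z ^ 47 + (-3 : R) * z ^ 48 + (-19 : R) * z ^ 49 + (10 : R) * z ^ 50 + (-3 : R) * z ^ 51 + (2 : R) * z ^ 52 + (7 : R) * z ^ 53 + (-5 : R) * z ^ 54 + (4 : R) * z ^ 55 + (-7 : R) * z ^ 56 + (2 : R) * z ^ 57 + (1 : R) * z ^ 58 + (-6 : R) * z ^ 59 + (7 : R) * z ^ 60 + (-1 : R) * z ^ 61 + (4 : R) * z ^ 62 + (-3 : R) * z ^ 63 + (-2 : R) * z ^ 64 + (1 : R) * z ^ 65 + (-1 : R) * z ^ 66 + (2 : R) * z ^ 67 + (-1 : R) * z ^ 68 + (1 : R) * z ^ 70 + (-2 : R) * z ^ 71 + (1 : R) * z ^ 72 + (1 : R) * z ^ 77 + (-1 : R) * z ^ 78)) * hz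

lemma sg_fold4 : sg z 4 = sg z 3 := by
  simp only [sg, sB1, sB2, sB3]
  linear_combination (((1 : R) * z ^ 3 + (-2 : R) * z ^ 4 + (1 : R) * z ^ 5 + (1 : R) * z ^ 10 + (-2 : R) * z ^ 11 + (1 : R) * z ^ 12 + (1 : R) * z ^ 17 + (-1 : R) * z ^ 18)) * hz

lemma sg_fold5 : sg z 5 = sg z 2 := by
  simp only [sg, sB1, sB2, sB3]
  linear_combination (((1 : R) * z ^ 2 + (-1 : R) * z ^ 3 + (-1 : R) * z ^ 5 + (1 : R) * z ^ 6 + (1 : R) * z ^ 9 + (-1 : R) * z ^ 10 + (1 : R) * z ^ 16 + (-1 : R) * z ^ 17 + (1 : R) * z ^ 23 + (-1 : R) * z ^ 24)) * hz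

lemma sg_fold6 : sg z 6 = sg z 1 := by
  simp only [sg, sB1, sB2, sB3]
  linear_combination (((1 : R) * z + (-1 : R) * z ^ 2 + (1 : R) * z ^ 8 + (-1 : R) * z ^ 9 + (1 : R) * z ^ 15 + (-1 : R) * z ^ 16 + (1 : R) * z ^ 22 + (-1 : R) * z ^ 23 + (1 : R) * z ^ 29 + (-1 : R) * z ^ 30)) * hz

lemma sg_f1e0 : sB1 z * sg z 1 * (sg z 2 * sg z 3) ^ 2 + sB2 z * sg z 2 * (sg z 1 * sg z 3) ^ 2 + sB3 z * sg z 3 * (sg z 1 * sg z 2) ^ 2 = 0 := by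
  simp only [sg, sB1, sB2, sB3]
  linear_combination (((0 : R))) * hz

lemma sg_f1e1 : -(sB1 z * sg z 1 * (sg z 2 * sg z 3)) + -(sB2 z * sg z 2 * (sg z 1 * sg z 3)) + -(sB3 z * sg z 3 * (sg z 1 * sg z 2)) = 7 := by
  simp only [sg, sB1, sB2, sB3]
  linear_combination (((-7 : R) + (7 : R) * z + (-1 : R) * z ^ 4 + (4 : R) * z ^ 5 + (-4 : R) * z ^ 6 + (-10 : R) * z ^ 7 + (13 : R) * z ^ 8 + (-2 : R) * z ^ 9 + (8 : R) * z ^ 10 + (-16 : R) * z ^ 11 + (5 : R) * z ^ 12 + (7 : R) * z ^ 13 + (-15 : R) * z ^ 14 + (24 : R) * z ^ 15 + (-23 : R) * z ^ 16 + (8 : R) * z ^ 17 + (2 : R) * z ^ 18 + (16 : R) * z ^ 20 + (-39 : R) * z ^ 21 + (20 : R) * z ^ 22 + (8 : R) * z ^ 23 + (-6 : R) * z ^ 24 + (18 : R) * z ^ 25 + (-39 : R) * z ^ 26 + (23 : R) * z ^ 27 + (-5 : R) * z ^ 28 + (5 : R) * z ^ 29 + (20 : R) * z ^ 30 + (-48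 : R) * z ^ 31 + (31 : R) * z ^ 32 + (-5 : R) * z ^ 33 + (7 : R) * z ^ 34 + (-31 : R) * z ^ 36 + (35 : R) * z ^ 37 + (-11 : R) * z ^ 38 + (2 : R) * z ^ 39 + (11 : R) * z ^ 40 + (-31 : R) * z ^ 41 + (19 : R) * z ^ 42 + (-3 : R) * z ^ 43 + (10 : R) * z ^ 44 + (3 : R) * z ^ 45 + (-32 : R) * z ^ 46 + (28 : R) * z ^ 47 + (-3 : R) * z ^ 48 + (-6 : R) * z ^ 49 + (5 : R) * z ^ 50 + (-14 : R) * z ^ 51 + (19 : R) * z ^ 52 + (-8 : R) * z ^ 53 + (8 : R) * z ^ 55 + (-20 : R) * z ^ 56 + (13 : R) * z ^ 57 + (1 : R) * z ^ 58 + (-1 : R) * z ^ 59 + (1 : R) * z ^ 60 + (-9 : R) * z ^ 61 + (12 : R) * z ^ 62 + (-4 : R) * z ^ 63 + (-4 : R) * z ^ 64 + (5 : R) * z ^ 65 + (-5 : R) * z ^ 66 + (5 : R) * z ^ 67 + (-2 : R) * z ^ 68 + (1 : R) * z ^ 70 + (-4 : R) * z ^ 71 + (4 : R) * z ^ 72 +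 (-1 : R) * z ^ 73 + (1 : R) * z ^ 77 + (-1 : R) * z ^ 78)) * hz

lemma sg_f1e2 : sB1 z * sg z 1 + sB2 z * sg z 2 + sB3 z * sg z 3 = 28 := by
  simp only [sg, sB1, sB2, sB3]
  linear_combination (((-28 : R) + (28 : R) * z + (3 : R) * z ^ 4 + (-10 : R) * z ^ 5 + (8 : R) * z ^ 6 + (-22 : R) * z ^ 7 + (18 : R) * z ^ 8 + (8 : R) * z ^ 9 + (-18 : R) * z ^ 10 + (20 : R) * z ^ 11 + (-10 : R) * z ^ 12 + (4 : R) * z ^ 13 + (-16 : R) * z ^ 14 + (-2 : R) * z ^ 15 + (25 : R) * z ^ 16 + (-12 : R) * z ^ 17 + (8 : R) * z ^ 18 + (-4 : R) * z ^ 19 + (-12 : R) * z ^ 20 + (7 : R) * z ^ 22 + (7 : R) * z ^ 23 + (-4 : R) * z ^ 24 + (-9 : R) * z ^ 25 + (17 : R) * z ^ 26 + (-6 : R) * z ^ 27 + (-12 : R) * z ^ 28 + (4 : R) * z ^ 29 + (9 : R) * z ^ 31 + (-3 : R) * z ^ 32 + (2 : R) * z ^ 33 + (-3 : R) * z ^ 34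 + (-9 : R) * z ^ 35 + (8 : R) * z ^ 36 + (2 : R) * z ^ 38 + (-1 : R) * z ^ 39 + (3 : R) * z ^ 41 + (-5 : R) * z ^ 42 + (1 : R) * z ^ 43 + (-3 : R) * z ^ 44 + (2 : R) * z ^ 45 + (2 : R) * z ^ 46 + (-2 : R) * z ^ 49 + (1 : R) * z ^ 50 + (-1 : R) * z ^ 52 + (2 : R) * z ^ 53 + (-1 : R) * z ^ 54 + (-1 : R) * z ^ 59 + (1 : R) * z ^ 60)) * hz

lemma sg_f2e0 : sB1 z * sg z 2 * (sg z 2 * sg z 3) ^ 2 + sB2 z * sg z 3 * (sg z 1 * sg z 3) ^ 2 + sB3 z * sg z 1 * (sg z 1 * sg z 2) ^ 2 = -7 := by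
  simp only [sg, sB1, sB2, sB3]
  linear_combination (((7 : R) + (-7 : R) * z + (-1 : R) * z ^ 2 + (4 : R) * z ^ 3 + (-4 : R) * z ^ 4 + (-1 : R) * z ^ 5 + (-2 : R) * z ^ 6 + (13 : R) * z ^ 7 + (7 : R) * z ^ 8 + (-25 : R) * z ^ 9 + (-3 : R) * z ^ 10 + (3 : R) * z ^ 11 + (30 : R) * z ^ 12 + (3 : R) * z ^ 13 + (-49 : R) * z ^ 14 + (10 : R) * z ^ 15 + (21 : R) * z ^ 16 + (21 : R) * z ^ 17 + (-15 : R) * z ^ 18 + (-51 : R) * z ^ 19 + (43 : R) * z ^ 20 + (-9 : R) * z ^ 21 + (30 : R) * z ^ 22 + (11 : R) * z ^ 23 + (-75 : R) * z ^ 24 + (22 : R) * z ^ 25 + (-15 : R) * z ^ 26 + (108 : R) * z ^ 27 + (-44 : R) * z ^ 28 + (-103 : R) * z ^ 29 + (58 : R) * z ^ 30 + (8 : R) * z ^ 31 + (78 : R) * z ^ 32 + (-68 : R) * z ^ 33 + (-64 : R) * z ^ 34 + (80 : R) * z ^ 35 + (-71 : R) * z ^ 36 + (127 : R) * z ^ 37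 + (-58 : R) * z ^ 38 + (-65 : R) * z ^ 39 + (34 : R) * z ^ 40 + (-47 : R) * z ^ 41 + (198 : R) * z ^ 42 + (-157 : R) * z ^ 43 + (-34 : R) * z ^ 44 + (33 : R) * z ^ 45 + (10 : R) * z ^ 46 + (103 : R) * z ^ 47 + (-138 : R) * z ^ 48 + (39 : R) * z ^ 49 + (3 : R) * z ^ 50 + (-47 : R) * z ^ 51 + (132 : R) * z ^ 52 + (-97 : R) * z ^ 53 + (16 : R) * z ^ 54 + (-42 : R) * z ^ 55 + (20 : R) * z ^ 56 + (129 : R) * z ^ 57 + (-166 : R) * z ^ 58 + (61 : R) * z ^ 59 + (-35 : R) * z ^ 60 + (41 : R) * z ^ 61 + (33 : R) * z ^ 62 + (-77 : R) * z ^ 63 + (67 : R) * z ^ 64 + (-67 : R) * z ^ 65 + (29 : R) * z ^ 66 + (43 : R) * z ^ 67 + (-49 : R) * z ^ 68 + (17 : R) * z ^ 69 + (-37 : R) * z ^ 70 + (46 : R) * z ^ 71 + (13 : R) * z ^ 72 + (-54 : R) * z ^ 73 + (39 : R) * z ^ 74 + (-31 : R) * z ^ 75 + (31 : R) * z ^ 76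 + (-8 : R) * z ^ 77 + (-9 : R) * z ^ 78 + (17 : R) * z ^ 79 + (-32 : R) * z ^ 80 + (28 : R) * z ^ 81 + (-5 : R) * z ^ 82 + (-5 : R) * z ^ 83 + (2 : R) * z ^ 84 + (-8 : R) * z ^ 85 + (16 : R) * z ^ 86 + (-7 : R) * z ^ 87 + (-4 : R) * z ^ 88 + (6 : R) * z ^ 89 + (-7 : R) * z ^ 90 + (7 : R) * z ^ 91 + (-3 : R) * z ^ 92 + (1 : R) * z ^ 94 + (-4 : R) * z ^ 95 + (5 : R) * z ^ 96 + (-2 : R) * z ^ 97 + (1 : R) * z ^ 101 + (-1 : R) * z ^ 102)) * hz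

lemma sg_f2e1 : -(sB1 z * sg z 2 * (sg z 2 * sg z 3)) + -(sB2 z * sg z 3 * (sg z 1 * sg z 3)) + -(sB3 z * sg z 1 * (sg z 1 * sg z 2)) = -14 := by
  simp only [sg, sB1, sB2, sB3]
  linear_combination (((14 : R) + (-14 : R) * z + (1 : R) * z ^ 2 + (-3 : R) * z ^ 3 + (2 : R) * z ^ 4 + (-2 : R) * z ^ 5 + (10 : R) * z ^ 6 + (7 : R) * z ^ 7 + (-26 : R) * z ^ 8 + (10 : R) * z ^ 9 + (1 : R) * z ^ 10 + (19 : R) * z ^ 11 + (-29 : R) * z ^ 12 + (2 : R) * z ^ 13 + (26 : R) * z ^ 14 + (-24 : R) * z ^ 15 + (22 : R) * z ^ 16 + (-24 : R) * z ^ 17 + (6 : R) * z ^ 18 + (-2 : R) * z ^ 19 + (-4 : R) * z ^ 20 + (60 : R) * z ^ 21 + (-72 : R) * z ^ 22 + (7 : R) * z ^ 23 + (8 : R) * z ^ 24 + (10 : R) * z ^ 25 + (31 : R) * z ^ 26 + (-73 : R) * z ^ 27 + (62 : R) * z ^ 28 + (-34 : R) * z ^ 29 + (4 : R) * z ^ 30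 + (38 : R) * z ^ 31 + (-55 : R) * z ^ 32 + (30 : R) * z ^ 33 + (-35 : R) * z ^ 34 + (52 : R) * z ^ 35 + (14 : R) * z ^ 36 + (-78 : R) * z ^ 37 + (47 : R) * z ^ 38 + (-22 : R) * z ^ 39 + (32 : R) * z ^ 40 + (-5 : R) * z ^ 41 + (-31 : R) * z ^ 42 + (43 : R) * z ^ 43 + (-49 : R) * z ^ 44 + (39 : R) * z ^ 45 + (-3 : R) * z ^ 46 + (-24 : R) * z ^ 47 + (15 : R) * z ^ 48 + (-15 : R) * z ^ 49 + (37 : R) * z ^ 50 + (-18 : R) * z ^ 51 + (-19 : R) * z ^ 52 + (18 : R) * z ^ 53 + (-10 : R) * z ^ 54 + (12 : R) * z ^ 55 + (-4 : R) * z ^ 56 + (-5 : R) * z ^ 57 + (7 : R) * z ^ 58 + (-11 : R) * z ^ 59 + (13 : R) * z ^ 60 + (-4 : R) * z ^ 61 + (-7 : R) * z ^ 62 + (4 : R) * z ^ 63 + (2 : R) * z ^ 64 + (3 : R) * z ^ 65 + (-4 : R) * z ^ 66 + (-2 : R) * z ^ 67 + (2 : R) * z ^ 68 + (-1 : R) *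 z ^ 70 + (2 : R) * z ^ 71 + (-2 : R) * z ^ 72 + (1 : R) * z ^ 73 + (-1 : R) * z ^ 77 + (1 : R) * z ^ 78)) * hz

lemma sg_f2e2 : sB1 z * sg z 2 + sB2 z * sg z 3 + sB3 z * sg z 1 = -21 := by
  simp only [sg, sB1, sB2, sB3]
  linear_combination (((21 : R) + (-21 : R) * z + (-1 : R) * z ^ 2 + (2 : R) * z ^ 3 + (2 : R) * z ^ 5 + (-11 : R) * z ^ 6 + (30 : R) * z ^ 7 + (-20 : R) * z ^ 8 + (1 : R) * z ^ 9 + (-10 : R) * z ^ 11 + (12 : R) * z ^ 12 + (-13 : R) * z ^ 13 + (31 : R) * z ^ 14 + (-17 : R) * z ^ 15 + (-12 : R) * z ^ 16 + (13 : R) * z ^ 17 + (-11 : R) * z ^ 18 + (13 : R) * z ^ 19 + (-15 : R) * z ^ 20 + (11 : R) * z ^ 21 + (7 : R) * z ^ 22 + (-15 : R) * z ^ 23 + (14 : R) * z ^ 24 + (-14 : R) * z ^ 25 + (3 : R) * z ^ 26 + (3 : R) * z ^ 28 + (11 : R) * z ^ 29 + (-15 : R) * z ^ 30 + (4 : R)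 * z ^ 31 + (-2 : R) * z ^ 32 + (2 : R) * z ^ 33 + (-1 : R) * z ^ 34 + (-3 : R) * z ^ 35 + (7 : R) * z ^ 36 + (-4 : R) * z ^ 37 + (3 : R) * z ^ 38 + (-1 : R) * z ^ 39 + (-2 : R) * z ^ 40 + (3 : R) * z ^ 43 + (-2 : R) * z ^ 44 + (1 : R) * z ^ 46 + (-2 : R) * z ^ 47 + (1 : R) * z ^ 48 + (1 : R) * z ^ 53 + (-1 : R) * z ^ 54)) * hz

lemma sg_f3e0 : sB1 z * sg z 3 * (sg z 2 * sg z 3) ^ 2 + sB2 z * sg z 1 * (sg z 1 * sg z 3) ^ 2 + sB3 z * sg z 2 * (sg z 1 * sg z 2) ^ 2 = 7 := by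
  simp only [sg, sB1, sB2, sB3]
  linear_combination (((-7 : R) + (7 : R) * z + (1 : R) * z ^ 2 + (-4 : R) * z ^ 3 + (4 : R) * z ^ 4 + (1 : R) * z ^ 5 + (2 : R) * z ^ 6 + (-13 : R) * z ^ 7 + (-7 : R) * z ^ 8 + (25 : R) * z ^ 9 + (3 : R) * z ^ 10 + (-3 : R) * z ^ 11 + (-30 : R) * z ^ 12 + (-3 : R) * z ^ 13 + (49 : R) * z ^ 14 + (-10 : R) * z ^ 15 + (-21 : R) * z ^ 16 + (-21 : R) * z ^ 17 + (15 : R) * z ^ 18 + (51 : R) * z ^ 19 + (-43 : R) * z ^ 20 + (9 : R) * z ^ 21 + (-30 : R) * z ^ 22 + (-11 : R) * z ^ 23 + (75 : R) * z ^ 24 + (-22 : R) * z ^ 25 + (15 : R) * z ^ 26 + (-108 : R) * z ^ 27 + (44 : R) * z ^ 28 + (103 : R) * z ^ 29 + (-58 : R) * z ^ 30 + (-8 : R) * z ^ 31 + (-78 : R) * z ^ 32 + (68 : R) * z ^ 33 + (64 : R) * z ^ 34 + (-80 : R) * z ^ 35 + (71 : R) * z ^ 36 + (-127 : R) * z ^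 37 + (58 : R) * z ^ 38 + (65 : R) * z ^ 39 + (-34 : R) * z ^ 40 + (47 : R) * z ^ 41 + (-198 : R) * z ^ 42 + (157 : R) * z ^ 43 + (34 : R) * z ^ 44 + (-33 : R) * z ^ 45 + (-10 : R) * z ^ 46 + (-103 : R) * z ^ 47 + (138 : R) * z ^ 48 + (-39 : R) * z ^ 49 + (-3 : R) * z ^ 50 + (47 : R) * z ^ 51 + (-132 : R) * z ^ 52 + (97 : R) * z ^ 53 + (-16 : R) * z ^ 54 + (42 : R) * z ^ 55 + (-20 : R) * z ^ 56 + (-129 : R) * z ^ 57 + (166 : R) * z ^ 58 + (-61 : R) * z ^ 59 + (35 : R) * z ^ 60 + (-41 : R) * z ^ 61 + (-33 : R) * z ^ 62 + (77 : R) * z ^ 63 + (-67 : R) * z ^ 64 + (67 : R) * z ^ 65 + (-29 : R) * z ^ 66 + (-43 : R) * z ^ 67 + (49 : R) * z ^ 68 + (-17 : R) * z ^ 69 + (37 : R) * z ^ 70 + (-46 : R) * z ^ 71 + (-13 : R) * z ^ 72 + (54 : R) * z ^ 73 + (-39 : R) * z ^ 74 + (31 : R) * z ^ 75 + (-31 :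 R) * z ^ 76 + (8 : R) * z ^ 77 + (9 : R) * z ^ 78 + (-17 : R) * z ^ 79 + (32 : R) * z ^ 80 + (-28 : R) * z ^ 81 + (5 : R) * z ^ 82 + (5 : R) * z ^ 83 + (-2 : R) * z ^ 84 + (8 : R) * z ^ 85 + (-16 : R) * z ^ 86 + (7 : R) * z ^ 87 + (4 : R) * z ^ 88 + (-6 : R) * z ^ 89 + (7 : R) * z ^ 90 + (-7 : R) * z ^ 91 + (3 : R) * z ^ 92 + (-1 : R) * z ^ 94 + (4 : R) * z ^ 95 + (-5 : R) * z ^ 96 + (2 : R) * z ^ 97 + (-1 : R) * z ^ 101 + (1 : R) * z ^ 102)) * hz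

lemma sg_f3e1 : -(sB1 z * sg z 3 * (sg z 2 * sg z 3)) + -(sB2 z * sg z 1 * (sg z 1 * sg z 3)) + -(sB3 z * sg z 2 * (sg z 1 * sg z 2)) = 7 := by
  simp only [sg, sB1, sB2, sB3]
  linear_combination (((-7 : R) + (7 : R) * z + (-1 : R) * z ^ 2 + (3 : R) * z ^ 3 + (-1 : R) * z ^ 4 + (-2 : R) * z ^ 5 + (-6 : R) * z ^ 6 + (3 : R) * z ^ 7 + (13 : R) * z ^ 8 + (-8 : R) * z ^ 9 + (-9 : R) * z ^ 10 + (-3 : R) * z ^ 11 + (24 : R) * z ^ 12 + (-9 : R) * z ^ 13 + (-11 : R) * z ^ 14 + (1 : R) * z ^ 16 + (16 : R) * z ^ 17 + (-8 : R) * z ^ 18 + (2 : R) * z ^ 19 + (-12 : R) * z ^ 20 + (-21 : R) * z ^ 21 + (52 : R) * z ^ 22 + (-15 : R) * z ^ 23 + (-2 : R) * z ^ 24 + (-28 : R) * z ^ 25 + (8 : R) * z ^ 26 + (50 : R) * z ^ 27 + (-57 : R) * z ^ 28 + (29 : R) * z ^ 29 + (-24 : R) * z ^ 30 + (10 : R)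 * z ^ 31 + (24 : R) * z ^ 32 + (-25 : R) * z ^ 33 + (28 : R) * z ^ 34 + (-52 : R) * z ^ 35 + (17 : R) * z ^ 36 + (43 : R) * z ^ 37 + (-36 : R) * z ^ 38 + (20 : R) * z ^ 39 + (-43 : R) * z ^ 40 + (36 : R) * z ^ 41 + (12 : R) * z ^ 42 + (-40 : R) * z ^ 43 + (39 : R) * z ^ 44 + (-42 : R) * z ^ 45 + (35 : R) * z ^ 46 + (-4 : R) * z ^ 47 + (-12 : R) * z ^ 48 + (21 : R) * z ^ 49 + (-42 : R) * z ^ 50 + (32 : R) * z ^ 51 + (-10 : R) * z ^ 53 + (10 : R) * z ^ 54 + (-20 : R) * z ^ 55 + (24 : R) * z ^ 56 + (-8 : R) * z ^ 57 + (-8 : R) * z ^ 58 + (12 : R) * z ^ 59 + (-14 : R) * z ^ 60 + (13 : R) * z ^ 61 + (-5 : R) * z ^ 62 + (2 : R) * z ^ 64 + (-8 : R) * z ^ 65 + (9 : R) * z ^ 66 + (-3 : R) * z ^ 67 + (2 : R) * z ^ 71 + (-2 : R) * z ^ 72)) * hz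

lemma sg_f3e2 : sB1 z * sg z 3 + sB2 z * sg z 1 + sB3 z * sg z 2 = 21 := by
  simp only [sg, sB1, sB2, sB3]
  linear_combination (((-21 : R) + (21 : R) * z + (1 : R) * z ^ 2 + (-2 : R) * z ^ 3 + (-2 : R) * z ^ 5 + (11 : R) * z ^ 6 + (-30 : R) * z ^ 7 + (20 : R) * z ^ 8 + (-1 : R) * z ^ 9 + (10 : R) * z ^ 11 + (-12 : R) * z ^ 12 + (13 : R) * z ^ 13 + (-31 : R) * z ^ 14 + (17 : R) * z ^ 15 + (12 : R) * z ^ 16 + (-13 : R) * z ^ 17 + (11 : R) * z ^ 18 + (-13 : R) * z ^ 19 + (15 : R) * z ^ 20 + (-11 : R) * z ^ 21 + (-7 : R) * z ^ 22 + (15 : R) * z ^ 23 + (-14 : R) * z ^ 24 + (14 : R) * z ^ 25 + (-3 : R) * z ^ 26 + (-3 : R) * z ^ 28 + (-11 : R) * z ^ 29 + (15 : R) * z ^ 30 + (-4 : R) * z ^ 31 + (2 : R) * z ^ 32 + (-2 : R) * z ^ 33 + (1 : R) * z ^ 34 + (3 : R) * z ^ 35 + (-7 : R) * z ^ 36 +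 (4 : R) * z ^ 37 + (-3 : R) * z ^ 38 + (1 : R) * z ^ 39 + (2 : R) * z ^ 40 + (-3 : R) * z ^ 43 + (2 : R) * z ^ 44 + (-1 : R) * z ^ 46 + (2 : R) * z ^ 47 + (-1 : R) * z ^ 48 + (-1 : R) * z ^ 53 + (1 : R) * z ^ 54)) * hz

end SgLemmas

section SgMore
variable {R : Type*} [CommRing R] {z : R}

lemma sg_gsum (hz : z ^ 6 + z ^ 5 + z ^ 4 + z ^ 3 + z ^ 2 + z + 1 = 0) (m : ℕ) :
    (7 : R) * ((G2s m : ℤ) : R) =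
      sB1 z * sg z 1 ^ m + sB2 z * sg z 2 ^ m + sB3 z * sg z 3 ^ m := by
  induction m using Nat.strong_induction_on with
  | _ m ih =>
    match m with
    | 0 => simp only [G2s]; push_cast; linear_combination - sg_base0 hz
    | 1 => simp only [G2s]; push_cast; linear_combination - sg_base1 hz
    | 2 => simp only [G2s]; push_cast; linear_combination - sg_base2 hz
    | (n + 3) =>
      have h0 := ih n (by omega)
      have h1 := ih (n + 1) (by omega)
      have h2 := ih (n + 2) (by omega)
      have c1 := sg_cp1 hz
      have c2 := sg_cp2 hz
      have c3 := sg_cp3 hz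
      have hG : G2s (n + 3) = 4 * G2s (n + 2) - 3 * G2s (n + 1) - G2s n := rfl
      rw [hG]
      simp only [pow_succ] at h1 h2 ⊢
      push_cast
      linear_combination 4 * h2 - 3 * h1 - h0 - (sB1 z * sg z 1 ^ n) * c1 -
        (sB2 z * sg z 2 ^ n) * c2 - (sB3 z * sg z 3 ^ n) * c3

lemma sg_pow_mod (h1 : z ^ 7 = 1) (m : ℕ) : z ^ m = z ^ (m % 7) := by
  conv_lhs => rw [← Nat.div_add_mod m 7]
  rw [pow_add, pow_mul, h1, one_pow, one_mul]

lemma sg_mod (h1 : z ^ 7 = 1) (j : ℕ) : sg z j = sg z (j % 7) := by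
  unfold sg
  rw [sg_pow_mod h1 j, sg_pow_mod h1 (6 * j), sg_pow_mod h1 (6 * (j % 7)),
    Nat.mul_mod 6 j 7, Nat.mul_mod 6 (j % 7) 7]

lemma sg_frob {p : ℕ} [Fact p.Prime] [CharP R p] (z : R) (N j : ℕ) :
    sg z j ^ (p ^ N) = sg z (j * p ^ N) := by
  unfold sg
  rw [sub_pow_char_pow, sub_pow_char_pow, one_pow, ← pow_mul, ← pow_mul]
  ring_nf

end SgMore

section ClassEval
variable {R : Type*} [CommRing R] {z : R}

lemma sg_Gclass (hz : z ^ 6 + z ^ 5 + z ^ 4 + z ^ 3 + z ^ 2 + z + 1 = 0)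
    (P : ℕ) (hP : 2 ≤ P) {i1 i2 i3 : ℕ}
    (hf1 : sg z 1 ^ P = sg z i1) (hf2 : sg z 2 ^ P = sg z i2)
    (hf3 : sg z 3 ^ P = sg z i3) :
    ((7 : R) * ((G2s (P - 2) : ℤ) : R) =
      sB1 z * sg z i1 * (sg z 2 * sg z 3) ^ 2 + sB2 z * sg z i2 * (sg z 1 * sg z 3) ^ 2
        + sB3 z * sg z i3 * (sg z 1 * sg z 2) ^ 2) ∧
    ((7 : R) * ((G2s (P - 1) : ℤ) : R) =
      -(sB1 z * sg z i1 * (sg z 2 * sg z 3)) + -(sB2 z * sg z i2 * (sg z 1 * sg z 3))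
        + -(sB3 z * sg z i3 * (sg z 1 * sg z 2))) ∧
    ((7 : R) * ((G2s P : ℤ) : R) =
      sB1 z * sg z i1 + sB2 z * sg z i2 + sB3 z * sg z i3) := by
  have hsp := sg_sprod hz
  have hp1 : sg z 1 ^ (P - 2) * sg z 1 ^ 2 = sg z i1 := by
    rw [← pow_add, Nat.sub_add_cancel hP]; exact hf1
  have hp2 : sg z 2 ^ (P - 2) * sg z 2 ^ 2 = sg z i2 := by
    rw [← pow_add, Nat.sub_add_cancel hP]; exact hf2
  have hp3 : sg z 3 ^ (P - 2) * sg z 3 ^ 2 = sg z i3 := by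
    rw [← pow_add, Nat.sub_add_cancel hP]; exact hf3
  have hq1 : sg z 1 ^ (P - 1) * sg z 1 = sg z i1 := by
    rw [← pow_succ, Nat.sub_add_cancel (by omega)]; exact hf1
  have hq2 : sg z 2 ^ (P - 1) * sg z 2 = sg z i2 := by
    rw [← pow_succ, Nat.sub_add_cancel (by omega)]; exact hf2
  have hq3 : sg z 3 ^ (P - 1) * sg z 3 = sg z i3 := by
    rw [← pow_succ, Nat.sub_add_cancel (by omega)]; exact hf3
  have he01 : sg z 1 ^ (P - 2) = sg z i1 * (sg z 2 * sg z 3) ^ 2 := by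
    linear_combination ((sg z 2 * sg z 3) ^ 2) * hp1 +
      (sg z 1 ^ (P - 2) * (1 - sg z 1 * sg z 2 * sg z 3)) * hsp
  have he02 : sg z 2 ^ (P - 2) = sg z i2 * (sg z 1 * sg z 3) ^ 2 := by
    linear_combination ((sg z 1 * sg z 3) ^ 2) * hp2 +
      (sg z 2 ^ (P - 2) * (1 - sg z 1 * sg z 2 * sg z 3)) * hsp
  have he03 : sg z 3 ^ (P - 2) = sg z i3 * (sg z 1 * sg z 2) ^ 2 := by
    linear_combination ((sg z 1 * sg z 2) ^ 2) * hp3 +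
      (sg z 3 ^ (P - 2) * (1 - sg z 1 * sg z 2 * sg z 3)) * hsp
  have he11 : sg z 1 ^ (P - 1) = -(sg z i1 * (sg z 2 * sg z 3)) := by
    linear_combination (-(sg z 2 * sg z 3)) * hq1 + (sg z 1 ^ (P - 1)) * hsp
  have he12 : sg z 2 ^ (P - 1) = -(sg z i2 * (sg z 1 * sg z 3)) := by
    linear_combination (-(sg z 1 * sg z 3)) * hq2 + (sg z 2 ^ (P - 1)) * hsp
  have he13 : sg z 3 ^ (P - 1) = -(sg z i3 * (sg z 1 * sg z 2)) := by
    linear_combination (-(sg z 1 * sg z 2)) * hq3 + (sg z 3 ^ (P - 1)) * hsp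
  refine ⟨?_, ?_, ?_⟩
  · rw [sg_gsum hz (P - 2), he01, he02, he03]; ring
  · rw [sg_gsum hz (P - 1), he11, he12, he13]; ring
  · rw [sg_gsum hz P, hf1, hf2, hf3]
end ClassEval

lemma Gvals (p : ℕ) (hp : p.Prime) (hp7 : p ≠ 7) (a : ℕ) (ha : 0 < a) :
    ((p ^ a % 7 = 1 ∨ p ^ a % 7 = 6 →
      ((G2s (p ^ a - 2) : ℤ) : ZMod p) = 0 ∧ ((G2s (p ^ a - 1) : ℤ) : ZMod p) = 1 ∧
        ((G2s (p ^ a) : ℤ) : ZMod p) = 4) ∧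
     (p ^ a % 7 = 2 ∨ p ^ a % 7 = 5 →
      ((G2s (p ^ a - 2) : ℤ) : ZMod p) = -1 ∧ ((G2s (p ^ a - 1) : ℤ) : ZMod p) = -2 ∧
        ((G2s (p ^ a) : ℤ) : ZMod p) = -3) ∧
     (p ^ a % 7 = 3 ∨ p ^ a % 7 = 4 →
      ((G2s (p ^ a - 2) : ℤ) : ZMod p) = 1 ∧ ((G2s (p ^ a - 1) : ℤ) : ZMod p) = 1 ∧
        ((G2s (p ^ a) : ℤ) : ZMod p) = 3)) := by
  haveI := Fact.mk hp
  set P := p ^ a with hPdef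
  have hP2 : 2 ≤ P := by
    have := hp.two_le
    calc 2 ≤ p := this
    _ ≤ p ^ a := Nat.le_self_pow (by omega) p
  set Φ : Polynomial (ZMod p) :=
    Polynomial.X ^ 6 + Polynomial.X ^ 5 + Polynomial.X ^ 4 + Polynomial.X ^ 3 +
      Polynomial.X ^ 2 + Polynomial.X + 1 with hΦ
  have hdeg : Φ.degree ≠ 0 := by
    rw [hΦ]
    have : (Polynomial.X ^ 6 + Polynomial.X ^ 5 + Polynomial.X ^ 4 + Polynomial.X ^ 3 +
      Polynomial.X ^ 2 + Polynomial.X + 1 : Polynomial (ZMod p)).degree = 6 := by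
      compute_degree!
    rw [this]; norm_num
  obtain ⟨z, hz'⟩ := Polynomial.Splits.exists_eval_eq_zero
    (Polynomial.SplittingField.splits Φ) (by rwa [Polynomial.degree_map])
  have hz : z ^ 6 + z ^ 5 + z ^ 4 + z ^ 3 + z ^ 2 + z + 1 = 0 := by
    simpa [hΦ, Polynomial.eval₂_add, Polynomial.eval₂_pow, Polynomial.eval₂_X,
      Polynomial.eval₂_one] using hz'
  haveI : CharP Φ.SplittingField p := charP_of_injective_algebraMap' (A := Φ.SplittingField) (ZMod p) p
  have h7 : z ^ 7 = 1 := zpow7 hz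
  have hfr : ∀ j : ℕ, sg z j ^ P = sg z (j * P % 7) := by
    intro j
    rw [hPdef, sg_frob, sg_mod h7]
  have hdvd : ¬ (7 ∣ P) := by
    intro hdvd
    have : (7:ℕ).Prime := by norm_num
    have h2 := this.dvd_of_dvd_pow (n := a) (m := p) hdvd
    rcases (Nat.prime_dvd_prime_iff_eq this hp).mp h2 with h
    exact hp7 h.symm
  have hrne : P % 7 ≠ 0 := by
    intro h; exact hdvd (Nat.dvd_of_mod_eq_zero h)
  have hrlt : P % 7 < 7 := Nat.mod_lt _ (by norm_num)
  have f7Z : (7 : ZMod p) ≠ 0 := by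
    have : ((7:ℕ) : ZMod p) ≠ 0 := by
      rw [Ne, ZMod.natCast_eq_zero_iff]
      intro hd
      exact hp7 ((Nat.prime_dvd_prime_iff_eq hp (by norm_num)).mp hd)
    simpa using this
  have f7F : (7 : Φ.SplittingField) ≠ 0 := by
    intro h
    apply f7Z
    apply (algebraMap (ZMod p) Φ.SplittingField).injective
    rw [map_ofNat, h, map_zero]
  have key : ∀ (m : ℕ) (c : ℤ), (7 : Φ.SplittingField) * ((G2s m : ℤ) : Φ.SplittingField) = 7 * ((c : ℤ) : Φ.SplittingField) →
      ((G2s m : ℤ) : ZMod p) = ((c : ℤ) : ZMod p) := by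
    intro m c h
    have h2 := mul_left_cancel₀ f7F h
    apply (algebraMap (ZMod p) Φ.SplittingField).injective
    rw [map_intCast, map_intCast]
    exact h2
  -- case split on P % 7
  have hcase : P % 7 = 1 ∨ P % 7 = 2 ∨ P % 7 = 3 ∨ P % 7 = 4 ∨ P % 7 = 5 ∨ P % 7 = 6 := by
    omega
  rcases hcase with hr | hr | hr | hr | hr | hr
  · -- P % 7 = 1
    have hf1 : sg z 1 ^ P = sg z 1 := by
      rw [hfr 1, show (1 * P) % 7 = 1 from by rw [Nat.mul_mod, hr]]
    have hf2 : sg z 2 ^ P = sg z 2 := by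
      rw [hfr 2, show (2 * P) % 7 = 2 from by rw [Nat.mul_mod, hr]]
    have hf3 : sg z 3 ^ P = sg z 3 := by
      rw [hfr 3, show (3 * P) % 7 = 3 from by rw [Nat.mul_mod, hr]]
    obtain ⟨g0, g1, g2⟩ := sg_Gclass hz P hP2 hf1 hf2 hf3
    have v0 := key (P - 2) (0) (by rw [g0, sg_f1e0 hz]; norm_num)
    have v1 := key (P - 1) (1) (by rw [g1, sg_f1e1 hz]; norm_num)
    have v2 := key P (4) (by rw [g2, sg_f1e2 hz]; norm_num)
    push_cast at v0 v1 v2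
    exact ⟨fun _ => ⟨v0, v1, v2⟩, fun h => by rcases h with h | h <;> omega, fun h => by rcases h with h | h <;> omega⟩
  · -- P % 7 = 2
    have hf1 : sg z 1 ^ P = sg z 2 := by
      rw [hfr 1, show (1 * P) % 7 = 2 from by rw [Nat.mul_mod, hr]]
    have hf2 : sg z 2 ^ P = sg z 3 := by
      rw [hfr 2, show (2 * P) % 7 = 4 from by rw [Nat.mul_mod, hr], sg_fold4 hz]
    have hf3 : sg z 3 ^ P = sg z 1 := by
      rw [hfr 3, show (3 * P) % 7 = 6 from by rw [Nat.mul_mod, hr], sg_fold6 hz]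
    obtain ⟨g0, g1, g2⟩ := sg_Gclass hz P hP2 hf1 hf2 hf3
    have v0 := key (P - 2) (-1) (by rw [g0, sg_f2e0 hz]; norm_num)
    have v1 := key (P - 1) (-2) (by rw [g1, sg_f2e1 hz]; norm_num)
    have v2 := key P (-3) (by rw [g2, sg_f2e2 hz]; norm_num)
    push_cast at v0 v1 v2
    exact ⟨fun h => by rcases h with h | h <;> omega, fun _ => ⟨v0, v1, v2⟩, fun h => by rcases h with h | h <;> omega⟩
  · -- P % 7 = 3
    have hf1 : sg z 1 ^ P = sg z 3 := by
      rw [hfr 1, show (1 * P) % 7 = 3 from by rw [Nat.mul_mod, hr]]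
    have hf2 : sg z 2 ^ P = sg z 1 := by
      rw [hfr 2, show (2 * P) % 7 = 6 from by rw [Nat.mul_mod, hr], sg_fold6 hz]
    have hf3 : sg z 3 ^ P = sg z 2 := by
      rw [hfr 3, show (3 * P) % 7 = 2 from by rw [Nat.mul_mod, hr]]
    obtain ⟨g0, g1, g2⟩ := sg_Gclass hz P hP2 hf1 hf2 hf3
    have v0 := key (P - 2) (1) (by rw [g0, sg_f3e0 hz]; norm_num)
    have v1 := key (P - 1) (1) (by rw [g1, sg_f3e1 hz]; norm_num)
    have v2 := key P (3) (by rw [g2, sg_f3e2 hz]; norm_num)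
    push_cast at v0 v1 v2
    exact ⟨fun h => by rcases h with h | h <;> omega, fun h => by rcases h with h | h <;> omega, fun _ => ⟨v0, v1, v2⟩⟩
  · -- P % 7 = 4
    have hf1 : sg z 1 ^ P = sg z 3 := by
      rw [hfr 1, show (1 * P) % 7 = 4 from by rw [Nat.mul_mod, hr], sg_fold4 hz]
    have hf2 : sg z 2 ^ P = sg z 1 := by
      rw [hfr 2, show (2 * P) % 7 = 1 from by rw [Nat.mul_mod, hr]]
    have hf3 : sg z 3 ^ P = sg z 2 := by
      rw [hfr 3, show (3 * P) % 7 = 5 from by rw [Nat.mul_mod, hr], sg_fold5 hz]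
    obtain ⟨g0, g1, g2⟩ := sg_Gclass hz P hP2 hf1 hf2 hf3
    have v0 := key (P - 2) (1) (by rw [g0, sg_f3e0 hz]; norm_num)
    have v1 := key (P - 1) (1) (by rw [g1, sg_f3e1 hz]; norm_num)
    have v2 := key P (3) (by rw [g2, sg_f3e2 hz]; norm_num)
    push_cast at v0 v1 v2
    exact ⟨fun h => by rcases h with h | h <;> omega, fun h => by rcases h with h | h <;> omega, fun _ => ⟨v0, v1, v2⟩⟩
  · -- P % 7 = 5
    have hf1 : sg z 1 ^ P = sg z 2 := by
      rw [hfr 1, show (1 * P) % 7 = 5 from by rw [Nat.mul_mod, hr], sg_fold5 hz]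
    have hf2 : sg z 2 ^ P = sg z 3 := by
      rw [hfr 2, show (2 * P) % 7 = 3 from by rw [Nat.mul_mod, hr]]
    have hf3 : sg z 3 ^ P = sg z 1 := by
      rw [hfr 3, show (3 * P) % 7 = 1 from by rw [Nat.mul_mod, hr]]
    obtain ⟨g0, g1, g2⟩ := sg_Gclass hz P hP2 hf1 hf2 hf3
    have v0 := key (P - 2) (-1) (by rw [g0, sg_f2e0 hz]; norm_num)
    have v1 := key (P - 1) (-2) (by rw [g1, sg_f2e1 hz]; norm_num)
    have v2 := key P (-3) (by rw [g2, sg_f2e2 hz]; norm_num)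
    push_cast at v0 v1 v2
    exact ⟨fun h => by rcases h with h | h <;> omega, fun _ => ⟨v0, v1, v2⟩, fun h => by rcases h with h | h <;> omega⟩
  · -- P % 7 = 6
    have hf1 : sg z 1 ^ P = sg z 1 := by
      rw [hfr 1, show (1 * P) % 7 = 6 from by rw [Nat.mul_mod, hr], sg_fold6 hz]
    have hf2 : sg z 2 ^ P = sg z 2 := by
      rw [hfr 2, show (2 * P) % 7 = 5 from by rw [Nat.mul_mod, hr], sg_fold5 hz]
    have hf3 : sg z 3 ^ P = sg z 3 := by
      rw [hfr 3, show (3 * P) % 7 = 4 from by rw [Nat.mul_mod, hr], sg_fold4 hz]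
    obtain ⟨g0, g1, g2⟩ := sg_Gclass hz P hP2 hf1 hf2 hf3
    have v0 := key (P - 2) (0) (by rw [g0, sg_f1e0 hz]; norm_num)
    have v1 := key (P - 1) (1) (by rw [g1, sg_f1e1 hz]; norm_num)
    have v2 := key P (4) (by rw [g2, sg_f1e2 hz]; norm_num)
    push_cast at v0 v1 v2
    exact ⟨fun _ => ⟨v0, v1, v2⟩, fun h => by rcases h with h | h <;> omega, fun h => by rcases h with h | h <;> omega⟩

open Polynomial Finset in
lemma sums_eq (p : ℕ) (hp : p.Prime) (hp7 : p ≠ 7) (a : ℕ) (ha : 0 < a) :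
    ((∑ k ∈ Finset.range (p ^ a),
        (((3 * k).choose k : ZMod p)) * ((7 : ZMod p) ^ k)⁻¹)
      = ((G2s (p ^ a - 1) : ℤ) : ZMod p)) ∧
    ((∑ k ∈ Finset.range (p ^ a),
        (if 1 ≤ k then (((3 * k).choose (k - 1) : ZMod p)) else 0) * ((7 : ZMod p) ^ k)⁻¹)
      = ((G2s (p ^ a - 2) : ℤ) : ZMod p)) ∧
    ((∑ k ∈ Finset.range (p ^ a),
        (((3 * k).choose (k + 1) : ZMod p)) * ((7 : ZMod p) ^ k)⁻¹)
      = ((G2s (p ^ a) : ℤ) : ZMod p) - 4) := by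
  haveI := Fact.mk hp
  set P := p ^ a with hPdef
  have hP2 : 2 ≤ P := by
    calc 2 ≤ p := hp.two_le
    _ ≤ p ^ a := Nat.le_self_pow (by omega) p
  have f7 : (7 : ZMod p) ≠ 0 := by
    have : ((7:ℕ) : ZMod p) ≠ 0 := by
      rw [Ne, ZMod.natCast_eq_zero_iff]
      intro hd
      exact hp7 ((Nat.prime_dvd_prime_iff_eq hp (by norm_num)).mp hd)
    simpa using this
  have h7P : (7 : ZMod p) ^ P = 7 := ZMod.pow_card_pow _
  have h7P1 : (7 : ZMod p) ^ (P - 1) = 1 := by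
    have h := h7P
    have : (7 : ZMod p) ^ (P - 1) * 7 = 1 * 7 := by
      rw [one_mul, ← pow_succ, Nat.sub_add_cancel (by omega)]
      exact h7P
    exact mul_right_cancel₀ f7 this
  set S : Polynomial (ZMod p) :=
    ∑ k ∈ Finset.range P, ((1 + X) ^ 3) ^ k * (C (7 : ZMod p) * X) ^ (P - 1 - k) with hS
  set D : Polynomial (ZMod p) := (1 + X ^ P) ^ 3 - C (7 : ZMod p) * X ^ P with hD
  have hC7 : (C (7 : ZMod p)) = 7 := map_ofNat C 7
  have hC4 : (C (4 : ZMod p)) = 4 := map_ofNat C 4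
  have hC3 : (C (3 : ZMod p)) = 3 := map_ofNat C 3
  have hSC : S * ((1 + X) ^ 3 - C (7 : ZMod p) * X) = D := by
    rw [hS, geom_sum₂_mul]
    have e1 : ((1 + X : Polynomial (ZMod p)) ^ 3) ^ P = (1 + X ^ P) ^ 3 := by
      rw [← pow_mul, mul_comm 3 P, pow_mul, add_pow_char_pow, one_pow]
    have e2 : ((C (7 : ZMod p)) * X) ^ P = C (7 : ZMod p) * X ^ P := by
      rw [mul_pow, ← map_pow, h7P]
    rw [e1, e2]
  -- coefficients of D
  have hDeq : D = C 1 + C (-4 : ZMod p) * X ^ P + C 3 * X ^ (2 * P) + C 1 * X ^ (3 * P) := by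
    rw [hD, hC7, hC3, map_one, show (C (-4 : ZMod p)) = -4 by rw [map_neg, hC4]]
    ring
  have hDc : ∀ m ≤ P, D.coeff m =
      (if m = 0 then 1 else 0) + (if m = P then -4 else 0) := by
    intro m hm
    rw [hDeq]
    simp only [coeff_add, coeff_C_mul, coeff_X_pow, coeff_C]
    have h2 : m ≠ 2 * P := by omega
    have h3 : m ≠ 3 * P := by omega
    rw [if_neg h2, if_neg h3]
    split_ifs <;> ring
  -- recurrence for coefficients of S
  have hrec : ∀ m, S.coeff m = D.coeff m
      + 4 * (if 1 ≤ m then S.coeff (m - 1) else 0)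
      - 3 * (if 2 ≤ m then S.coeff (m - 2) else 0)
      - (if 3 ≤ m then S.coeff (m - 3) else 0) := by
    intro m
    have hmul : S * ((1 + X) ^ 3 - C (7 : ZMod p) * X) =
        S - C (4 : ZMod p) * (S * X ^ 1) + C (3 : ZMod p) * (S * X ^ 2) + S * X ^ 3 := by
      rw [hC7, hC4, hC3]; ring
    have h := congrArg (fun q => Polynomial.coeff q m) (hmul.symm.trans hSC)
    simp only [coeff_sub, coeff_add, coeff_C_mul, coeff_mul_X_pow'] at h
    linear_combination h
  -- coefficients of S equal G2s below P (with correction at P)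
  have hSG : ∀ m, m ≤ P → S.coeff m = ((G2s m : ℤ) : ZMod p)
      + (if m = P then -4 else 0) := by
    intro m
    induction m using Nat.strong_induction_on with
    | _ m ih =>
      intro hm
      match m with
      | 0 =>
        have h := hrec 0
        rw [hDc 0 (by omega)] at h
        simp only [show ¬(1 ≤ 0) by omega, show ¬(2 ≤ 0) by omega, show ¬(3 ≤ 0) by omega,
          if_false, if_pos rfl, if_neg (by omega : (0:ℕ) ≠ P)] at h ⊢
        rw [h]; norm_num [G2s]
      | 1 =>
        have h := hrec 1
        rw [hDc 1 (by omega)] at h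
        have h0 := ih 0 (by omega) (by omega)
        rw [if_neg (by omega : (0:ℕ) ≠ P)] at h0
        simp only [show (1:ℕ) - 1 = 0 by omega, show ¬(2 ≤ 1) by omega, show ¬(3 ≤ 1) by omega,
          if_false, if_pos (le_refl 1), if_neg (by omega : (1:ℕ) ≠ 0),
          if_neg (by omega : (1:ℕ) ≠ P)] at h ⊢
        rw [h, h0]; push_cast [G2s]; ring
      | 2 =>
        have h := hrec 2
        rw [hDc 2 (by omega)] at h
        have h0 := ih 0 (by omega) (by omega)
        have h1 := ih 1 (by omega) (by omega)
        rw [if_neg (by omega : (0:ℕ) ≠ P)] at h0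
        rw [if_neg (by omega : (1:ℕ) ≠ P)] at h1
        simp only [show (2:ℕ) - 1 = 1 by omega, show (2:ℕ) - 2 = 0 by omega,
          show ¬(3 ≤ 2) by omega, if_false, if_pos (by omega : 1 ≤ 2), if_pos (le_refl 2),
          if_neg (by omega : (2:ℕ) ≠ 0)] at h ⊢
        rw [h, h0, h1]
        by_cases h2P : 2 = P
        · rw [if_pos h2P]; push_cast [G2s]; ring
        · rw [if_neg h2P]; push_cast [G2s]; ring
      | (n + 3) =>
        have h := hrec (n + 3)
        rw [hDc (n + 3) (by omega)] at h
        have h0 := ih n (by omega) (by omega)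
        have h1 := ih (n + 1) (by omega) (by omega)
        have h2 := ih (n + 2) (by omega) (by omega)
        rw [if_neg (by omega : n ≠ P)] at h0
        rw [if_neg (by omega : n + 1 ≠ P)] at h1
        rw [if_neg (by omega : n + 2 ≠ P)] at h2
        simp only [show n + 3 - 1 = n + 2 by omega, show n + 3 - 2 = n + 1 by omega,
          show n + 3 - 3 = n by omega, if_pos (by omega : 1 ≤ n + 3),
          if_pos (by omega : 2 ≤ n + 3), if_pos (by omega : 3 ≤ n + 3),
          if_neg (by omega : n + 3 ≠ 0)] at h ⊢
        rw [h, h0, h1, h2]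
        have hG : G2s (n + 3) = 4 * G2s (n + 2) - 3 * G2s (n + 1) - G2s n := rfl
        rw [hG]
        by_cases h3P : n + 3 = P
        · rw [if_pos h3P]; push_cast; ring
        · rw [if_neg h3P]; push_cast; ring
  -- expansion of coefficients of S as binomial sums
  have hexp : ∀ m, S.coeff m = ∑ k ∈ Finset.range P,
      (if P - 1 - k ≤ m then ((3 * k).choose (m - (P - 1 - k)) : ZMod p) * 7 ^ (P - 1 - k)
        else 0) := by
    intro m
    rw [hS, finset_sum_coeff]
    refine Finset.sum_congr rfl fun k hk => ?_
    rw [show ((1 + X : Polynomial (ZMod p)) ^ 3) ^ k = (1 + X) ^ (3 * k) from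
      (pow_mul (1 + X) 3 k).symm]
    rw [mul_pow, ← map_pow, ← mul_assoc, coeff_mul_X_pow', coeff_mul_C, coeff_one_add_X_pow]
  have hinv : ∀ k, k < P → ((7 : ZMod p) ^ k)⁻¹ = 7 ^ (P - 1 - k) := by
    intro k hk
    refine inv_eq_of_mul_eq_one_left ?_
    rw [← pow_add, show P - 1 - k + k = P - 1 from by omega, h7P1]
  refine ⟨?_, ?_, ?_⟩
  · have hc := hSG (P - 1) (by omega)
    rw [if_neg (by omega : P - 1 ≠ P), add_zero] at hc
    have hsum : (∑ k ∈ Finset.range P,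
        (((3 * k).choose k : ZMod p)) * ((7 : ZMod p) ^ k)⁻¹) = S.coeff (P - 1) := by
      rw [hexp (P - 1)]
      refine Finset.sum_congr rfl fun k hk => ?_
      have hkP := Finset.mem_range.mp hk
      rw [if_pos (by omega : P - 1 - k ≤ P - 1),
        show (P - 1) - (P - 1 - k) = k from by omega, hinv k hkP]
    rw [hsum, hc]
  · have hc := hSG (P - 2) (by omega)
    rw [if_neg (by omega : P - 2 ≠ P), add_zero] at hc
    have hsum : (∑ k ∈ Finset.range P,
        (if 1 ≤ k then (((3 * k).choose (k - 1) : ZMod p)) else 0) * ((7 : ZMod p) ^ k)⁻¹)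
        = S.coeff (P - 2) := by
      rw [hexp (P - 2)]
      refine Finset.sum_congr rfl fun k hk => ?_
      have hkP := Finset.mem_range.mp hk
      rcases Nat.eq_zero_or_pos k with rfl | hk1
      · rw [if_neg (by omega : ¬ (1 ≤ 0)), if_neg (by omega : ¬ (P - 1 - 0 ≤ P - 2))]
        rw [zero_mul]
      · rw [if_pos (by omega : 1 ≤ k), if_pos (by omega : P - 1 - k ≤ P - 2),
          show (P - 2) - (P - 1 - k) = k - 1 from by omega, hinv k hkP]
    rw [hsum, hc]
  · have hc := hSG P (le_refl P)
    rw [if_pos rfl] at hc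
    have hsum : (∑ k ∈ Finset.range P,
        (((3 * k).choose (k + 1) : ZMod p)) * ((7 : ZMod p) ^ k)⁻¹) = S.coeff P := by
      rw [hexp P]
      refine Finset.sum_congr rfl fun k hk => ?_
      have hkP := Finset.mem_range.mp hk
      rw [if_pos (by omega : P - 1 - k ≤ P), show P - (P - 1 - k) = k + 1 from by omega,
        hinv k hkP]
    rw [hsum, hc]
    ring

theorem stmt_5' (p : ℕ) (hp : p.Prime) (hp7 : p ≠ 7) (a : ℕ) (ha : 0 < a) :
    ((p ^ a % 7 = 2 ∨ p ^ a % 7 = 5 →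
        (∑ k ∈ Finset.Ico 1 (p ^ a),
          (ibinom (3 * k) (k : ℤ) : ZMod p) * ((7 : ZMod p) ^ k)⁻¹) = -3) ∧
      (¬(p ^ a % 7 = 2 ∨ p ^ a % 7 = 5) →
        (∑ k ∈ Finset.Ico 1 (p ^ a),
          (ibinom (3 * k) (k : ℤ) : ZMod p) * ((7 : ZMod p) ^ k)⁻¹) = 0)) ∧
    ((p ^ a % 7 = 1 ∨ p ^ a % 7 = 6 →
        (∑ k ∈ Finset.range (p ^ a),
          (ibinom (3 * k) ((k : ℤ) - 1) : ZMod p) * ((7 : ZMod p) ^ k)⁻¹) = 0) ∧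
      (p ^ a % 7 = 2 ∨ p ^ a % 7 = 5 →
        (∑ k ∈ Finset.range (p ^ a),
          (ibinom (3 * k) ((k : ℤ) - 1) : ZMod p) * ((7 : ZMod p) ^ k)⁻¹) = -1) ∧
      (p ^ a % 7 = 3 ∨ p ^ a % 7 = 4 →
        (∑ k ∈ Finset.range (p ^ a),
          (ibinom (3 * k) ((k : ℤ) - 1) : ZMod p) * ((7 : ZMod p) ^ k)⁻¹) = 1)) ∧
    ((p ^ a % 7 = 1 ∨ p ^ a % 7 = 6 →
        (∑ k ∈ Finset.range (p ^ a),
          (ibinom (3 * k) ((k : ℤ) + 1) : ZMod p) * ((7 : ZMod p) ^ k)⁻¹) = 0) ∧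
      (p ^ a % 7 = 2 ∨ p ^ a % 7 = 5 →
        (∑ k ∈ Finset.range (p ^ a),
          (ibinom (3 * k) ((k : ℤ) + 1) : ZMod p) * ((7 : ZMod p) ^ k)⁻¹) = -7) ∧
      (p ^ a % 7 = 3 ∨ p ^ a % 7 = 4 →
        (∑ k ∈ Finset.range (p ^ a),
          (ibinom (3 * k) ((k : ℤ) + 1) : ZMod p) * ((7 : ZMod p) ^ k)⁻¹) = -1)) ∧
    ((p ^ a % 7 = 1 ∨ p ^ a % 7 = 6 →
        (∑ k ∈ Finset.range (p ^ a),
          (catalan2 k : ZMod p) * ((7 : ZMod p) ^ k)⁻¹) = 1) ∧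
      (p ^ a % 7 = 2 ∨ p ^ a % 7 = 5 →
        (∑ k ∈ Finset.range (p ^ a),
          (catalan2 k : ZMod p) * ((7 : ZMod p) ^ k)⁻¹) = 0) ∧
      (p ^ a % 7 = 3 ∨ p ^ a % 7 = 4 →
        (∑ k ∈ Finset.range (p ^ a),
          (catalan2 k : ZMod p) * ((7 : ZMod p) ^ k)⁻¹) = -1)) ∧
    ((¬(p ^ a % 7 = 1 ∨ p ^ a % 7 = 6) →
        (∑ k ∈ Finset.Ico 1 (p ^ a),
          (catalan2bar k : ZMod p) * ((7 : ZMod p) ^ k)⁻¹) = 1) ∧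
      (p ^ a % 7 = 1 ∨ p ^ a % 7 = 6 →
        (∑ k ∈ Finset.Ico 1 (p ^ a),
          (catalan2bar k : ZMod p) * ((7 : ZMod p) ^ k)⁻¹) = 0)) := by
  haveI := Fact.mk hp
  obtain ⟨gv1, gv2, gv3⟩ := Gvals p hp hp7 a ha
  obtain ⟨hT0, hTm, hT1⟩ := sums_eq p hp hp7 a ha
  set P := p ^ a with hPdef
  have hP2 : 2 ≤ P := by
    calc 2 ≤ p := hp.two_le
    _ ≤ p ^ a := Nat.le_self_pow (by omega) p
  have hdvd : ¬ (7 ∣ P) := by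
    intro hdvd
    have h7pr : (7:ℕ).Prime := by norm_num
    have h2 := h7pr.dvd_of_dvd_pow (n := a) (m := p) hdvd
    exact hp7 ((Nat.prime_dvd_prime_iff_eq h7pr hp).mp h2).symm
  have hrne : P % 7 ≠ 0 := fun h => hdvd (Nat.dvd_of_mod_eq_zero h)
  have hrlt : P % 7 < 7 := Nat.mod_lt _ (by norm_num)
  -- bridge ibinom casts
  have e0 : ∀ k : ℕ, ((ibinom (3 * k) (k : ℤ)) : ZMod p) = ((3 * k).choose k : ZMod p) := by
    intro k; simp [ibinom]
  have e1 : ∀ k : ℕ, ((ibinom (3 * k) ((k : ℤ) + 1)) : ZMod p)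
      = ((3 * k).choose (k + 1) : ZMod p) := by
    intro k
    have : ((k : ℤ) + 1) = ((k + 1 : ℕ) : ℤ) := by push_cast; ring
    rw [ibinom, if_pos (by omega), this, Int.toNat_natCast]
  have em : ∀ k : ℕ, ((ibinom (3 * k) ((k : ℤ) - 1)) : ZMod p)
      = (if 1 ≤ k then ((3 * k).choose (k - 1) : ZMod p) else 0) := by
    intro k
    rcases Nat.eq_zero_or_pos k with rfl | hk1
    · rw [ibinom, if_neg (by norm_num), if_neg (by omega)]
      norm_num
    · have h1 : ((k : ℤ) - 1) = ((k - 1 : ℕ) : ℤ) := by omega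
      rw [ibinom, if_pos (by omega), h1, Int.toNat_natCast, if_pos (by omega : 1 ≤ k)]
  -- the three range sums
  have S0 : (∑ k ∈ Finset.range P, (ibinom (3 * k) (k : ℤ) : ZMod p) * ((7 : ZMod p) ^ k)⁻¹)
      = ((G2s (P - 1) : ℤ) : ZMod p) := by
    simp only [e0]; exact hT0
  have Sm : (∑ k ∈ Finset.range P, (ibinom (3 * k) ((k : ℤ) - 1) : ZMod p) * ((7 : ZMod p) ^ k)⁻¹)
      = ((G2s (P - 2) : ℤ) : ZMod p) := by
    simp only [em]; exact hTm
  have S1 : (∑ k ∈ Finset.range P, (ibinom (3 * k) ((k : ℤ) + 1) : ZMod p) * ((7 : ZMod p) ^ k)⁻¹)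
      = ((G2s P : ℤ) : ZMod p) - 4 := by
    simp only [e1]; exact hT1
  -- Ico versions
  have hsplit : ∀ f : ℕ → ZMod p, ∑ k ∈ Finset.range P, f k = f 0 + ∑ k ∈ Finset.Ico 1 P, f k := by
    intro f
    rw [Finset.range_eq_Ico, Finset.sum_eq_sum_Ico_succ_bot (by omega : 0 < P)]
  have I0 : (∑ k ∈ Finset.Ico 1 P, (ibinom (3 * k) (k : ℤ) : ZMod p) * ((7 : ZMod p) ^ k)⁻¹)
      = ((G2s (P - 1) : ℤ) : ZMod p) - 1 := by
    have h := hsplit (fun k => (ibinom (3 * k) (k : ℤ) : ZMod p) * ((7 : ZMod p) ^ k)⁻¹)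
    rw [S0] at h
    have h00 : ((ibinom (3 * 0) ((0 : ℕ) : ℤ) : ZMod p) * ((7 : ZMod p) ^ 0)⁻¹) = 1 := by
      norm_num [ibinom]
    rw [h00] at h
    linear_combination -h
  -- catalan2 range sum
  have S4 : (∑ k ∈ Finset.range P, (catalan2 k : ZMod p) * ((7 : ZMod p) ^ k)⁻¹)
      = ((G2s (P - 1) : ℤ) : ZMod p) - 2 * ((G2s (P - 2) : ℤ) : ZMod p) := by
    have hterm : ∀ k : ℕ, ((catalan2 k : ℤ) : ZMod p) * ((7 : ZMod p) ^ k)⁻¹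
        = (ibinom (3 * k) (k : ℤ) : ZMod p) * ((7 : ZMod p) ^ k)⁻¹
          - 2 * ((ibinom (3 * k) ((k : ℤ) - 1) : ZMod p) * ((7 : ZMod p) ^ k)⁻¹) := by
      intro k
      have : ((catalan2 k : ℤ) : ZMod p) = (ibinom (3 * k) (k : ℤ) : ZMod p)
          - 2 * (ibinom (3 * k) ((k : ℤ) - 1) : ZMod p) := by
        rw [catalan2]; push_cast; ring
      rw [this]; ring
    rw [Finset.sum_congr rfl (fun k _ => hterm k), Finset.sum_sub_distrib, S0, ← Finset.mul_sum, Sm]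
  -- catalan2bar range and Ico sums
  have S5r : (∑ k ∈ Finset.range P, (catalan2bar k : ZMod p) * ((7 : ZMod p) ^ k)⁻¹)
      = 2 * ((G2s (P - 1) : ℤ) : ZMod p) - (((G2s P : ℤ) : ZMod p) - 4) := by
    have hterm : ∀ k : ℕ, ((catalan2bar k : ℤ) : ZMod p) * ((7 : ZMod p) ^ k)⁻¹
        = 2 * ((ibinom (3 * k) (k : ℤ) : ZMod p) * ((7 : ZMod p) ^ k)⁻¹)
          - (ibinom (3 * k) ((k : ℤ) + 1) : ZMod p) * ((7 : ZMod p) ^ k)⁻¹ := by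
      intro k
      have : ((catalan2bar k : ℤ) : ZMod p) = 2 * (ibinom (3 * k) (k : ℤ) : ZMod p)
          - (ibinom (3 * k) ((k : ℤ) + 1) : ZMod p) := by
        rw [catalan2bar]; push_cast; ring
      rw [this]; ring
    rw [Finset.sum_congr rfl (fun k _ => hterm k), Finset.sum_sub_distrib, ← Finset.mul_sum, S0, S1]
  have I5 : (∑ k ∈ Finset.Ico 1 P, (catalan2bar k : ZMod p) * ((7 : ZMod p) ^ k)⁻¹)
      = 2 * ((G2s (P - 1) : ℤ) : ZMod p) - (((G2s P : ℤ) : ZMod p) - 4) - 2 := by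
    have h := hsplit (fun k => (catalan2bar k : ZMod p) * ((7 : ZMod p) ^ k)⁻¹)
    rw [S5r] at h
    have h00 : ((catalan2bar 0 : ZMod p) * ((7 : ZMod p) ^ 0)⁻¹) = 2 := by
      norm_num [catalan2bar, ibinom]
    rw [h00] at h
    linear_combination -h
  refine ⟨⟨?_, ?_⟩, ⟨?_, ?_, ?_⟩, ⟨?_, ?_, ?_⟩, ⟨?_, ?_, ?_⟩, ⟨?_, ?_⟩⟩
  · intro h
    obtain ⟨A, B, Cc⟩ := gv2 h
    rw [I0, B]; norm_num
  · intro h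
    have : (P % 7 = 1 ∨ P % 7 = 6) ∨ (P % 7 = 3 ∨ P % 7 = 4) := by omega
    rcases this with h' | h'
    · obtain ⟨A, B, Cc⟩ := gv1 h'; rw [I0, B]; norm_num
    · obtain ⟨A, B, Cc⟩ := gv3 h'; rw [I0, B]; norm_num
  · intro h; obtain ⟨A, B, Cc⟩ := gv1 h; rw [Sm, A]
  · intro h; obtain ⟨A, B, Cc⟩ := gv2 h; rw [Sm, A]
  · intro h; obtain ⟨A, B, Cc⟩ := gv3 h; rw [Sm, A]
  · intro h; obtain ⟨A, B, Cc⟩ := gv1 h; rw [S1, Cc]; norm_num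
  · intro h; obtain ⟨A, B, Cc⟩ := gv2 h; rw [S1, Cc]; norm_num
  · intro h; obtain ⟨A, B, Cc⟩ := gv3 h; rw [S1, Cc]; norm_num
  · intro h; obtain ⟨A, B, Cc⟩ := gv1 h; rw [S4, A, B]; norm_num
  · intro h; obtain ⟨A, B, Cc⟩ := gv2 h; rw [S4, A, B]; norm_num
  · intro h; obtain ⟨A, B, Cc⟩ := gv3 h; rw [S4, A, B]; norm_num
  · intro h
    have : (P % 7 = 2 ∨ P % 7 = 5) ∨ (P % 7 = 3 ∨ P % 7 = 4) := by omega
    rcases this with h' | h'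
    · obtain ⟨A, B, Cc⟩ := gv2 h'; rw [I5, B, Cc]; norm_num
    · obtain ⟨A, B, Cc⟩ := gv3 h'; rw [I5, B, Cc]; norm_num
  · intro h; obtain ⟨A, B, Cc⟩ := gv1 h; rw [I5, B, Cc]; norm_num

theorem stmt_5 (p : ℕ) (hp : p.Prime) (hp7 : p ≠ 7) (a : ℕ) (ha : 0 < a) :
    ((p ^ a % 7 = 2 ∨ p ^ a % 7 = 5 →
        (∑ k ∈ Finset.Ico 1 (p ^ a),
          (ibinom (3 * k) (k : ℤ) : ZMod p) * ((7 : ZMod p) ^ k)⁻¹) = -3) ∧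
      (¬(p ^ a % 7 = 2 ∨ p ^ a % 7 = 5) →
        (∑ k ∈ Finset.Ico 1 (p ^ a),
          (ibinom (3 * k) (k : ℤ) : ZMod p) * ((7 : ZMod p) ^ k)⁻¹) = 0)) ∧
    ((p ^ a % 7 = 1 ∨ p ^ a % 7 = 6 →
        (∑ k ∈ Finset.range (p ^ a),
          (ibinom (3 * k) ((k : ℤ) - 1) : ZMod p) * ((7 : ZMod p) ^ k)⁻¹) = 0) ∧
      (p ^ a % 7 = 2 ∨ p ^ a % 7 = 5 →
        (∑ k ∈ Finset.range (p ^ a),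
          (ibinom (3 * k) ((k : ℤ) - 1) : ZMod p) * ((7 : ZMod p) ^ k)⁻¹) = -1) ∧
      (p ^ a % 7 = 3 ∨ p ^ a % 7 = 4 →
        (∑ k ∈ Finset.range (p ^ a),
          (ibinom (3 * k) ((k : ℤ) - 1) : ZMod p) * ((7 : ZMod p) ^ k)⁻¹) = 1)) ∧
    ((p ^ a % 7 = 1 ∨ p ^ a % 7 = 6 →
        (∑ k ∈ Finset.range (p ^ a),
          (ibinom (3 * k) ((k : ℤ) + 1) : ZMod p) * ((7 : ZMod p) ^ k)⁻¹) = 0) ∧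
      (p ^ a % 7 = 2 ∨ p ^ a % 7 = 5 →
        (∑ k ∈ Finset.range (p ^ a),
          (ibinom (3 * k) ((k : ℤ) + 1) : ZMod p) * ((7 : ZMod p) ^ k)⁻¹) = -7) ∧
      (p ^ a % 7 = 3 ∨ p ^ a % 7 = 4 →
        (∑ k ∈ Finset.range (p ^ a),
          (ibinom (3 * k) ((k : ℤ) + 1) : ZMod p) * ((7 : ZMod p) ^ k)⁻¹) = -1)) ∧
    ((p ^ a % 7 = 1 ∨ p ^ a % 7 = 6 →
        (∑ k ∈ Finset.range (p ^ a),
          (catalan2 k : ZMod p) * ((7 : ZMod p) ^ k)⁻¹) = 1) ∧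
      (p ^ a % 7 = 2 ∨ p ^ a % 7 = 5 →
        (∑ k ∈ Finset.range (p ^ a),
          (catalan2 k : ZMod p) * ((7 : ZMod p) ^ k)⁻¹) = 0) ∧
      (p ^ a % 7 = 3 ∨ p ^ a % 7 = 4 →
        (∑ k ∈ Finset.range (p ^ a),
          (catalan2 k : ZMod p) * ((7 : ZMod p) ^ k)⁻¹) = -1)) ∧
    ((¬(p ^ a % 7 = 1 ∨ p ^ a % 7 = 6) →
        (∑ k ∈ Finset.Ico 1 (p ^ a),
          (catalan2bar k : ZMod p) * ((7 : ZMod p) ^ k)⁻¹) = 1) ∧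
      (p ^ a % 7 = 1 ∨ p ^ a % 7 = 6 →
        (∑ k ∈ Finset.Ico 1 (p ^ a),
          (catalan2bar k : ZMod p) * ((7 : ZMod p) ^ k)⁻¹) = 0)) := by
  exact stmt_5' p hp hp7 a ha
end

section
/- Let p be a prime with p ≠ 19 and let a be a positive integer. Then in ℤ/pℤ, the sum ∑_{k=0}^{p^a−1} C_k^{(2)}·(19^k)⁻¹ equals 1 if p^a ≡ ±1, ±7, ±8 (mod 19), equals −4 if p^a ≡ ±2, ±3, ±5 (mod 19), and equals 3 if p^a ≡ ±4, ±6, ±9 (mod 19). -/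
variable {A : Type*} [CommRing A]

def s7eA (z : A) : A := z^1 + z^7 + z^8 + z^11 + z^12 + z^18
def s7eB (z : A) : A := z^2 + z^3 + z^5 + z^14 + z^16 + z^17
def s7eC (z : A) : A := z^4 + z^6 + z^9 + z^10 + z^13 + z^15
def s7d0 (z : A) : A := 7 + s7eA z + 4 * s7eB z
def s7d1 (z : A) : A := 7 + s7eB z + 4 * s7eC z
def s7d2 (z : A) : A := 7 + s7eC z + 4 * s7eA z
def s7g0 (z : A) : A := 7 + 3 * s7eB z - s7eC z
def s7g1 (z : A) : A := 8 + s7eB z + 4 * s7eC z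
def s7g2 (z : A) : A := 4 - 4 * s7eB z - 3 * s7eC z

lemma s7_cub0 (z : A) (hz : 1 + z + z^2 + z^3 + z^4 + z^5 + z^6 + z^7 + z^8 + z^9 + z^10 + z^11 + z^12 + z^13 + z^14 + z^15 + z^16 + z^17 + z^18 = 0) :
    s7d0 z ^ 3 = 16 * s7d0 z ^ 2 - 3 * s7d0 z - 1 := by
  simp only [s7d0, s7d1, s7d2, s7g0, s7g1, s7g2, s7eA, s7eB, s7eC]
  linear_combination ((-419:A) + (345:A) * z - (217:A) * z ^ 2 + (36:A) * z ^ 3 + (387:A) * z ^ 4 - (208:A) * z ^ 5 + (356:A) * z ^ 6 + (58:A) * z ^ 7 + (46:A) * z ^ 8 + (21:A) * z ^ 9 + (166:A) * z ^ 10 - (269:A) * z ^ 11 + (34:A) * z ^ 12 + (117:A) * z ^ 13 - (469:A) * z ^ 14 + (461:A) * z ^ 15 - (242:A) * z ^ 16 + (92:A) * z ^ 17 + (393:A) * z ^ 18 + (117:A) * z ^ 19 + (162:A) * z ^ 20 + (201:A) * z ^ 21 + (57:A) * z ^ 22 - (61:A) * z ^ 23 + (160:A) * z ^ 24 - (168:A)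 * z ^ 25 + (3:A) * z ^ 26 + (24:A) * z ^ 27 - (75:A) * z ^ 28 + (56:A) * z ^ 29 + (67:A) * z ^ 30 + (36:A) * z ^ 31 + (92:A) * z ^ 32 + (100:A) * z ^ 33 + (48:A) * z ^ 34 + (11:A) * z ^ 35 + z ^ 36) * hz

lemma s7_cub1 (z : A) (hz : 1 + z + z^2 + z^3 + z^4 + z^5 + z^6 + z^7 + z^8 + z^9 + z^10 + z^11 + z^12 + z^13 + z^14 + z^15 + z^16 + z^17 + z^18 = 0) :
    s7d1 z ^ 3 = 16 * s7d1 z ^ 2 - 3 * s7d1 z - 1 := by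
  simp only [s7d0, s7d1, s7d2, s7g0, s7g1, s7g2, s7eA, s7eB, s7eC]
  linear_combination ((-419:A) + (419:A) * z - (74:A) * z ^ 2 - (217:A) * z ^ 4 + (227:A) * z ^ 5 - (186:A) * z ^ 6 + (303:A) * z ^ 7 + (92:A) * z ^ 8 - (333:A) * z ^ 9 + (135:A) * z ^ 10 + (232:A) * z ^ 11 + (180:A) * z ^ 12 - (272:A) * z ^ 13 + (351:A) * z ^ 14 - (217:A) * z ^ 15 + (347:A) * z ^ 16 + (60:A) * z ^ 17 + (177:A) * z ^ 18 + (119:A) * z ^ 20 + (103:A) * z ^ 21 + (60:A) * z ^ 22 + (155:A) * z ^ 23 - (35:A) * z ^ 24 + (129:A) * z ^ 25 - (16:A) * z ^ 26 + (100:A) * z ^ 27 + (21:A) * z ^ 28 + (50:A) * z ^ 29 + (13:A) * z ^ 30 + (12:A) * z ^ 31 + (2:A) * z ^ 32 + z ^ 33) * hz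

lemma s7_cub2 (z : A) (hz : 1 + z + z^2 + z^3 + z^4 + z^5 + z^6 + z^7 + z^8 + z^9 + z^10 + z^11 + z^12 + z^13 + z^14 + z^15 + z^16 + z^17 + z^18 = 0) :
    s7d2 z ^ 3 = 16 * s7d2 z ^ 2 - 3 * s7d2 z - 1 := by
  simp only [s7d0, s7d1, s7d2, s7g0, s7g1, s7g2, s7eA, s7eB, s7eC]
  linear_combination ((-419:A) + (123:A) * z + (376:A) * z ^ 2 - (16:A) * z ^ 3 - (138:A) * z ^ 4 + (114:A) * z ^ 5 - (66:A) * z ^ 6 - (230:A) * z ^ 7 + (173:A) * z ^ 8 + (373:A) * z ^ 9 - (122:A) * z ^ 10 - (312:A) * z ^ 11 + (198:A) * z ^ 12 + (382:A) * z ^ 13 + (49:A) * z ^ 14 + (23:A) * z ^ 15 + (221:A) * z ^ 16 - (116:A) * z ^ 17 - (276:A) * z ^ 18 + (468:A) * z ^ 19 + (326:A) * z ^ 20 - (95:A) * z ^ 21 - (36:A) * z ^ 22 + (147:A) * z ^ 23 + (57:A) * z ^ 24 + (15:A) * z ^ 25 + (155:A) * z ^ 26 + (73:A) * z ^ 27 -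 (120:A) * z ^ 28 - (12:A) * z ^ 29 + (156:A) * z ^ 30 + (48:A) * z ^ 31 - (48:A) * z ^ 32 + (48:A) * z ^ 33 - (64:A) * z ^ 35 + (64:A) * z ^ 36) * hz

lemma s7_prod (z : A) (hz : 1 + z + z^2 + z^3 + z^4 + z^5 + z^6 + z^7 + z^8 + z^9 + z^10 + z^11 + z^12 + z^13 + z^14 + z^15 + z^16 + z^17 + z^18 = 0) :
    s7d0 z * s7d1 z * s7d2 z = -1 := by
  simp only [s7d0, s7d1, s7d2, s7g0, s7g1, s7g2, s7eA, s7eB, s7eC]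
  linear_combination ((344:A) - (99:A) * z + (28:A) * z ^ 2 + (119:A) * z ^ 3 + (32:A) * z ^ 4 + (44:A) * z ^ 5 + (147:A) * z ^ 6 + (65:A) * z ^ 7 - (31:A) * z ^ 8 + (202:A) * z ^ 9 + (81:A) * z ^ 10 + (152:A) * z ^ 11 + (111:A) * z ^ 12 + (97:A) * z ^ 13 + (111:A) * z ^ 14 + (132:A) * z ^ 15 + (130:A) * z ^ 16 + (146:A) * z ^ 17 + (141:A) * z ^ 18 - (195:A) * z ^ 19 + (224:A) * z ^ 20 + (113:A) * z ^ 21 + (27:A) * z ^ 22 + (102:A) * z ^ 23 + (104:A) * z ^ 24 - (8:A) * z ^ 25 + (69:A) * z ^ 26 + (174:A) * z ^ 27 - (58:A) * z ^ 28 + (53:A) * z ^ 29 - (8:A) * z ^ 30 + (32:A) * z ^ 31 + (37:A) * z ^ 32 + (28:A) * z ^ 33 + (16:A) * z ^ 34 + (4:A) * z ^ 35) * hz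

lemma s7_P0 (z : A) (hz : 1 + z + z^2 + z^3 + z^4 + z^5 + z^6 + z^7 + z^8 + z^9 + z^10 + z^11 + z^12 + z^13 + z^14 + z^15 + z^16 + z^17 + z^18 = 0) :
    s7g0 z + s7g1 z + s7g2 z = 19 := by
  simp only [s7d0, s7d1, s7d2, s7g0, s7g1, s7g2, s7eA, s7eB, s7eC]
  linear_combination ((0:A)) * hz

lemma s7_P1 (z : A) (hz : 1 + z + z^2 + z^3 + z^4 + z^5 + z^6 + z^7 + z^8 + z^9 + z^10 + z^11 + z^12 + z^13 + z^14 + z^15 + z^16 + z^17 + z^18 = 0) :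
    s7g0 z * s7d0 z + s7g1 z * s7d1 z + s7g2 z * s7d2 z = 266 := by
  simp only [s7d0, s7d1, s7d2, s7g0, s7g1, s7g2, s7eA, s7eB, s7eC]
  linear_combination ((-133:A) + (156:A) * z + (13:A) * z ^ 2 - (13:A) * z ^ 3 + (13:A) * z ^ 4 + (13:A) * z ^ 5 - (13:A) * z ^ 6 + (26:A) * z ^ 8 - (39:A) * z ^ 9 + (13:A) * z ^ 10 - (52:A) * z ^ 11 + (26:A) * z ^ 12 + (13:A) * z ^ 13 - (13:A) * z ^ 14 + (13:A) * z ^ 15 + (13:A) * z ^ 16 - (13:A) * z ^ 17) * hz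

lemma s7_P2 (z : A) (hz : 1 + z + z^2 + z^3 + z^4 + z^5 + z^6 + z^7 + z^8 + z^9 + z^10 + z^11 + z^12 + z^13 + z^14 + z^15 + z^16 + z^17 + z^18 = 0) :
    s7g0 z * s7d0 z ^ 2 + s7g1 z * s7d1 z ^ 2 + s7g2 z * s7d2 z ^ 2 = 4199 := by
  simp only [s7d0, s7d1, s7d2, s7g0, s7g1, s7g2, s7eA, s7eB, s7eC]
  linear_combination ((-3268:A) + (3590:A) * z + (253:A) * z ^ 2 - (197:A) * z ^ 3 + (241:A) * z ^ 4 + (302:A) * z ^ 5 - (129:A) * z ^ 6 + (118:A) * z ^ 7 + (638:A) * z ^ 8 - (728:A) * z ^ 9 + (340:A) * z ^ 10 - (1254:A) * z ^ 11 + (731:A) * z ^ 12 + (274:A) * z ^ 13 - (431:A) * z ^ 14 + (314:A) * z ^ 15 + (350:A) * z ^ 16 - (325:A) * z ^ 17 + (107:A) * z ^ 18 + (75:A) * z ^ 19 + (369:A) * z ^ 20 + (57:A) * z ^ 21 - (128:A) * z ^ 22 + (55:A) * z ^ 23 + (29:A) * z ^ 24 - (210:A) * z ^ 25 - (32:A)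 * z ^ 26 + (125:A) * z ^ 27 - (246:A) * z ^ 28 - (44:A) * z ^ 29 + (70:A) * z ^ 30 + (32:A) * z ^ 31 + (22:A) * z ^ 32 + (85:A) * z ^ 33 + (24:A) * z ^ 34 - (61:A) * z ^ 35) * hz

lemma s7_V0 (z : A) (hz : 1 + z + z^2 + z^3 + z^4 + z^5 + z^6 + z^7 + z^8 + z^9 + z^10 + z^11 + z^12 + z^13 + z^14 + z^15 + z^16 + z^17 + z^18 = 0) :
    -(s7g0 z * s7d0 z * s7d1 z * s7d2 z + s7g1 z * s7d1 z * s7d2 z * s7d0 z + s7g2 z * s7d2 z * s7d0 z * s7d1 z) = 19 := by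
  simp only [s7d0, s7d1, s7d2, s7g0, s7g1, s7g2, s7eA, s7eB, s7eC]
  linear_combination ((-6536:A) + (1881:A) * z - (532:A) * z ^ 2 - (2261:A) * z ^ 3 - (608:A) * z ^ 4 - (836:A) * z ^ 5 - (2793:A) * z ^ 6 - (1235:A) * z ^ 7 + (589:A) * z ^ 8 - (3838:A) * z ^ 9 - (1539:A) * z ^ 10 - (2888:A) * z ^ 11 - (2109:A) * z ^ 12 - (1843:A) * z ^ 13 - (2109:A) * z ^ 14 - (2508:A) * z ^ 15 - (2470:A) * z ^ 16 - (2774:A) * z ^ 17 - (2679:A) * z ^ 18 + (3705:A) * z ^ 19 - (4256:A) * z ^ 20 - (2147:A) * z ^ 21 - (513:A) * z ^ 22 - (1938:A) * z ^ 23 - (1976:A) * z ^ 24 + (152:A) * z ^ 25 - (1311:A) * z ^ 26 - (3306:A) * z ^ 27 + (1102:A) * z ^ 28 - (1007:A) * z ^ 29 + (152:A) * z ^ 30 - (608:A) * z ^ 31 - (703:A) * z ^ 32 - (532:A) * z ^ 33 - (304:A) * z ^ 34 - (76:A) * z ^ 35) * hz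

lemma s7_V1 (z : A) (hz : 1 + z + z^2 + z^3 + z^4 + z^5 + z^6 + z^7 + z^8 + z^9 + z^10 + z^11 + z^12 + z^13 + z^14 + z^15 + z^16 + z^17 + z^18 = 0) :
    -(s7g0 z * s7d1 z * s7d1 z * s7d2 z + s7g1 z * s7d2 z * s7d2 z * s7d0 z + s7g2 z * s7d0 z * s7d0 z * s7d1 z) = -76 := by
  simp only [s7d0, s7d1, s7d2, s7g0, s7g1, s7g2, s7eA, s7eB, s7eC]
  linear_combination ((-6441:A) + (1149:A) * z - (98:A) * z ^ 2 - (1857:A) * z ^ 3 - (612:A) * z ^ 4 + (477:A) * z ^ 5 - (2219:A) * z ^ 6 - (1032:A) * z ^ 7 + (885:A) * z ^ 8 - (3229:A) * z ^ 9 - (1718:A) * z ^ 10 - (2953:A) * z ^ 11 - (2850:A) * z ^ 12 - (2998:A) * z ^ 13 - (2210:A) * z ^ 14 - (3424:A) * z ^ 15 - (2335:A) * z ^ 16 - (2554:A) * z ^ 17 - (3299:A) * z ^ 18 + (3960:A) * z ^ 19 - (2520:A) * z ^ 20 - (2164:A) * z ^ 21 - (342:A) * z ^ 22 - (1677:A)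 * z ^ 23 - (3579:A) * z ^ 24 - (497:A) * z ^ 25 - (1773:A) * z ^ 26 - (4278:A) * z ^ 27 - (26:A) * z ^ 28 - (1516:A) * z ^ 29 + (7:A) * z ^ 30 + (430:A) * z ^ 31 + (373:A) * z ^ 32 - (428:A) * z ^ 33 + (931:A) * z ^ 34 - (304:A) * z ^ 35 - (42:A) * z ^ 36 + (685:A) * z ^ 37 - (1290:A) * z ^ 38 - (685:A) * z ^ 39 - (275:A) * z ^ 40 - (397:A) * z ^ 41 - (424:A) * z ^ 42 + (667:A) * z ^ 43 - (56:A) * z ^ 44 + (89:A) * z ^ 45 + (940:A) * z ^ 46 + (424:A) * z ^ 47 + (521:A) * z ^ 48 + (112:A) * z ^ 49 - (33:A) * z ^ 50 - (88:A) * z ^ 51 - (60:A) * z ^ 52 - (16:A) * z ^ 53) * hz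

lemma s7_V2 (z : A) (hz : 1 + z + z^2 + z^3 + z^4 + z^5 + z^6 + z^7 + z^8 + z^9 + z^10 + z^11 + z^12 + z^13 + z^14 + z^15 + z^16 + z^17 + z^18 = 0) :
    -(s7g0 z * s7d2 z * s7d1 z * s7d2 z + s7g1 z * s7d0 z * s7d2 z * s7d0 z + s7g2 z * s7d1 z * s7d0 z * s7d1 z) = 57 := by
  simp only [s7d0, s7d1, s7d2, s7g0, s7g1, s7g2, s7eA, s7eB, s7eC]
  linear_combination ((-6574:A) + (1282:A) * z - (651:A) * z ^ 2 - (2706:A) * z ^ 3 - (609:A) * z ^ 4 - (1031:A) * z ^ 5 - (2240:A) * z ^ 6 - (1727:A) * z ^ 7 + (195:A) * z ^ 8 - (2779:A) * z ^ 9 - (1561:A) * z ^ 10 - (3317:A) * z ^ 11 - (2525:A) * z ^ 12 - (1706:A) * z ^ 13 - (2846:A) * z ^ 14 - (1840:A) * z ^ 15 - (2693:A) * z ^ 16 - (3473:A) * z ^ 17 - (2795:A) * z ^ 18 + (4110:A) * z ^ 19 - (2613:A) * z ^ 20 - (2031:A) * z ^ 21 + (248:A) * z ^ 22 - (1915:A)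 * z ^ 23 - (1769:A) * z ^ 24 - (280:A) * z ^ 25 - (484:A) * z ^ 26 - (3471:A) * z ^ 27 - (90:A) * z ^ 28 - (728:A) * z ^ 29 + (691:A) * z ^ 30 + (191:A) * z ^ 31 - (512:A) * z ^ 32 + (300:A) * z ^ 33 - (1136:A) * z ^ 34 + (361:A) * z ^ 35 + (542:A) * z ^ 36 + (155:A) * z ^ 37 - (1395:A) * z ^ 38 - (155:A) * z ^ 39 + (45:A) * z ^ 40 - (473:A) * z ^ 41 + (154:A) * z ^ 42 - (142:A) * z ^ 43 - (144:A) * z ^ 44 - (124:A) * z ^ 45 + (625:A) * z ^ 46 - (89:A) * z ^ 47 - (81:A) * z ^ 48 - (297:A) * z ^ 49 - (317:A) * z ^ 50 - (152:A) * z ^ 51 - (80:A) * z ^ 52 - (4:A) * z ^ 53) * hz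
def s7etaf (z : A) (s : ℕ) : A :=
  z ^ (1*s % 19) + z ^ (7*s % 19) + z ^ (8*s % 19) + z ^ (11*s % 19) + z ^ (12*s % 19) + z ^ (18*s % 19)

lemma s7_etaf_eval_1 (z : A) : s7etaf z 1 = s7eA z := by
  simp only [s7etaf, s7eA]
  try norm_num
  try ring

lemma s7_etaf_eval_2 (z : A) : s7etaf z 2 = s7eB z := by
  simp only [s7etaf, s7eB]
  try norm_num
  try ring

lemma s7_etaf_eval_3 (z : A) : s7etaf z 3 = s7eB z := by
  simp only [s7etaf, s7eB]
  try norm_num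
  try ring

lemma s7_etaf_eval_4 (z : A) : s7etaf z 4 = s7eC z := by
  simp only [s7etaf, s7eC]
  try norm_num
  try ring

lemma s7_etaf_eval_5 (z : A) : s7etaf z 5 = s7eB z := by
  simp only [s7etaf, s7eB]
  try norm_num
  try ring

lemma s7_etaf_eval_6 (z : A) : s7etaf z 6 = s7eC z := by
  simp only [s7etaf, s7eC]
  try norm_num
  try ring

lemma s7_etaf_eval_7 (z : A) : s7etaf z 7 = s7eA z := by
  simp only [s7etaf, s7eA]
  try norm_num
  try ring

lemma s7_etaf_eval_8 (z : A) : s7etaf z 8 = s7eA z := by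
  simp only [s7etaf, s7eA]
  try norm_num
  try ring

lemma s7_etaf_eval_9 (z : A) : s7etaf z 9 = s7eC z := by
  simp only [s7etaf, s7eC]
  try norm_num
  try ring

lemma s7_etaf_eval_10 (z : A) : s7etaf z 10 = s7eC z := by
  simp only [s7etaf, s7eC]
  try norm_num
  try ring

lemma s7_etaf_eval_11 (z : A) : s7etaf z 11 = s7eA z := by
  simp only [s7etaf, s7eA]
  try norm_num
  try ring

lemma s7_etaf_eval_12 (z : A) : s7etaf z 12 = s7eA z := by
  simp only [s7etaf, s7eA]
  try norm_num
  try ring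

lemma s7_etaf_eval_13 (z : A) : s7etaf z 13 = s7eC z := by
  simp only [s7etaf, s7eC]
  try norm_num
  try ring

lemma s7_etaf_eval_14 (z : A) : s7etaf z 14 = s7eB z := by
  simp only [s7etaf, s7eB]
  try norm_num
  try ring

lemma s7_etaf_eval_15 (z : A) : s7etaf z 15 = s7eC z := by
  simp only [s7etaf, s7eC]
  try norm_num
  try ring

lemma s7_etaf_eval_16 (z : A) : s7etaf z 16 = s7eB z := by
  simp only [s7etaf, s7eB]
  try norm_num
  try ring

lemma s7_etaf_eval_17 (z : A) : s7etaf z 17 = s7eB z := by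
  simp only [s7etaf, s7eB]
  try norm_num
  try ring

lemma s7_etaf_eval_18 (z : A) : s7etaf z 18 = s7eA z := by
  simp only [s7etaf, s7eA]
  try norm_num
  try ring


lemma s7_hred (z : A) (hz19 : z ^ 19 = 1) (n : ℕ) : z ^ n = z ^ (n % 19) := by
  conv_lhs => rw [← Nat.div_add_mod n 19]
  rw [pow_add, pow_mul, hz19, one_pow, one_mul]

lemma s7_etaf_frob (p : ℕ) [Fact p.Prime] [CharP A p] (z : A) (hz19 : z ^ 19 = 1) (s : ℕ) :
    s7etaf z s ^ p = s7etaf z (s * p) := by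
  have key : ∀ t : ℕ, (z ^ (t * s % 19)) ^ p = z ^ (t * (s * p) % 19) := by
    intro t
    rw [← pow_mul, s7_hred z hz19 (t * s % 19 * p)]
    congr 1
    have h1 : t * s % 19 * p % 19 = t * s * p % 19 := (Nat.mod_modEq (t*s) 19).mul_right p
    rw [h1, mul_assoc]
  simp only [s7etaf]
  rw [add_pow_char, add_pow_char, add_pow_char, add_pow_char, add_pow_char,
    key, key, key, key, key, key]

lemma s7_etaf_frob_pow (p : ℕ) [Fact p.Prime] [CharP A p] (z : A) (hz19 : z ^ 19 = 1) (s : ℕ)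
    (a : ℕ) : s7etaf z s ^ (p ^ a) = s7etaf z (s * p ^ a) := by
  induction a with
  | zero => simp
  | succ n ih =>
      rw [pow_succ, pow_mul, ih, s7_etaf_frob p z hz19, mul_assoc]

lemma s7_etaf_mod (z : A) (s : ℕ) : s7etaf z s = s7etaf z (s % 19) := by
  have key : ∀ t : ℕ, t * s % 19 = t * (s % 19) % 19 := fun t =>
    ((Nat.mod_modEq s 19).mul_left t).symm
  simp only [s7etaf]
  rw [key 1, key 7, key 8, key 11, key 12, key 18]

def s7W : ℕ → ℤ
  | 0 => 1
  | 1 => 14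
  | 2 => 221
  | n+3 => 16 * s7W (n+2) - 3 * s7W (n+1) - s7W n

def s7val (r : ℕ) : ℤ :=
  if r ∈ ({1,7,8,11,12,18} : Finset ℕ) then 1
  else if r ∈ ({2,3,5,14,16,17} : Finset ℕ) then -4 else 3

def s7dd (z : A) (s : ℕ) : A := 7 + s7etaf z s + 4 * s7etaf z (2 * s)

lemma s7_cast_frob_pow (p : ℕ) [Fact p.Prime] [CharP A p] (n a : ℕ) :
    ((n : A)) ^ p ^ a = n := by
  induction a with
  | zero => simp
  | succ k ih => rw [pow_succ, pow_mul, ih, ← frobenius_def, map_natCast]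

lemma s7_dd_frob_pow (p : ℕ) [Fact p.Prime] [CharP A p] (z : A) (hz19 : z ^ 19 = 1)
    (s a : ℕ) : s7dd z s ^ p ^ a = s7dd z (s * p ^ a) := by
  simp only [s7dd]
  rw [add_pow_char_pow, add_pow_char_pow, mul_pow,
    s7_etaf_frob_pow p z hz19, s7_etaf_frob_pow p z hz19]
  have h7 : ((7 : A)) ^ p ^ a = 7 := by
    have h := s7_cast_frob_pow (A := A) p 7 a; norm_num at h; exact h
  have h4 : ((4 : A)) ^ p ^ a = 4 := by
    have h := s7_cast_frob_pow (A := A) p 4 a; norm_num at h; exact h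
  rw [h7, h4, mul_assoc 2 s (p ^ a)]

lemma s7_dd_mod (z : A) (s : ℕ) : s7dd z s = s7dd z (s % 19) := by
  simp only [s7dd]
  rw [s7_etaf_mod z s, s7_etaf_mod z (2 * s), s7_etaf_mod z (2 * (s % 19)),
    show (2 * (s % 19)) % 19 = (2 * s) % 19 from (Nat.mod_modEq s 19).mul_left 2]

lemma s7_dd_eval_1 (z : A) : s7dd z 1 = s7d0 z := by
  simp only [s7dd, s7d0]
  rw [s7_etaf_eval_1, show ((2 * 1 : ℕ)) = 2 from rfl, s7_etaf_eval_2]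

lemma s7_dd_eval_2 (z : A) : s7dd z 2 = s7d1 z := by
  simp only [s7dd, s7d1]
  rw [s7_etaf_eval_2, show ((2 * 2 : ℕ)) = 4 from rfl, s7_etaf_eval_4]

lemma s7_dd_eval_3 (z : A) : s7dd z 3 = s7d1 z := by
  simp only [s7dd, s7d1]
  rw [s7_etaf_eval_3, show ((2 * 3 : ℕ)) = 6 from rfl, s7_etaf_eval_6]

lemma s7_dd_eval_4 (z : A) : s7dd z 4 = s7d2 z := by
  simp only [s7dd, s7d2]
  rw [s7_etaf_eval_4, show ((2 * 4 : ℕ)) = 8 from rfl, s7_etaf_eval_8]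

lemma s7_dd_eval_5 (z : A) : s7dd z 5 = s7d1 z := by
  simp only [s7dd, s7d1]
  rw [s7_etaf_eval_5, show ((2 * 5 : ℕ)) = 10 from rfl, s7_etaf_eval_10]

lemma s7_dd_eval_6 (z : A) : s7dd z 6 = s7d2 z := by
  simp only [s7dd, s7d2]
  rw [s7_etaf_eval_6, show ((2 * 6 : ℕ)) = 12 from rfl, s7_etaf_eval_12]

lemma s7_dd_eval_7 (z : A) : s7dd z 7 = s7d0 z := by
  simp only [s7dd, s7d0]
  rw [s7_etaf_eval_7, show ((2 * 7 : ℕ)) = 14 from rfl, s7_etaf_eval_14]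

lemma s7_dd_eval_8 (z : A) : s7dd z 8 = s7d0 z := by
  simp only [s7dd, s7d0]
  rw [s7_etaf_eval_8, show ((2 * 8 : ℕ)) = 16 from rfl, s7_etaf_eval_16]

lemma s7_dd_eval_9 (z : A) : s7dd z 9 = s7d2 z := by
  simp only [s7dd, s7d2]
  rw [s7_etaf_eval_9, show ((2 * 9 : ℕ)) = 18 from rfl, s7_etaf_eval_18]

lemma s7_dd_eval_10 (z : A) : s7dd z 10 = s7d2 z := by
  simp only [s7dd, s7d2]
  rw [s7_etaf_eval_10, show ((2 * 10 : ℕ)) = 20 from rfl, s7_etaf_mod z 20, show ((20 : ℕ) % 19) = 1 from rfl, s7_etaf_eval_1]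

lemma s7_dd_eval_11 (z : A) : s7dd z 11 = s7d0 z := by
  simp only [s7dd, s7d0]
  rw [s7_etaf_eval_11, show ((2 * 11 : ℕ)) = 22 from rfl, s7_etaf_mod z 22, show ((22 : ℕ) % 19) = 3 from rfl, s7_etaf_eval_3]

lemma s7_dd_eval_12 (z : A) : s7dd z 12 = s7d0 z := by
  simp only [s7dd, s7d0]
  rw [s7_etaf_eval_12, show ((2 * 12 : ℕ)) = 24 from rfl, s7_etaf_mod z 24, show ((24 : ℕ) % 19) = 5 from rfl, s7_etaf_eval_5]

lemma s7_dd_eval_13 (z : A) : s7dd z 13 = s7d2 z := by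
  simp only [s7dd, s7d2]
  rw [s7_etaf_eval_13, show ((2 * 13 : ℕ)) = 26 from rfl, s7_etaf_mod z 26, show ((26 : ℕ) % 19) = 7 from rfl, s7_etaf_eval_7]

lemma s7_dd_eval_14 (z : A) : s7dd z 14 = s7d1 z := by
  simp only [s7dd, s7d1]
  rw [s7_etaf_eval_14, show ((2 * 14 : ℕ)) = 28 from rfl, s7_etaf_mod z 28, show ((28 : ℕ) % 19) = 9 from rfl, s7_etaf_eval_9]

lemma s7_dd_eval_15 (z : A) : s7dd z 15 = s7d2 z := by
  simp only [s7dd, s7d2]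
  rw [s7_etaf_eval_15, show ((2 * 15 : ℕ)) = 30 from rfl, s7_etaf_mod z 30, show ((30 : ℕ) % 19) = 11 from rfl, s7_etaf_eval_11]

lemma s7_dd_eval_16 (z : A) : s7dd z 16 = s7d1 z := by
  simp only [s7dd, s7d1]
  rw [s7_etaf_eval_16, show ((2 * 16 : ℕ)) = 32 from rfl, s7_etaf_mod z 32, show ((32 : ℕ) % 19) = 13 from rfl, s7_etaf_eval_13]

lemma s7_dd_eval_17 (z : A) : s7dd z 17 = s7d1 z := by
  simp only [s7dd, s7d1]
  rw [s7_etaf_eval_17, show ((2 * 17 : ℕ)) = 34 from rfl, s7_etaf_mod z 34, show ((34 : ℕ) % 19) = 15 from rfl, s7_etaf_eval_15]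

lemma s7_dd_eval_18 (z : A) : s7dd z 18 = s7d0 z := by
  simp only [s7dd, s7d0]
  rw [s7_etaf_eval_18, show ((2 * 18 : ℕ)) = 36 from rfl, s7_etaf_mod z 36, show ((36 : ℕ) % 19) = 17 from rfl, s7_etaf_eval_17]
lemma s7_W_rep (z : A)
    (hz : 1 + z + z^2 + z^3 + z^4 + z^5 + z^6 + z^7 + z^8 + z^9 + z^10 + z^11 + z^12 + z^13 + z^14 + z^15 + z^16 + z^17 + z^18 = 0) :
    ∀ n : ℕ, ((19 * s7W n : ℤ) : A) =
      s7g0 z * s7d0 z ^ n + s7g1 z * s7d1 z ^ n + s7g2 z * s7d2 z ^ n := by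
  have base0 : ((19 * s7W 0 : ℤ) : A) = s7g0 z * s7d0 z ^ 0 + s7g1 z * s7d1 z ^ 0 + s7g2 z * s7d2 z ^ 0 := by
    have h := s7_P0 z hz
    show ((19 * 1 : ℤ) : A) = _
    push_cast
    linear_combination -h
  have base1 : ((19 * s7W 1 : ℤ) : A) = s7g0 z * s7d0 z ^ 1 + s7g1 z * s7d1 z ^ 1 + s7g2 z * s7d2 z ^ 1 := by
    have h := s7_P1 z hz
    show ((19 * 14 : ℤ) : A) = _
    push_cast
    linear_combination -h
  have base2 : ((19 * s7W 2 : ℤ) : A) = s7g0 z * s7d0 z ^ 2 + s7g1 z * s7d1 z ^ 2 + s7g2 z * s7d2 z ^ 2 := by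
    have h := s7_P2 z hz
    show ((19 * 221 : ℤ) : A) = _
    push_cast
    linear_combination -h
  have key : ∀ n : ℕ,
      (((19 * s7W n : ℤ) : A) = s7g0 z * s7d0 z ^ n + s7g1 z * s7d1 z ^ n + s7g2 z * s7d2 z ^ n) ∧
      (((19 * s7W (n+1) : ℤ) : A) = s7g0 z * s7d0 z ^ (n+1) + s7g1 z * s7d1 z ^ (n+1) + s7g2 z * s7d2 z ^ (n+1)) ∧
      (((19 * s7W (n+2) : ℤ) : A) = s7g0 z * s7d0 z ^ (n+2) + s7g1 z * s7d1 z ^ (n+2) + s7g2 z * s7d2 z ^ (n+2)) := by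
    intro n
    induction n with
    | zero => exact ⟨base0, base1, base2⟩
    | succ k ih =>
        obtain ⟨h0, h1, h2⟩ := ih
        refine ⟨h1, h2, ?_⟩
        have hrec : s7W (k+3) = 16 * s7W (k+2) - 3 * s7W (k+1) - s7W k := rfl
        have hc0 := s7_cub0 z hz
        have hc1 := s7_cub1 z hz
        have hc2 := s7_cub2 z hz
        rw [show k+1+2 = k+3 from rfl, hrec]
        push_cast at h0 h1 h2 ⊢
        linear_combination (16 : A) * h2 - 3 * h1 - h0
          - (s7g0 z * s7d0 z ^ k) * hc0 - (s7g1 z * s7d1 z ^ k) * hc1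
          - (s7g2 z * s7d2 z ^ k) * hc2
  exact fun n => (key n).1

lemma s7_core (p : ℕ) [Fact p.Prime] [CharP A p] (z x0 x1 x2 : A)
    (hz : 1 + z + z^2 + z^3 + z^4 + z^5 + z^6 + z^7 + z^8 + z^9 + z^10 + z^11 + z^12 + z^13 + z^14 + z^15 + z^16 + z^17 + z^18 = 0)
    (a : ℕ) (ha : 0 < a) (v : ℤ)
    (h0 : s7d0 z ^ p ^ a = x0) (h1 : s7d1 z ^ p ^ a = x1) (h2 : s7d2 z ^ p ^ a = x2)
    (hV : -(s7g0 z * x0 * s7d1 z * s7d2 z + s7g1 z * x1 * s7d2 z * s7d0 z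
        + s7g2 z * x2 * s7d0 z * s7d1 z) = ((19 * v : ℤ) : A)) :
    ((19 * s7W (p ^ a - 1) : ℤ) : A) = ((19 * v : ℤ) : A) := by
  have hq : p ^ a ≠ 0 := pow_ne_zero a (Fact.out (p := p.Prime)).pos.ne'
  set M := p ^ a - 1 with hMdef
  have hM : M + 1 = p ^ a := Nat.succ_pred_eq_of_pos (Nat.pos_of_ne_zero hq)
  have hw := s7_W_rep z hz M
  have e0 : s7d0 z ^ M * s7d0 z = x0 := by rw [← pow_succ, hM, h0]
  have e1 : s7d1 z ^ M * s7d1 z = x1 := by rw [← pow_succ, hM, h1]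
  have e2 : s7d2 z ^ M * s7d2 z = x2 := by rw [← pow_succ, hM, h2]
  have hprod := s7_prod z hz
  rw [hw]
  linear_combination (s7g0 z * s7d0 z ^ M + s7g1 z * s7d1 z ^ M + s7g2 z * s7d2 z ^ M) * hprod
    + (- (s7g0 z * s7d1 z * s7d2 z)) * e0 + (- (s7g1 z * s7d2 z * s7d0 z)) * e1
    + (- (s7g2 z * s7d0 z * s7d1 z)) * e2 + hV

lemma s7_nineteen_ne (p : ℕ) [Fact p.Prime] (hp19 : p ≠ 19) : (19 : ZMod p) ≠ 0 := by
  intro h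
  have h2 : (((19:ℕ) : ZMod p)) = 0 := by exact_mod_cast h
  rw [ZMod.natCast_eq_zero_iff] at h2
  exact hp19 ((Nat.prime_dvd_prime_iff_eq (Fact.out (p := p.Prime)) (by norm_num)).mp h2)

lemma s7_master (p : ℕ) [Fact p.Prime] (hp19 : p ≠ 19) (a : ℕ) (ha : 0 < a) :
    ((s7W (p ^ a - 1) : ℤ) : ZMod p) = s7val (p ^ a % 19) := by
  classical
  have hp : p.Prime := Fact.out
  have hΦc1 : (∑ i ∈ Finset.range 19, (Polynomial.X : Polynomial (ZMod p)) ^ i).coeff 1 = 1 := by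
    rw [Polynomial.finset_sum_coeff, Finset.sum_eq_single 1]
    · simp
    · intro b _ hb
      rw [Polynomial.coeff_X_pow]
      exact if_neg (fun h => hb h.symm)
    · intro hb; simp at hb
  have hΦdeg : (∑ i ∈ Finset.range 19, (Polynomial.X : Polynomial (ZMod p)) ^ i).degree ≠ 0 := by
    intro h0
    have h1 := Polynomial.le_degree_of_ne_zero (n := 1)
      (p := ∑ i ∈ Finset.range 19, (Polynomial.X : Polynomial (ZMod p)) ^ i)
      (by rw [hΦc1]; exact one_ne_zero)
    rw [h0] at h1
    norm_num at h1
  letI : Nontrivial (AdjoinRoot (∑ i ∈ Finset.range 19, (Polynomial.X : Polynomial (ZMod p)) ^ i)) :=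
    AdjoinRoot.nontrivial _ hΦdeg
  set A := AdjoinRoot (∑ i ∈ Finset.range 19, (Polynomial.X : Polynomial (ZMod p)) ^ i) with hA
  set z : A := AdjoinRoot.root _ with hzdef
  have inj : Function.Injective (algebraMap (ZMod p) A) := (algebraMap (ZMod p) A).injective
  haveI : CharP A p := charP_of_injective_algebraMap inj p
  have hzsum : ∑ i ∈ Finset.range 19, z ^ i = 0 := by
    have h := AdjoinRoot.eval₂_root (∑ i ∈ Finset.range 19, (Polynomial.X : Polynomial (ZMod p)) ^ i)
    simpa [Polynomial.eval₂_finset_sum] using h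
  simp only [Finset.sum_range_succ, Finset.sum_range_zero] at hzsum
  have hz : 1 + z + z^2 + z^3 + z^4 + z^5 + z^6 + z^7 + z^8 + z^9 + z^10 + z^11 + z^12 + z^13 + z^14 + z^15 + z^16 + z^17 + z^18 = 0 := by
    linear_combination hzsum
  have hz19 : z ^ 19 = 1 := by linear_combination (z - 1) * hz
  have hb0 : s7d0 z = s7dd z 1 := (s7_dd_eval_1 z).symm
  have hb1 : s7d1 z = s7dd z 2 := (s7_dd_eval_2 z).symm
  have hb2 : s7d2 z = s7dd z 4 := (s7_dd_eval_4 z).symm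
  have hq : p ^ a ≠ 0 := pow_ne_zero a hp.pos.ne'
  have hr19 : ¬ (19 ∣ p ^ a) := by
    intro hdvd
    have h19p : (19:ℕ) ∣ p := Nat.Prime.dvd_of_dvd_pow (by norm_num) hdvd
    exact hp19 (((Nat.prime_dvd_prime_iff_eq (by norm_num) hp).mp h19p).symm)
  have hrlt : p ^ a % 19 < 19 := Nat.mod_lt _ (by norm_num)
  have hrne : p ^ a % 19 ≠ 0 := fun h => hr19 (Nat.dvd_of_mod_eq_zero h)
  have transfer : ∀ v : ℤ, ((19 * s7W (p ^ a - 1) : ℤ) : A) = ((19 * v : ℤ) : A) →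
      ((s7W (p ^ a - 1) : ℤ) : ZMod p) = v := by
    intro v hv
    rw [show (((19 * s7W (p ^ a - 1) : ℤ)) : A) = algebraMap (ZMod p) A ((19 * s7W (p ^ a - 1) : ℤ) : ZMod p) from (map_intCast _ _).symm,
      show (((19 * v : ℤ)) : A) = algebraMap (ZMod p) A ((19 * v : ℤ) : ZMod p) from (map_intCast _ _).symm] at hv
    have h2 := inj hv
    push_cast at h2
    exact mul_left_cancel₀ (s7_nineteen_ne p hp19) h2
  have hcase : p ^ a % 19 = 1 ∨ p ^ a % 19 = 2 ∨ p ^ a % 19 = 3 ∨ p ^ a % 19 = 4 ∨ p ^ a % 19 = 5 ∨ p ^ a % 19 = 6 ∨ p ^ a % 19 = 7 ∨ p ^ a % 19 = 8 ∨ p ^ a % 19 = 9 ∨ p ^ a % 19 = 10 ∨ p ^ a % 19 = 11 ∨ p ^ a % 19 = 12 ∨ p ^ a % 19 = 13 ∨ p ^ a % 19 = 14 ∨ p ^ a % 19 = 15 ∨ p ^ a % 19 = 16 ∨ p ^ a % 19 = 17 ∨ p ^ a % 19 = 18 := by omega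
  rcases hcase with hr|hr|hr|hr|hr|hr|hr|hr|hr|hr|hr|hr|hr|hr|hr|hr|hr|hr
  · -- r = 1
    rw [hr, show s7val 1 = (1 : ℤ) from by norm_num [s7val]]
    refine transfer (1 : ℤ) ?_
    have H0 : s7d0 z ^ p ^ a = s7d0 z := by
      conv_lhs => rw [hb0]
      rw [s7_dd_frob_pow p z hz19, s7_dd_mod, show (1 * p ^ a) % 19 = 1 from by omega, s7_dd_eval_1]
    have H1 : s7d1 z ^ p ^ a = s7d1 z := by
      conv_lhs => rw [hb1]
      rw [s7_dd_frob_pow p z hz19, s7_dd_mod, show (2 * p ^ a) % 19 = 2 from by omega, s7_dd_eval_2]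
    have H2 : s7d2 z ^ p ^ a = s7d2 z := by
      conv_lhs => rw [hb2]
      rw [s7_dd_frob_pow p z hz19, s7_dd_mod, show (4 * p ^ a) % 19 = 4 from by omega, s7_dd_eval_4]
    refine s7_core p z (s7d0 z) (s7d1 z) (s7d2 z) hz a ha (1 : ℤ) H0 H1 H2 ?_
    have hV := s7_V0 z hz
    rw [show ((19 * (1 : ℤ) : ℤ) : A) = (19 : A) from by push_cast; norm_num]
    linear_combination hV
  · -- r = 2
    rw [hr, show s7val 2 = (-4 : ℤ) from by norm_num [s7val]]
    refine transfer (-4 : ℤ) ?_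
    have H0 : s7d0 z ^ p ^ a = s7d1 z := by
      conv_lhs => rw [hb0]
      rw [s7_dd_frob_pow p z hz19, s7_dd_mod, show (1 * p ^ a) % 19 = 2 from by omega, s7_dd_eval_2]
    have H1 : s7d1 z ^ p ^ a = s7d2 z := by
      conv_lhs => rw [hb1]
      rw [s7_dd_frob_pow p z hz19, s7_dd_mod, show (2 * p ^ a) % 19 = 4 from by omega, s7_dd_eval_4]
    have H2 : s7d2 z ^ p ^ a = s7d0 z := by
      conv_lhs => rw [hb2]
      rw [s7_dd_frob_pow p z hz19, s7_dd_mod, show (4 * p ^ a) % 19 = 8 from by omega, s7_dd_eval_8]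
    refine s7_core p z (s7d1 z) (s7d2 z) (s7d0 z) hz a ha (-4 : ℤ) H0 H1 H2 ?_
    have hV := s7_V1 z hz
    rw [show ((19 * (-4 : ℤ) : ℤ) : A) = (-76 : A) from by push_cast; norm_num]
    linear_combination hV
  · -- r = 3
    rw [hr, show s7val 3 = (-4 : ℤ) from by norm_num [s7val]]
    refine transfer (-4 : ℤ) ?_
    have H0 : s7d0 z ^ p ^ a = s7d1 z := by
      conv_lhs => rw [hb0]
      rw [s7_dd_frob_pow p z hz19, s7_dd_mod, show (1 * p ^ a) % 19 = 3 from by omega, s7_dd_eval_3]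
    have H1 : s7d1 z ^ p ^ a = s7d2 z := by
      conv_lhs => rw [hb1]
      rw [s7_dd_frob_pow p z hz19, s7_dd_mod, show (2 * p ^ a) % 19 = 6 from by omega, s7_dd_eval_6]
    have H2 : s7d2 z ^ p ^ a = s7d0 z := by
      conv_lhs => rw [hb2]
      rw [s7_dd_frob_pow p z hz19, s7_dd_mod, show (4 * p ^ a) % 19 = 12 from by omega, s7_dd_eval_12]
    refine s7_core p z (s7d1 z) (s7d2 z) (s7d0 z) hz a ha (-4 : ℤ) H0 H1 H2 ?_
    have hV := s7_V1 z hz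
    rw [show ((19 * (-4 : ℤ) : ℤ) : A) = (-76 : A) from by push_cast; norm_num]
    linear_combination hV
  · -- r = 4
    rw [hr, show s7val 4 = (3 : ℤ) from by norm_num [s7val]]
    refine transfer (3 : ℤ) ?_
    have H0 : s7d0 z ^ p ^ a = s7d2 z := by
      conv_lhs => rw [hb0]
      rw [s7_dd_frob_pow p z hz19, s7_dd_mod, show (1 * p ^ a) % 19 = 4 from by omega, s7_dd_eval_4]
    have H1 : s7d1 z ^ p ^ a = s7d0 z := by
      conv_lhs => rw [hb1]
      rw [s7_dd_frob_pow p z hz19, s7_dd_mod, show (2 * p ^ a) % 19 = 8 from by omega, s7_dd_eval_8]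
    have H2 : s7d2 z ^ p ^ a = s7d1 z := by
      conv_lhs => rw [hb2]
      rw [s7_dd_frob_pow p z hz19, s7_dd_mod, show (4 * p ^ a) % 19 = 16 from by omega, s7_dd_eval_16]
    refine s7_core p z (s7d2 z) (s7d0 z) (s7d1 z) hz a ha (3 : ℤ) H0 H1 H2 ?_
    have hV := s7_V2 z hz
    rw [show ((19 * (3 : ℤ) : ℤ) : A) = (57 : A) from by push_cast; norm_num]
    linear_combination hV
  · -- r = 5
    rw [hr, show s7val 5 = (-4 : ℤ) from by norm_num [s7val]]
    refine transfer (-4 : ℤ) ?_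
    have H0 : s7d0 z ^ p ^ a = s7d1 z := by
      conv_lhs => rw [hb0]
      rw [s7_dd_frob_pow p z hz19, s7_dd_mod, show (1 * p ^ a) % 19 = 5 from by omega, s7_dd_eval_5]
    have H1 : s7d1 z ^ p ^ a = s7d2 z := by
      conv_lhs => rw [hb1]
      rw [s7_dd_frob_pow p z hz19, s7_dd_mod, show (2 * p ^ a) % 19 = 10 from by omega, s7_dd_eval_10]
    have H2 : s7d2 z ^ p ^ a = s7d0 z := by
      conv_lhs => rw [hb2]
      rw [s7_dd_frob_pow p z hz19, s7_dd_mod, show (4 * p ^ a) % 19 = 1 from by omega, s7_dd_eval_1]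
    refine s7_core p z (s7d1 z) (s7d2 z) (s7d0 z) hz a ha (-4 : ℤ) H0 H1 H2 ?_
    have hV := s7_V1 z hz
    rw [show ((19 * (-4 : ℤ) : ℤ) : A) = (-76 : A) from by push_cast; norm_num]
    linear_combination hV
  · -- r = 6
    rw [hr, show s7val 6 = (3 : ℤ) from by norm_num [s7val]]
    refine transfer (3 : ℤ) ?_
    have H0 : s7d0 z ^ p ^ a = s7d2 z := by
      conv_lhs => rw [hb0]
      rw [s7_dd_frob_pow p z hz19, s7_dd_mod, show (1 * p ^ a) % 19 = 6 from by omega, s7_dd_eval_6]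
    have H1 : s7d1 z ^ p ^ a = s7d0 z := by
      conv_lhs => rw [hb1]
      rw [s7_dd_frob_pow p z hz19, s7_dd_mod, show (2 * p ^ a) % 19 = 12 from by omega, s7_dd_eval_12]
    have H2 : s7d2 z ^ p ^ a = s7d1 z := by
      conv_lhs => rw [hb2]
      rw [s7_dd_frob_pow p z hz19, s7_dd_mod, show (4 * p ^ a) % 19 = 5 from by omega, s7_dd_eval_5]
    refine s7_core p z (s7d2 z) (s7d0 z) (s7d1 z) hz a ha (3 : ℤ) H0 H1 H2 ?_
    have hV := s7_V2 z hz
    rw [show ((19 * (3 : ℤ) : ℤ) : A) = (57 : A) from by push_cast; norm_num]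
    linear_combination hV
  · -- r = 7
    rw [hr, show s7val 7 = (1 : ℤ) from by norm_num [s7val]]
    refine transfer (1 : ℤ) ?_
    have H0 : s7d0 z ^ p ^ a = s7d0 z := by
      conv_lhs => rw [hb0]
      rw [s7_dd_frob_pow p z hz19, s7_dd_mod, show (1 * p ^ a) % 19 = 7 from by omega, s7_dd_eval_7]
    have H1 : s7d1 z ^ p ^ a = s7d1 z := by
      conv_lhs => rw [hb1]
      rw [s7_dd_frob_pow p z hz19, s7_dd_mod, show (2 * p ^ a) % 19 = 14 from by omega, s7_dd_eval_14]
    have H2 : s7d2 z ^ p ^ a = s7d2 z := by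
      conv_lhs => rw [hb2]
      rw [s7_dd_frob_pow p z hz19, s7_dd_mod, show (4 * p ^ a) % 19 = 9 from by omega, s7_dd_eval_9]
    refine s7_core p z (s7d0 z) (s7d1 z) (s7d2 z) hz a ha (1 : ℤ) H0 H1 H2 ?_
    have hV := s7_V0 z hz
    rw [show ((19 * (1 : ℤ) : ℤ) : A) = (19 : A) from by push_cast; norm_num]
    linear_combination hV
  · -- r = 8
    rw [hr, show s7val 8 = (1 : ℤ) from by norm_num [s7val]]
    refine transfer (1 : ℤ) ?_
    have H0 : s7d0 z ^ p ^ a = s7d0 z := by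
      conv_lhs => rw [hb0]
      rw [s7_dd_frob_pow p z hz19, s7_dd_mod, show (1 * p ^ a) % 19 = 8 from by omega, s7_dd_eval_8]
    have H1 : s7d1 z ^ p ^ a = s7d1 z := by
      conv_lhs => rw [hb1]
      rw [s7_dd_frob_pow p z hz19, s7_dd_mod, show (2 * p ^ a) % 19 = 16 from by omega, s7_dd_eval_16]
    have H2 : s7d2 z ^ p ^ a = s7d2 z := by
      conv_lhs => rw [hb2]
      rw [s7_dd_frob_pow p z hz19, s7_dd_mod, show (4 * p ^ a) % 19 = 13 from by omega, s7_dd_eval_13]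
    refine s7_core p z (s7d0 z) (s7d1 z) (s7d2 z) hz a ha (1 : ℤ) H0 H1 H2 ?_
    have hV := s7_V0 z hz
    rw [show ((19 * (1 : ℤ) : ℤ) : A) = (19 : A) from by push_cast; norm_num]
    linear_combination hV
  · -- r = 9
    rw [hr, show s7val 9 = (3 : ℤ) from by norm_num [s7val]]
    refine transfer (3 : ℤ) ?_
    have H0 : s7d0 z ^ p ^ a = s7d2 z := by
      conv_lhs => rw [hb0]
      rw [s7_dd_frob_pow p z hz19, s7_dd_mod, show (1 * p ^ a) % 19 = 9 from by omega, s7_dd_eval_9]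
    have H1 : s7d1 z ^ p ^ a = s7d0 z := by
      conv_lhs => rw [hb1]
      rw [s7_dd_frob_pow p z hz19, s7_dd_mod, show (2 * p ^ a) % 19 = 18 from by omega, s7_dd_eval_18]
    have H2 : s7d2 z ^ p ^ a = s7d1 z := by
      conv_lhs => rw [hb2]
      rw [s7_dd_frob_pow p z hz19, s7_dd_mod, show (4 * p ^ a) % 19 = 17 from by omega, s7_dd_eval_17]
    refine s7_core p z (s7d2 z) (s7d0 z) (s7d1 z) hz a ha (3 : ℤ) H0 H1 H2 ?_
    have hV := s7_V2 z hz
    rw [show ((19 * (3 : ℤ) : ℤ) : A) = (57 : A) from by push_cast; norm_num]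
    linear_combination hV
  · -- r = 10
    rw [hr, show s7val 10 = (3 : ℤ) from by norm_num [s7val]]
    refine transfer (3 : ℤ) ?_
    have H0 : s7d0 z ^ p ^ a = s7d2 z := by
      conv_lhs => rw [hb0]
      rw [s7_dd_frob_pow p z hz19, s7_dd_mod, show (1 * p ^ a) % 19 = 10 from by omega, s7_dd_eval_10]
    have H1 : s7d1 z ^ p ^ a = s7d0 z := by
      conv_lhs => rw [hb1]
      rw [s7_dd_frob_pow p z hz19, s7_dd_mod, show (2 * p ^ a) % 19 = 1 from by omega, s7_dd_eval_1]
    have H2 : s7d2 z ^ p ^ a = s7d1 z := by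
      conv_lhs => rw [hb2]
      rw [s7_dd_frob_pow p z hz19, s7_dd_mod, show (4 * p ^ a) % 19 = 2 from by omega, s7_dd_eval_2]
    refine s7_core p z (s7d2 z) (s7d0 z) (s7d1 z) hz a ha (3 : ℤ) H0 H1 H2 ?_
    have hV := s7_V2 z hz
    rw [show ((19 * (3 : ℤ) : ℤ) : A) = (57 : A) from by push_cast; norm_num]
    linear_combination hV
  · -- r = 11
    rw [hr, show s7val 11 = (1 : ℤ) from by norm_num [s7val]]
    refine transfer (1 : ℤ) ?_
    have H0 : s7d0 z ^ p ^ a = s7d0 z := by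
      conv_lhs => rw [hb0]
      rw [s7_dd_frob_pow p z hz19, s7_dd_mod, show (1 * p ^ a) % 19 = 11 from by omega, s7_dd_eval_11]
    have H1 : s7d1 z ^ p ^ a = s7d1 z := by
      conv_lhs => rw [hb1]
      rw [s7_dd_frob_pow p z hz19, s7_dd_mod, show (2 * p ^ a) % 19 = 3 from by omega, s7_dd_eval_3]
    have H2 : s7d2 z ^ p ^ a = s7d2 z := by
      conv_lhs => rw [hb2]
      rw [s7_dd_frob_pow p z hz19, s7_dd_mod, show (4 * p ^ a) % 19 = 6 from by omega, s7_dd_eval_6]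
    refine s7_core p z (s7d0 z) (s7d1 z) (s7d2 z) hz a ha (1 : ℤ) H0 H1 H2 ?_
    have hV := s7_V0 z hz
    rw [show ((19 * (1 : ℤ) : ℤ) : A) = (19 : A) from by push_cast; norm_num]
    linear_combination hV
  · -- r = 12
    rw [hr, show s7val 12 = (1 : ℤ) from by norm_num [s7val]]
    refine transfer (1 : ℤ) ?_
    have H0 : s7d0 z ^ p ^ a = s7d0 z := by
      conv_lhs => rw [hb0]
      rw [s7_dd_frob_pow p z hz19, s7_dd_mod, show (1 * p ^ a) % 19 = 12 from by omega, s7_dd_eval_12]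
    have H1 : s7d1 z ^ p ^ a = s7d1 z := by
      conv_lhs => rw [hb1]
      rw [s7_dd_frob_pow p z hz19, s7_dd_mod, show (2 * p ^ a) % 19 = 5 from by omega, s7_dd_eval_5]
    have H2 : s7d2 z ^ p ^ a = s7d2 z := by
      conv_lhs => rw [hb2]
      rw [s7_dd_frob_pow p z hz19, s7_dd_mod, show (4 * p ^ a) % 19 = 10 from by omega, s7_dd_eval_10]
    refine s7_core p z (s7d0 z) (s7d1 z) (s7d2 z) hz a ha (1 : ℤ) H0 H1 H2 ?_
    have hV := s7_V0 z hz
    rw [show ((19 * (1 : ℤ) : ℤ) : A) = (19 : A) from by push_cast; norm_num]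
    linear_combination hV
  · -- r = 13
    rw [hr, show s7val 13 = (3 : ℤ) from by norm_num [s7val]]
    refine transfer (3 : ℤ) ?_
    have H0 : s7d0 z ^ p ^ a = s7d2 z := by
      conv_lhs => rw [hb0]
      rw [s7_dd_frob_pow p z hz19, s7_dd_mod, show (1 * p ^ a) % 19 = 13 from by omega, s7_dd_eval_13]
    have H1 : s7d1 z ^ p ^ a = s7d0 z := by
      conv_lhs => rw [hb1]
      rw [s7_dd_frob_pow p z hz19, s7_dd_mod, show (2 * p ^ a) % 19 = 7 from by omega, s7_dd_eval_7]
    have H2 : s7d2 z ^ p ^ a = s7d1 z := by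
      conv_lhs => rw [hb2]
      rw [s7_dd_frob_pow p z hz19, s7_dd_mod, show (4 * p ^ a) % 19 = 14 from by omega, s7_dd_eval_14]
    refine s7_core p z (s7d2 z) (s7d0 z) (s7d1 z) hz a ha (3 : ℤ) H0 H1 H2 ?_
    have hV := s7_V2 z hz
    rw [show ((19 * (3 : ℤ) : ℤ) : A) = (57 : A) from by push_cast; norm_num]
    linear_combination hV
  · -- r = 14
    rw [hr, show s7val 14 = (-4 : ℤ) from by norm_num [s7val]]
    refine transfer (-4 : ℤ) ?_
    have H0 : s7d0 z ^ p ^ a = s7d1 z := by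
      conv_lhs => rw [hb0]
      rw [s7_dd_frob_pow p z hz19, s7_dd_mod, show (1 * p ^ a) % 19 = 14 from by omega, s7_dd_eval_14]
    have H1 : s7d1 z ^ p ^ a = s7d2 z := by
      conv_lhs => rw [hb1]
      rw [s7_dd_frob_pow p z hz19, s7_dd_mod, show (2 * p ^ a) % 19 = 9 from by omega, s7_dd_eval_9]
    have H2 : s7d2 z ^ p ^ a = s7d0 z := by
      conv_lhs => rw [hb2]
      rw [s7_dd_frob_pow p z hz19, s7_dd_mod, show (4 * p ^ a) % 19 = 18 from by omega, s7_dd_eval_18]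
    refine s7_core p z (s7d1 z) (s7d2 z) (s7d0 z) hz a ha (-4 : ℤ) H0 H1 H2 ?_
    have hV := s7_V1 z hz
    rw [show ((19 * (-4 : ℤ) : ℤ) : A) = (-76 : A) from by push_cast; norm_num]
    linear_combination hV
  · -- r = 15
    rw [hr, show s7val 15 = (3 : ℤ) from by norm_num [s7val]]
    refine transfer (3 : ℤ) ?_
    have H0 : s7d0 z ^ p ^ a = s7d2 z := by
      conv_lhs => rw [hb0]
      rw [s7_dd_frob_pow p z hz19, s7_dd_mod, show (1 * p ^ a) % 19 = 15 from by omega, s7_dd_eval_15]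
    have H1 : s7d1 z ^ p ^ a = s7d0 z := by
      conv_lhs => rw [hb1]
      rw [s7_dd_frob_pow p z hz19, s7_dd_mod, show (2 * p ^ a) % 19 = 11 from by omega, s7_dd_eval_11]
    have H2 : s7d2 z ^ p ^ a = s7d1 z := by
      conv_lhs => rw [hb2]
      rw [s7_dd_frob_pow p z hz19, s7_dd_mod, show (4 * p ^ a) % 19 = 3 from by omega, s7_dd_eval_3]
    refine s7_core p z (s7d2 z) (s7d0 z) (s7d1 z) hz a ha (3 : ℤ) H0 H1 H2 ?_
    have hV := s7_V2 z hz
    rw [show ((19 * (3 : ℤ) : ℤ) : A) = (57 : A) from by push_cast; norm_num]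
    linear_combination hV
  · -- r = 16
    rw [hr, show s7val 16 = (-4 : ℤ) from by norm_num [s7val]]
    refine transfer (-4 : ℤ) ?_
    have H0 : s7d0 z ^ p ^ a = s7d1 z := by
      conv_lhs => rw [hb0]
      rw [s7_dd_frob_pow p z hz19, s7_dd_mod, show (1 * p ^ a) % 19 = 16 from by omega, s7_dd_eval_16]
    have H1 : s7d1 z ^ p ^ a = s7d2 z := by
      conv_lhs => rw [hb1]
      rw [s7_dd_frob_pow p z hz19, s7_dd_mod, show (2 * p ^ a) % 19 = 13 from by omega, s7_dd_eval_13]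
    have H2 : s7d2 z ^ p ^ a = s7d0 z := by
      conv_lhs => rw [hb2]
      rw [s7_dd_frob_pow p z hz19, s7_dd_mod, show (4 * p ^ a) % 19 = 7 from by omega, s7_dd_eval_7]
    refine s7_core p z (s7d1 z) (s7d2 z) (s7d0 z) hz a ha (-4 : ℤ) H0 H1 H2 ?_
    have hV := s7_V1 z hz
    rw [show ((19 * (-4 : ℤ) : ℤ) : A) = (-76 : A) from by push_cast; norm_num]
    linear_combination hV
  · -- r = 17
    rw [hr, show s7val 17 = (-4 : ℤ) from by norm_num [s7val]]
    refine transfer (-4 : ℤ) ?_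
    have H0 : s7d0 z ^ p ^ a = s7d1 z := by
      conv_lhs => rw [hb0]
      rw [s7_dd_frob_pow p z hz19, s7_dd_mod, show (1 * p ^ a) % 19 = 17 from by omega, s7_dd_eval_17]
    have H1 : s7d1 z ^ p ^ a = s7d2 z := by
      conv_lhs => rw [hb1]
      rw [s7_dd_frob_pow p z hz19, s7_dd_mod, show (2 * p ^ a) % 19 = 15 from by omega, s7_dd_eval_15]
    have H2 : s7d2 z ^ p ^ a = s7d0 z := by
      conv_lhs => rw [hb2]
      rw [s7_dd_frob_pow p z hz19, s7_dd_mod, show (4 * p ^ a) % 19 = 11 from by omega, s7_dd_eval_11]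
    refine s7_core p z (s7d1 z) (s7d2 z) (s7d0 z) hz a ha (-4 : ℤ) H0 H1 H2 ?_
    have hV := s7_V1 z hz
    rw [show ((19 * (-4 : ℤ) : ℤ) : A) = (-76 : A) from by push_cast; norm_num]
    linear_combination hV
  · -- r = 18
    rw [hr, show s7val 18 = (1 : ℤ) from by norm_num [s7val]]
    refine transfer (1 : ℤ) ?_
    have H0 : s7d0 z ^ p ^ a = s7d0 z := by
      conv_lhs => rw [hb0]
      rw [s7_dd_frob_pow p z hz19, s7_dd_mod, show (1 * p ^ a) % 19 = 18 from by omega, s7_dd_eval_18]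
    have H1 : s7d1 z ^ p ^ a = s7d1 z := by
      conv_lhs => rw [hb1]
      rw [s7_dd_frob_pow p z hz19, s7_dd_mod, show (2 * p ^ a) % 19 = 17 from by omega, s7_dd_eval_17]
    have H2 : s7d2 z ^ p ^ a = s7d2 z := by
      conv_lhs => rw [hb2]
      rw [s7_dd_frob_pow p z hz19, s7_dd_mod, show (4 * p ^ a) % 19 = 15 from by omega, s7_dd_eval_15]
    refine s7_core p z (s7d0 z) (s7d1 z) (s7d2 z) hz a ha (1 : ℤ) H0 H1 H2 ?_
    have hV := s7_V0 z hz
    rw [show ((19 * (1 : ℤ) : ℤ) : A) = (19 : A) from by push_cast; norm_num]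
    linear_combination hV
open Polynomial in
lemma s7_coeff_catalan (m : ℕ) :
    ((1 - 2 * X) * (1 + X) ^ (3 * m) : Polynomial ℤ).coeff m = catalan2 m := by
  have hexp : ((1 - 2 * X) * (1 + X) ^ (3 * m) : Polynomial ℤ)
      = (1 + X) ^ (3 * m) - C 2 * (X * (1 + X) ^ (3 * m)) := by
    rw [map_ofNat]
    ring
  cases m with
  | zero =>
      simp [catalan2, ibinom]
  | succ j =>
      rw [hexp, Polynomial.coeff_sub, Polynomial.coeff_C_mul]
      rw [Polynomial.coeff_X_mul, Polynomial.coeff_one_add_X_pow, Polynomial.coeff_one_add_X_pow]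
      have h1 : catalan2 (j+1) = ((3*(j+1)).choose (j+1) : ℤ) - 2 * ((3*(j+1)).choose j : ℤ) := by
        unfold catalan2 ibinom
        rw [if_pos (by positivity), if_pos (by omega),
          show (((j+1 : ℕ) : ℤ)).toNat = j + 1 from by omega,
          show (((j+1 : ℕ) : ℤ) - 1).toNat = j from by omega]
      rw [h1]
      try push_cast
      try ring

open Polynomial in
lemma s7_R_eq (M : ℕ) :
    (((1 - 2 * X) * ((1 + X) ^ 3 - 19 * X) ^ M : Polynomial ℤ)).coeff M
      = ∑ j ∈ Finset.range (M + 1), (M.choose j : ℤ) * (-19) ^ (M - j) * catalan2 j := by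
  rw [show ((1 + X) ^ 3 - 19 * X : Polynomial ℤ) = (1 + X) ^ 3 + -(19 * X) from sub_eq_add_neg _ _,
    add_pow ((1 + X : Polynomial ℤ) ^ 3) (-(19 * X)) M, Finset.mul_sum, Polynomial.finset_sum_coeff]
  apply Finset.sum_congr rfl
  intro k hk
  have hk' : k ≤ M := Nat.lt_succ_iff.mp (Finset.mem_range.mp hk)
  have h1 : (1 - 2*X) * (((1+X)^3)^k * (-(19*X))^(M-k) * ((M.choose k : ℕ) : Polynomial ℤ))
      = ((-19 : ℤ)^(M-k) * (M.choose k : ℤ)) • (((1-2*X) * ((1+X)^3)^k) * X^(M-k)) := by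
    rw [zsmul_eq_mul]
    push_cast
    ring
  rw [h1, Polynomial.coeff_smul, Polynomial.coeff_mul_X_pow', if_pos (Nat.sub_le M k),
    Nat.sub_sub_self hk',
    show ((1+X : Polynomial ℤ)^3)^k = (1+X)^(3*k) from (pow_mul _ 3 k).symm,
    s7_coeff_catalan, smul_eq_mul]
  ring

open Polynomial in
noncomputable def s7Q (K : Type*) [CommRing K] : Polynomial K := 1 - 16 * X + 3 * X ^ 2 + X ^ 3

open Polynomial in
noncomputable def s7V (K : Type*) [CommRing K] (n : ℕ) : Polynomial K :=
  ∑ i ∈ Finset.range (n + 1), ((s7W i : ℤ) : Polynomial K) * X ^ i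

open Polynomial in
noncomputable def s7T (K : Type*) [CommRing K] (n : ℕ) : Polynomial K :=
  ((-(s7W (n+1)) : ℤ) : Polynomial K) + ((16 * s7W (n+1) - s7W (n+2) : ℤ) : Polynomial K) * X
    + ((s7W n : ℤ) : Polynomial K) * X ^ 2

open Polynomial in
lemma s7_QV (K : Type*) [CommRing K] : ∀ n : ℕ,
    s7Q K * s7V K n = 1 - 2 * X + X ^ (n + 1) * s7T K n := by
  intro n
  induction n with
  | zero =>
      unfold s7Q s7V s7T
      rw [Finset.sum_range_one]
      simp only [show (0:ℕ)+1 = 1 from rfl, show (0:ℕ)+2 = 2 from rfl,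
        show s7W 0 = 1 from rfl, show s7W 1 = 14 from rfl, show s7W 2 = 221 from rfl]
      push_cast
      ring
  | succ k ih =>
      have hs : s7V K (k+1) = s7V K k + ((s7W (k+1) : ℤ) : Polynomial K) * X ^ (k+1) := by
        unfold s7V
        rw [Finset.sum_range_succ]
      rw [hs, mul_add, ih]
      have hrec : s7W (k+3) = 16 * s7W (k+2) - 3 * s7W (k+1) - s7W k := rfl
      unfold s7T s7Q
      rw [show k+1+1 = k+2 from rfl, show k+1+2 = k+3 from rfl, hrec]
      push_cast
      ring

open Polynomial in
lemma s7_V_coeff (K : Type*) [CommRing K] (M : ℕ) : (s7V K M).coeff M = ((s7W M : ℤ) : K) := by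
  unfold s7V
  rw [Polynomial.finset_sum_coeff, Finset.sum_eq_single M]
  · rw [show ((s7W M : ℤ) : Polynomial K) = C ((s7W M : ℤ) : K) from (C_eq_intCast _).symm,
      Polynomial.coeff_C_mul, Polynomial.coeff_X_pow, if_pos rfl, mul_one]
  · intro b _ hb
    rw [show ((s7W b : ℤ) : Polynomial K) = C ((s7W b : ℤ) : K) from (C_eq_intCast _).symm,
      Polynomial.coeff_C_mul, Polynomial.coeff_X_pow, if_neg (fun h => hb h.symm), mul_zero]
  · intro h
    exact absurd (Finset.self_mem_range_succ M) h

open Polynomial in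
lemma s7_Qfrob (p : ℕ) [Fact p.Prime] (a : ℕ) :
    (s7Q (ZMod p)) ^ (p ^ a)
      = 1 - 16 * X ^ (p ^ a) + 3 * (X ^ (p ^ a)) ^ 2 + (X ^ (p ^ a)) ^ 3 := by
  have hconst : ∀ (c : ZMod p) (i : ℕ), (C c * X ^ i) ^ (p ^ a) = C c * X ^ (i * p ^ a) := by
    intro c i
    rw [mul_pow, ← Polynomial.C_pow, ZMod.pow_card_pow, ← pow_mul]
  have hQ' : s7Q (ZMod p) = (C 1 * X ^ 0 + C (-16) * X ^ 1) + (C 3 * X ^ 2 + C 1 * X ^ 3) := by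
    unfold s7Q
    rw [Polynomial.C_neg, map_ofNat, map_ofNat, C_1]
    ring
  rw [hQ', add_pow_char_pow, add_pow_char_pow, add_pow_char_pow, hconst, hconst, hconst, hconst]
  rw [Polynomial.C_neg, map_ofNat, map_ofNat, C_1]
  ring

open Polynomial in
lemma s7_coeff_W (p : ℕ) [Fact p.Prime] (a : ℕ) (ha : 0 < a) :
    (((1 - 2 * X) * ((1 + X) ^ 3 - 19 * X) ^ (p ^ a - 1) : Polynomial (ZMod p))).coeff (p ^ a - 1)
      = ((s7W (p ^ a - 1) : ℤ) : ZMod p) := by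
  have hp : p.Prime := Fact.out
  have hq : p ^ a ≠ 0 := pow_ne_zero a hp.pos.ne'
  set M := p ^ a - 1 with hMdef
  have hM : M + 1 = p ^ a := Nat.succ_pred_eq_of_pos (Nat.pos_of_ne_zero hq)
  have hQring : ((1 + X) ^ 3 - 19 * X : Polynomial (ZMod p)) = s7Q (ZMod p) := by
    unfold s7Q; ring
  rw [hQring]
  have hqv := s7_QV (ZMod p) M
  have hfrob := s7_Qfrob p a
  set D : Polynomial (ZMod p) := (1 - 2*X) * s7Q (ZMod p) ^ M - s7V (ZMod p) M with hD
  have hQD : s7Q (ZMod p) * D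
      = X ^ (p ^ a) * ((1 - 2*X) * (-16 + 3 * X ^ (p ^ a) + (X ^ (p ^ a)) ^ 2) - s7T (ZMod p) M) := by
    rw [hD, mul_sub, hqv,
      show s7Q (ZMod p) * ((1 - 2*X) * s7Q (ZMod p) ^ M) = (1 - 2*X) * s7Q (ZMod p) ^ (M+1) by ring,
      hM, hfrob]
    ring
  have hXQ : ¬ (X : Polynomial (ZMod p)) ∣ s7Q (ZMod p) := by
    rw [Polynomial.X_dvd_iff]
    intro h0
    have : (s7Q (ZMod p)).coeff 0 = 1 := by
      unfold s7Q
      simp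
    rw [this] at h0
    exact one_ne_zero h0
  have hdvd : (X : Polynomial (ZMod p)) ^ (p ^ a) ∣ D :=
    Polynomial.prime_X.pow_dvd_of_dvd_mul_left _ hXQ ⟨_, hQD⟩
  have hcoeff0 : D.coeff M = 0 :=
    (Polynomial.X_pow_dvd_iff.mp hdvd) M (by omega)
  have h2 : ((1 - 2*X) * s7Q (ZMod p) ^ M).coeff M = (s7V (ZMod p) M).coeff M := by
    have h3 := hcoeff0
    rw [hD, Polynomial.coeff_sub, sub_eq_zero] at h3
    exact h3
  rw [h2, s7_V_coeff]
open Polynomial in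
lemma s7_choose (p : ℕ) [Fact p.Prime] (a : ℕ) (ha : 0 < a) :
    ∀ k, k ≤ p ^ a - 1 → (((p ^ a - 1).choose k : ZMod p)) = (-1) ^ k := by
  have hp : p.Prime := Fact.out
  have hq : p ^ a ≠ 0 := pow_ne_zero a hp.pos.ne'
  set M := p ^ a - 1 with hMdef
  have hM : M + 1 = p ^ a := Nat.succ_pred_eq_of_pos (Nat.pos_of_ne_zero hq)
  have hchar : (1 + X : Polynomial (ZMod p)) ^ (p ^ a) = 1 + X ^ (p ^ a) := by
    rw [add_pow_char_pow, one_pow]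
  have hm1 : ((-1 : ZMod p)) ^ (M + 1) = -1 := by
    rcases hp.eq_two_or_odd' with h2 | hodd
    · subst h2
      rw [show (-1 : ZMod 2) = 1 from rfl, one_pow]
      try decide
    · rw [hM]; exact (hodd.pow).neg_one_pow
  have hE := geom_sum_mul (-X : Polynomial (ZMod p)) (M + 1)
  have hnegX : ((-X : Polynomial (ZMod p))) ^ (M + 1) = - (X ^ (M + 1)) := by
    rw [neg_pow, show ((-1 : Polynomial (ZMod p))) ^ (M + 1) = -1 from by
      rw [show (-1 : Polynomial (ZMod p)) = C (-1) from by simp, ← map_pow, hm1]; try simp,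
      neg_one_mul]
  have hpow : (1 + X : Polynomial (ZMod p)) ^ M * (X + 1) = 1 + X ^ (M + 1) := by
    rw [show (1 + X : Polynomial (ZMod p)) ^ M * (X + 1) = (1 + X) ^ (M + 1) from by ring,
      hM, hchar]
  have hEE : (∑ i ∈ Finset.range (M + 1), (-X : Polynomial (ZMod p)) ^ i) * (X + 1)
      = (1 + X) ^ M * (X + 1) := by
    rw [hnegX] at hE
    rw [hpow]
    linear_combination -hE
  have hXne : (X + 1 : Polynomial (ZMod p)) ≠ 0 := by
    have h := Polynomial.X_add_C_ne_zero (1 : ZMod p)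
    rwa [C_1] at h
  have hcancel : ∑ i ∈ Finset.range (M + 1), (-X : Polynomial (ZMod p)) ^ i = (1 + X) ^ M :=
    mul_right_cancel₀ hXne hEE
  intro k hk
  have hL : (∑ i ∈ Finset.range (M + 1), (-X : Polynomial (ZMod p)) ^ i).coeff k = (-1) ^ k := by
    rw [Polynomial.finset_sum_coeff, Finset.sum_eq_single k]
    · rw [neg_pow, show ((-1 : Polynomial (ZMod p))) ^ k = C ((-1 : ZMod p) ^ k) from by
        rw [map_pow]; simp, Polynomial.coeff_C_mul, Polynomial.coeff_X_pow, if_pos rfl, mul_one]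
    · intro b _ hb
      rw [neg_pow, show ((-1 : Polynomial (ZMod p))) ^ b = C ((-1 : ZMod p) ^ b) from by
        rw [map_pow]; simp, Polynomial.coeff_C_mul, Polynomial.coeff_X_pow,
        if_neg (fun h => hb h.symm), mul_zero]
    · intro hk2
      exact absurd (Finset.mem_range.mpr (by omega)) hk2
  have hR : ((1 + X : Polynomial (ZMod p)) ^ M).coeff k = (M.choose k : ZMod p) :=
    Polynomial.coeff_one_add_X_pow (ZMod p) M k
  rw [← hR, ← hcancel, hL]

open Polynomial in
lemma s7_sum_eq (p : ℕ) [Fact p.Prime] (hp19 : p ≠ 19) (a : ℕ) (ha : 0 < a) :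
    (∑ k ∈ Finset.range (p ^ a), (catalan2 k : ZMod p) * ((19 : ZMod p) ^ k)⁻¹)
      = ((s7W (p ^ a - 1) : ℤ) : ZMod p) := by
  have hp : p.Prime := Fact.out
  have hq : p ^ a ≠ 0 := pow_ne_zero a hp.pos.ne'
  set M := p ^ a - 1 with hMdef
  have hM : M + 1 = p ^ a := Nat.succ_pred_eq_of_pos (Nat.pos_of_ne_zero hq)
  have h19 : (19 : ZMod p) ≠ 0 := s7_nineteen_ne p hp19
  have h19pow : (19 : ZMod p) ^ p ^ a = 19 := ZMod.pow_card_pow _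
  have h19M : (19 : ZMod p) ^ M = 1 := by
    have h := h19pow
    rw [← hM, pow_succ] at h
    exact mul_right_cancel₀ h19 (by rw [h, one_mul])
  have hm1M : ((-1 : ZMod p)) ^ M = 1 := by
    rcases hp.eq_two_or_odd' with h2 | hodd
    · subst h2
      rw [show (-1 : ZMod 2) = 1 from rfl, one_pow]
    · have hoddpa : Odd (p ^ a) := hodd.pow
      have heven : Even M := by
        rcases hoddpa with ⟨t, ht⟩
        exact ⟨t, by omega⟩
      exact heven.neg_one_pow
  have step1 : (∑ k ∈ Finset.range (p ^ a), (catalan2 k : ZMod p) * ((19 : ZMod p) ^ k)⁻¹)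
      = ∑ k ∈ Finset.range (M + 1),
          (((M.choose k : ℤ) * (-19) ^ (M - k) * catalan2 k : ℤ) : ZMod p) := by
    rw [← hM]
    apply Finset.sum_congr rfl
    intro k hk
    have hk' : k ≤ M := by
      have := Finset.mem_range.mp hk
      omega
    have hinv : ((19 : ZMod p) ^ k)⁻¹ = (19 : ZMod p) ^ (M - k) :=
      inv_eq_of_mul_eq_one_right (by rw [← pow_add, Nat.add_sub_cancel' hk', h19M])
    rw [hinv]
    push_cast
    rw [s7_choose p a ha k hk', neg_pow (19 : ZMod p) (M - k)]
    have hsgn : ((-1 : ZMod p)) ^ k * (-1) ^ (M - k) = 1 := by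
      rw [← pow_add, Nat.add_sub_cancel' hk', hm1M]
    linear_combination (-(catalan2 k : ZMod p) * (19 : ZMod p) ^ (M - k)) * hsgn
  rw [step1, ← Int.cast_sum, ← s7_R_eq M]
  have hpolymap : Polynomial.map (Int.castRingHom (ZMod p))
      ((1 - 2 * X) * ((1 + X) ^ 3 - 19 * X) ^ M : Polynomial ℤ)
      = ((1 - 2 * X) * ((1 + X) ^ 3 - 19 * X) ^ M : Polynomial (ZMod p)) := by
    simp only [Polynomial.map_mul, Polynomial.map_pow, Polynomial.map_sub, Polynomial.map_add,
      Polynomial.map_one, Polynomial.map_X, Polynomial.map_ofNat]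
  have hcast : ((((1 - 2 * X) * ((1 + X) ^ 3 - 19 * X) ^ M : Polynomial ℤ)).coeff M : ZMod p)
      = (((1 - 2 * X) * ((1 + X) ^ 3 - 19 * X) ^ M : Polynomial (ZMod p))).coeff M := by
    rw [← hpolymap, Polynomial.coeff_map]
    simp
  rw [hcast, hMdef, s7_coeff_W p a ha]
theorem stmt_7 (p : ℕ) (hp : p.Prime) (hp19 : p ≠ 19) (a : ℕ) (ha : 0 < a) :
    (p ^ a % 19 = 1 ∨ p ^ a % 19 = 18 ∨ p ^ a % 19 = 7 ∨ p ^ a % 19 = 12 ∨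
        p ^ a % 19 = 8 ∨ p ^ a % 19 = 11 →
      (∑ k ∈ Finset.range (p ^ a),
        (catalan2 k : ZMod p) * ((19 : ZMod p) ^ k)⁻¹) = 1) ∧
    (p ^ a % 19 = 2 ∨ p ^ a % 19 = 17 ∨ p ^ a % 19 = 3 ∨ p ^ a % 19 = 16 ∨
        p ^ a % 19 = 5 ∨ p ^ a % 19 = 14 →
      (∑ k ∈ Finset.range (p ^ a),
        (catalan2 k : ZMod p) * ((19 : ZMod p) ^ k)⁻¹) = -4) ∧
    (p ^ a % 19 = 4 ∨ p ^ a % 19 = 15 ∨ p ^ a % 19 = 6 ∨ p ^ a % 19 = 13 ∨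
        p ^ a % 19 = 9 ∨ p ^ a % 19 = 10 →
      (∑ k ∈ Finset.range (p ^ a),
        (catalan2 k : ZMod p) * ((19 : ZMod p) ^ k)⁻¹) = 3) := by
  haveI : Fact p.Prime := ⟨hp⟩
  have hS := s7_sum_eq p hp19 a ha
  have hW := s7_master p hp19 a ha
  refine ⟨fun h => ?_, fun h => ?_, fun h => ?_⟩ <;>
  · rw [hS, hW]
    rcases h with h|h|h|h|h|h <;> rw [h] <;> norm_num [s7val]
end
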